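/- arXiv:1307.0978 — 4 statements merged into one kernel-verified Lean document; each statement's English description precedes it below -/
import Mathlib

section
/- Let f ∈ 𝓒 and θ ∈ ℝ, and let μ_{f,θ} be the unique maximizer over 𝓜 of μ ↦ θ μ[f] − D(μ||u). Then there exist integrable functions a, b ∈ L¹[0,1] such that μ_{f,θ} has density g_{f,θ}(x,y) := exp(θ f(x,y) + a(x) + b(y)) with respect to Lebesgue measure on [0,1]²; this density is uniquely determined almost everywhere; and Z(f,θ) := sup_{μ ∈ 𝓜} { θ μ[f] − D(μ||u) } = −∫₀¹ (a(x) + b(x)) dx. -/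
open MeasureTheory Filter Topology
open scoped ENNReal

noncomputable section

/-- The unit square `[0,1]²` in `ℝ × ℝ`. -/
def unitSq : Set (ℝ × ℝ) := Set.Icc 0 1 ×ˢ Set.Icc 0 1

/-- Lebesgue measure restricted to `[0,1]`. -/
def unif01 : Measure ℝ := volume.restrict (Set.Icc 0 1)

/-- Lebesgue (uniform) measure on the unit square. -/
def usq : Measure (ℝ × ℝ) := unif01.prod unif01

/-- `𝓜`: Borel probability measures on `[0,1]²` with both marginals Lebesgue on `[0,1]`. -/
def MM : Set (Measure (ℝ × ℝ)) :=
  {μ | IsProbabilityMeasure μ ∧ μ.map Prod.fst = unif01 ∧ μ.map Prod.snd = unif01}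

/-- The class `𝓒` of continuous functions on the unit square, not identically zero,
with all row and column integrals vanishing. -/
def memC (f : ℝ × ℝ → ℝ) : Prop :=
  ContinuousOn f unitSq ∧ (∃ p ∈ unitSq, f p ≠ 0) ∧
    (∀ x ∈ Set.Icc (0 : ℝ) 1, (∫ z in (0 : ℝ)..1, f (x, z)) = 0) ∧
    (∀ y ∈ Set.Icc (0 : ℝ) 1, (∫ z in (0 : ℝ)..1, f (z, y)) = 0)

open scoped Classical in
/-- Kullback–Leibler divergence `D(μ‖ν)`, equal to `∫ log(dμ/dν) dμ` when `μ ≪ ν`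
(and this integral exists), and `+∞` otherwise. -/
def KL (μ ν : Measure (ℝ × ℝ)) : ℝ≥0∞ :=
  if μ ≪ ν ∧ Integrable (fun x => Real.log ((μ.rnDeriv ν x).toReal)) μ then
    ENNReal.ofReal (∫ x, Real.log ((μ.rnDeriv ν x).toReal) ∂μ)
  else ⊤

/-- The objective `θ μ[f] − D(μ‖u)`, as an extended real. -/
def objE (f : ℝ × ℝ → ℝ) (θ : ℝ) (μ : Measure (ℝ × ℝ)) : EReal :=
  ((θ * ∫ p, f p ∂μ : ℝ) : EReal) - (KL μ usq : EReal)

/-- `∑_{i=1}^n f(i/n, π(i)/n)`. -/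
def permStat (f : ℝ × ℝ → ℝ) (n : ℕ) (π : Equiv.Perm (Fin n)) : ℝ :=
  ∑ i : Fin n, f ((i.1 + 1 : ℝ) / n, ((π i).1 + 1 : ℝ) / n)

/-- The log normalizing constant `Z_n(f,θ)`. -/
def Zn (f : ℝ × ℝ → ℝ) (θ : ℝ) (n : ℕ) : ℝ :=
  Real.log (∑ π : Equiv.Perm (Fin n), Real.exp (θ * permStat f n π))

open scoped Classical in
/-- The probability that a sample from `Q_{n,f,θ}` satisfies `p`. -/
def Qprob (f : ℝ × ℝ → ℝ) (θ : ℝ) (n : ℕ) (p : Equiv.Perm (Fin n) → Prop) : ℝ :=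
  ∑ π : Equiv.Perm (Fin n), if p π then Real.exp (θ * permStat f n π - Zn f θ n) else 0

namespace SP

def clamp (x : ℝ) : ℝ := max 0 (min 1 x)

lemma clamp_mem (x : ℝ) : clamp x ∈ Set.Icc (0:ℝ) 1 :=
  ⟨le_max_left _ _, max_le zero_le_one (min_le_left _ _)⟩

lemma continuous_clamp : Continuous clamp :=
  continuous_const.max (continuous_const.min continuous_id)

lemma clamp_of_mem {x : ℝ} (h : x ∈ Set.Icc (0:ℝ) 1) : clamp x = x := by
  rw [clamp, min_eq_right h.2, max_eq_right h.1]

instance : IsProbabilityMeasure unif01 := ⟨by simp [unif01, Real.volume_Icc]⟩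
instance : IsProbabilityMeasure usq := by unfold usq; infer_instance

lemma integrable_unif01 {g : ℝ → ℝ} (hg : Continuous g) : Integrable g unif01 :=
  hg.continuousOn.integrableOn_Icc

/-- `K ψ b x = ∫ e^{ψ(x,y)+b(y)} dy`. -/
def Kf (ψ : ℝ × ℝ → ℝ) (b : ℝ → ℝ) (x : ℝ) : ℝ :=
  ∫ y, Real.exp (ψ (x, y) + b y) ∂unif01

variable {ψ : ℝ × ℝ → ℝ} {M : ℝ} {b : ℝ → ℝ} {Cb : ℝ}

lemma Kf_integrand_integrable (hψ : Continuous ψ) (hb : Continuous b) (x : ℝ) :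
    Integrable (fun y => Real.exp (ψ (x, y) + b y)) unif01 :=
  integrable_unif01 ((hψ.comp (continuous_const.prodMk continuous_id)).add hb).rexp

lemma Kf_le (hψ : Continuous ψ) (hM : ∀ p, |ψ p| ≤ M) (hb : Continuous b)
    (hbB : ∀ y, |b y| ≤ Cb) (x : ℝ) : Kf ψ b x ≤ Real.exp (M + Cb) := by
  have h := integral_mono (Kf_integrand_integrable hψ hb x)
    (integrable_const (Real.exp (M + Cb)))
    (fun y => Real.exp_le_exp.2 (add_le_add (le_of_abs_le (hM _)) (le_of_abs_le (hbB _))))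
  simpa [Kf] using h

lemma Kf_ge (hψ : Continuous ψ) (hM : ∀ p, |ψ p| ≤ M) (hb : Continuous b)
    (hbB : ∀ y, |b y| ≤ Cb) (x : ℝ) : Real.exp (-(M + Cb)) ≤ Kf ψ b x := by
  have h := integral_mono (integrable_const (Real.exp (-(M + Cb))))
    (Kf_integrand_integrable hψ hb x)
    (fun y => Real.exp_le_exp.2 (by
      have h1 := abs_le.1 (hM (x, y)); have h2 := abs_le.1 (hbB y); linarith [h1.1, h2.1]))
  simpa [Kf] using h

lemma Kf_pos (hψ : Continuous ψ) (hM : ∀ p, |ψ p| ≤ M) (hb : Continuous b)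
    (hbB : ∀ y, |b y| ≤ Cb) (x : ℝ) : 0 < Kf ψ b x :=
  lt_of_lt_of_le (Real.exp_pos _) (Kf_ge hψ hM hb hbB x)

lemma Kf_cont (hψ : Continuous ψ) (hM : ∀ p, |ψ p| ≤ M) (hb : Continuous b)
    (hbB : ∀ y, |b y| ≤ Cb) : Continuous (Kf ψ b) := by
  apply MeasureTheory.continuous_of_dominated
    (bound := fun _ => Real.exp (M + Cb))
  · exact fun x => (Kf_integrand_integrable hψ hb x).aestronglyMeasurable
  · intro x
    filter_upwards with y
    rw [Real.norm_eq_abs, abs_of_pos (Real.exp_pos _)]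
    exact Real.exp_le_exp.2 (add_le_add (le_of_abs_le (hM _)) (le_of_abs_le (hbB _)))
  · exact integrable_const _
  · filter_upwards with y
    exact ((hψ.comp (continuous_id.prodMk continuous_const)).add continuous_const).rexp

/-- `Afun ψ b = -log K`. -/
def Afun (ψ : ℝ × ℝ → ℝ) (b : ℝ → ℝ) (x : ℝ) : ℝ := -Real.log (Kf ψ b x)

lemma Afun_cont (hψ : Continuous ψ) (hM : ∀ p, |ψ p| ≤ M) (hb : Continuous b)
    (hbB : ∀ y, |b y| ≤ Cb) : Continuous (Afun ψ b) :=
  ((Kf_cont hψ hM hb hbB).log (fun x => (Kf_pos hψ hM hb hbB x).ne')).neg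

lemma Afun_bound (hψ : Continuous ψ) (hM : ∀ p, |ψ p| ≤ M) (hb : Continuous b)
    (hbB : ∀ y, |b y| ≤ Cb) (x : ℝ) : |Afun ψ b x| ≤ M + Cb := by
  rw [Afun, abs_neg, abs_le]
  constructor
  · have := Real.log_le_log (Real.exp_pos _) (Kf_ge hψ hM hb hbB x)
    rw [Real.log_exp] at this; linarith
  · have := Real.log_le_log (Kf_pos hψ hM hb hbB x) (Kf_le hψ hM hb hbB x)
    rw [Real.log_exp] at this; linarith

lemma Afun_mul (hψ : Continuous ψ) (hM : ∀ p, |ψ p| ≤ M) (hb : Continuous b)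
    (hbB : ∀ y, |b y| ≤ Cb) (x : ℝ) :
    Real.exp (Afun ψ b x) * Kf ψ b x = 1 := by
  rw [Afun, Real.exp_neg, Real.exp_log (Kf_pos hψ hM hb hbB x)]
  exact inv_mul_cancel₀ (Kf_pos hψ hM hb hbB x).ne'

lemma Afun_norm (hψ : Continuous ψ) (hM : ∀ p, |ψ p| ≤ M) (hb : Continuous b)
    (hbB : ∀ y, |b y| ≤ Cb) (x : ℝ) :
    ∫ y, Real.exp (ψ (x, y) + Afun ψ b x + b y) ∂unif01 = 1 := by
  have : ∀ y, Real.exp (ψ (x, y) + Afun ψ b x + b y)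
      = Real.exp (Afun ψ b x) * Real.exp (ψ (x, y) + b y) := by
    intro y; rw [← Real.exp_add]; ring_nf
  rw [integral_congr_ae (Filter.Eventually.of_forall this), integral_const_mul]
  exact Afun_mul hψ hM hb hbB x

end SP

namespace SP2
open SP

lemma exp_slot_ge {L t : ℝ} (hL : 0 < L) : 1 + Real.log L ≤ Real.exp t * L - t := by
  have h := Real.add_one_le_exp (t + Real.log L)
  rw [Real.exp_add, Real.exp_log hL] at h; linarith

lemma exp_slot_eq {L t : ℝ} (hL : 0 < L) (h : Real.exp t * L - t = 1 + Real.log L) :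
    t = -Real.log L := by
  by_contra hne
  have h2 : t + Real.log L ≠ 0 := fun hc => hne (by linarith)
  have h3 := Real.add_one_lt_exp h2
  rw [Real.exp_add, Real.exp_log hL] at h3; linarith

lemma eq_one_of_sub_log {t : ℝ} (ht : 0 < t) (h : t - 1 - Real.log t = 0) : t = 1 := by
  by_contra hne; have := Real.log_lt_sub_one_of_pos ht hne; linarith

lemma ae_mem_Icc : ∀ᵐ y ∂unif01, y ∈ Set.Icc (0:ℝ) 1 := by
  rw [unif01]; exact ae_restrict_mem measurableSet_Icc

lemma integrable_of_bounded {α : Type*} [MeasurableSpace α] {μ : Measure α} [IsFiniteMeasure μ]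
    {g : α → ℝ} {C : ℝ} (hm : AEStronglyMeasurable g μ) (hC : ∀ x, |g x| ≤ C) :
    Integrable g μ :=
  (integrable_const C).mono' hm (Filter.Eventually.of_forall
    (fun x => by rw [Real.norm_eq_abs]; exact hC x))

/-- modulus sup over the second slot. -/
def modSup (ψ : ℝ × ℝ → ℝ) (t t' : ℝ) : ℝ :=
  ⨆ s : Set.Icc (0:ℝ) 1, |ψ (t, s.1) - ψ (t', s.1)|

instance : Nonempty (Set.Icc (0:ℝ) 1) := ⟨⟨0, by norm_num⟩⟩

variable {ψ : ℝ × ℝ → ℝ} {M : ℝ} {b : ℝ → ℝ} {Cb : ℝ}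

lemma modSup_bddAbove (hM : ∀ p, |ψ p| ≤ M) (t t' : ℝ) :
    BddAbove (Set.range fun s : Set.Icc (0:ℝ) 1 => |ψ (t, s.1) - ψ (t', s.1)|) := by
  refine ⟨2*M, ?_⟩; rintro v ⟨s, rfl⟩
  have h := abs_add_le (ψ (t, s.1)) (-ψ (t', s.1))
  rw [abs_neg] at h
  have := hM (t, s.1); have := hM (t', s.1)
  simp only [← sub_eq_add_neg] at h; linarith

lemma le_modSup (hM : ∀ p, |ψ p| ≤ M) {t t' s : ℝ} (hs : s ∈ Set.Icc (0:ℝ) 1) :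
    |ψ (t, s) - ψ (t', s)| ≤ modSup ψ t t' :=
  le_ciSup (modSup_bddAbove hM t t') (⟨s, hs⟩ : Set.Icc (0:ℝ) 1)

lemma modSup_le (hM : ∀ p, |ψ p| ≤ M) (t t' : ℝ) : modSup ψ t t' ≤ 2*M := by
  refine ciSup_le fun s => ?_
  have h := abs_add_le (ψ (t, s.1)) (-ψ (t', s.1))
  rw [abs_neg] at h
  have := hM (t, s.1); have := hM (t', s.1)
  simp only [← sub_eq_add_neg] at h; linarith

lemma modSup_nonneg (hM : ∀ p, |ψ p| ≤ M) (t t' : ℝ) : 0 ≤ modSup ψ t t' :=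
  le_trans (abs_nonneg _) (le_modSup hM (by norm_num : (0:ℝ) ∈ Set.Icc (0:ℝ) 1))

lemma modSup_comm : modSup ψ t t' = modSup ψ t' t := by
  unfold modSup; congr 1; funext s; rw [abs_sub_comm]

lemma Kf_le_mul (hψ : Continuous ψ) (hM : ∀ p, |ψ p| ≤ M) (hb : Continuous b) (t t' : ℝ) :
    Kf ψ b t ≤ Real.exp (modSup ψ t t') * Kf ψ b t' := by
  rw [Kf, Kf, ← integral_const_mul]
  apply integral_mono_ae (Kf_integrand_integrable hψ hb t)
    ((Kf_integrand_integrable hψ hb t').const_mul _)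
  filter_upwards [ae_mem_Icc] with y hy
  rw [← Real.exp_add]
  apply Real.exp_le_exp.2
  have := abs_le.1 (le_modSup hM (t := t) (t' := t') hy)
  linarith [this.1, this.2]

lemma Afun_mod (hψ : Continuous ψ) (hM : ∀ p, |ψ p| ≤ M) (hb : Continuous b)
    (hbB : ∀ y, |b y| ≤ Cb) (t t' : ℝ) :
    |Afun ψ b t - Afun ψ b t'| ≤ modSup ψ t t' := by
  have key : ∀ u u' : ℝ, Real.log (Kf ψ b u) ≤ modSup ψ u u' + Real.log (Kf ψ b u') := by
    intro u u'
    have h := Real.log_le_log (Kf_pos hψ hM hb hbB u) (Kf_le_mul hψ hM hb u u')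
    rwa [Real.log_mul (Real.exp_pos _).ne' (Kf_pos hψ hM hb hbB u').ne', Real.log_exp] at h
  have h1 := key t t'
  have h2 := key t' t
  rw [modSup_comm] at h2
  rw [Afun, Afun, abs_le]
  constructor <;> linarith

lemma integrable_exp_usq {a : ℝ → ℝ} {Ca : ℝ} (hψ : Continuous ψ) (hM : ∀ p, |ψ p| ≤ M)
    (ha : Continuous a) (haB : ∀ x, |a x| ≤ Ca) (hb : Continuous b) (hbB : ∀ y, |b y| ≤ Cb) :
    Integrable (fun p : ℝ × ℝ => Real.exp (ψ p + a p.1 + b p.2)) usq := by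
  refine integrable_of_bounded (C := Real.exp (M + Ca + Cb)) ?_ ?_
  · exact (((hψ.add (ha.comp continuous_fst)).add (hb.comp continuous_snd)).rexp).aestronglyMeasurable
  intro p
  rw [abs_of_pos (Real.exp_pos _)]
  apply Real.exp_le_exp.2
  have := abs_le.1 (hM p); have := abs_le.1 (haB p.1); have := abs_le.1 (hbB p.2)
  linarith [(abs_le.1 (hM p)).2, (abs_le.1 (haB p.1)).2, (abs_le.1 (hbB p.2)).2]

lemma fubini_exp {a : ℝ → ℝ} {Ca : ℝ} (hψ : Continuous ψ) (hM : ∀ p, |ψ p| ≤ M)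
    (ha : Continuous a) (haB : ∀ x, |a x| ≤ Ca) (hb : Continuous b) (hbB : ∀ y, |b y| ≤ Cb) :
    ∫ x, Real.exp (a x) * Kf ψ b x ∂unif01
      = ∫ y, Real.exp (b y) * Kf (ψ ∘ Prod.swap) a y ∂unif01 := by
  have hint := integrable_exp_usq hψ hM ha haB hb hbB
  have h1 := MeasureTheory.integral_prod _ hint
  have h2 := MeasureTheory.integral_prod_symm _ hint
  have e1 : ∀ x, ∫ y, Real.exp (ψ (x, y) + a x + b y) ∂unif01
      = Real.exp (a x) * Kf ψ b x := by
    intro x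
    rw [Kf, ← integral_const_mul]
    congr 1; funext y; rw [← Real.exp_add]; ring_nf
  have e2 : ∀ y, ∫ x, Real.exp (ψ (x, y) + a x + b y) ∂unif01
      = Real.exp (b y) * Kf (ψ ∘ Prod.swap) a y := by
    intro y
    rw [Kf, ← integral_const_mul]
    congr 1; funext x; rw [← Real.exp_add]; simp only [Function.comp, Prod.swap]; ring_nf
  calc ∫ x, Real.exp (a x) * Kf ψ b x ∂unif01
      = ∫ p : ℝ × ℝ, Real.exp (ψ p + a p.1 + b p.2) ∂(unif01.prod unif01) := by
        rw [h1]; congr 1; funext x; exact (e1 x).symm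
    _ = ∫ y, Real.exp (b y) * Kf (ψ ∘ Prod.swap) a y ∂unif01 := by
        rw [h2]; congr 1; funext y; exact e2 y

end SP2

namespace SP3
open SP SP2

variable {ψ : ℝ × ℝ → ℝ} {M : ℝ} {a b c : ℝ → ℝ} {Ca Cb Cc : ℝ}

/-- first-slicing functional `F(a,b) = ∬ e^{ψ+a⊕b} - ∫a - ∫b`. -/
def Gfun1 (ψ : ℝ × ℝ → ℝ) (a b : ℝ → ℝ) : ℝ :=
  (∫ x, Real.exp (a x) * Kf ψ b x ∂unif01) - (∫ x, a x ∂unif01) - ∫ y, b y ∂unif01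

def Gfun2 (ψ : ℝ × ℝ → ℝ) (a b : ℝ → ℝ) : ℝ :=
  (∫ y, Real.exp (b y) * Kf (ψ ∘ Prod.swap) a y ∂unif01)
    - (∫ x, a x ∂unif01) - ∫ y, b y ∂unif01

lemma Gfun1_eq_Gfun2 (hψ : Continuous ψ) (hM : ∀ p, |ψ p| ≤ M)
    (ha : Continuous a) (haB : ∀ x, |a x| ≤ Ca) (hb : Continuous b) (hbB : ∀ y, |b y| ≤ Cb) :
    Gfun1 ψ a b = Gfun2 ψ a b := by
  rw [Gfun1, Gfun2, fubini_exp hψ hM ha haB hb hbB]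

lemma Gfun2_eq_Gfun1_swap : Gfun2 ψ a b = Gfun1 (ψ ∘ Prod.swap) b a := by
  rw [Gfun1, Gfun2]; ring

lemma integrable_exp_mul_Kf (hψ : Continuous ψ) (hM : ∀ p, |ψ p| ≤ M)
    (hc : Continuous c) (hcB : ∀ x, |c x| ≤ Cc) (hb : Continuous b) (hbB : ∀ y, |b y| ≤ Cb) :
    Integrable (fun x => Real.exp (c x) * Kf ψ b x) unif01 := by
  refine integrable_of_bounded (C := Real.exp Cc * Real.exp (M + Cb)) ?_ ?_
  · exact (hc.rexp.mul (Kf_cont hψ hM hb hbB)).aestronglyMeasurable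
  · intro x
    rw [abs_mul, abs_of_pos (Real.exp_pos _), abs_of_pos (Kf_pos hψ hM hb hbB x)]
    exact mul_le_mul (Real.exp_le_exp.2 (le_of_abs_le (hcB x))) (Kf_le hψ hM hb hbB x)
      (Kf_pos hψ hM hb hbB x).le (Real.exp_pos _).le

lemma integrable_log_Kf (hψ : Continuous ψ) (hM : ∀ p, |ψ p| ≤ M)
    (hb : Continuous b) (hbB : ∀ y, |b y| ≤ Cb) :
    Integrable (fun x => Real.log (Kf ψ b x)) unif01 := by
  refine integrable_of_bounded (C := M + Cb) ?_ ?_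
  · exact ((Kf_cont hψ hM hb hbB).log
      (fun x => (Kf_pos hψ hM hb hbB x).ne')).aestronglyMeasurable
  · intro x
    have := Afun_bound hψ hM hb hbB x
    rwa [Afun, abs_neg] at this

/-- `Gfun1 a b - Gfun1 (Afun b) b = ∫ d` with `d ≥ 0`. -/
lemma slot1 (hψ : Continuous ψ) (hM : ∀ p, |ψ p| ≤ M)
    (hc : Continuous c) (hcB : ∀ x, |c x| ≤ Cc) (hb : Continuous b) (hbB : ∀ y, |b y| ≤ Cb) :
    Gfun1 ψ (Afun ψ b) b ≤ Gfun1 ψ c b ∧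
      (Gfun1 ψ c b = Gfun1 ψ (Afun ψ b) b → c =ᵐ[unif01] Afun ψ b) := by
  set K := Kf ψ b with hK
  have hKpos : ∀ x, 0 < K x := Kf_pos hψ hM hb hbB
  set d : ℝ → ℝ := fun x => Real.exp (c x) * K x - c x - (1 + Real.log (K x)) with hd
  have hdnn : ∀ x, 0 ≤ d x := fun x => by
    have := exp_slot_ge (t := c x) (hKpos x); simp only [hd]; linarith
  have hdint : Integrable d unif01 := by
    apply Integrable.sub (Integrable.sub
      (integrable_exp_mul_Kf hψ hM hc hcB hb hbB) (integrable_of_bounded hc.aestronglyMeasurable hcB))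
    exact (integrable_const 1).add (integrable_log_Kf hψ hM hb hbB)
  have hGA : Gfun1 ψ (Afun ψ b) b
      = 1 + (∫ x, Real.log (K x) ∂unif01) - ∫ y, b y ∂unif01 := by
    rw [Gfun1]
    have e1 : ∀ x, Real.exp (Afun ψ b x) * Kf ψ b x = 1 := Afun_mul hψ hM hb hbB
    rw [integral_congr_ae (Filter.Eventually.of_forall e1)]
    have e2 : ∫ x, Afun ψ b x ∂unif01 = -∫ x, Real.log (K x) ∂unif01 := by
      rw [← integral_neg]; congr 1
    rw [e2]
    simp [measure_univ]
  have hInt : ∫ x, d x ∂unif01 = Gfun1 ψ c b - Gfun1 ψ (Afun ψ b) b := by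
    calc ∫ x, d x ∂unif01
        = (∫ x, (Real.exp (c x) * K x - c x) ∂unif01)
            - ∫ x, (1 + Real.log (K x)) ∂unif01 :=
          integral_sub ((integrable_exp_mul_Kf hψ hM hc hcB hb hbB).sub
            (integrable_of_bounded hc.aestronglyMeasurable hcB))
            ((integrable_const 1).add (integrable_log_Kf hψ hM hb hbB))
      _ = ((∫ x, Real.exp (c x) * K x ∂unif01) - ∫ x, c x ∂unif01)
            - (1 + ∫ x, Real.log (K x) ∂unif01) := by
          rw [integral_sub (integrable_exp_mul_Kf hψ hM hc hcB hb hbB)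
            (integrable_of_bounded hc.aestronglyMeasurable hcB),
            integral_add (integrable_const 1) (integrable_log_Kf hψ hM hb hbB)]
          simp [measure_univ]
          rfl
      _ = Gfun1 ψ c b - Gfun1 ψ (Afun ψ b) b := by rw [hGA, Gfun1]; ring
  constructor
  · have h0 : 0 ≤ ∫ x, d x ∂unif01 := integral_nonneg hdnn
    linarith [hInt ▸ h0]
  · intro heq
    have hz : ∫ x, d x ∂unif01 = 0 := by rw [hInt, heq]; ring
    have hae : d =ᵐ[unif01] 0 :=
      (integral_eq_zero_iff_of_nonneg hdnn hdint).1 hz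
    filter_upwards [hae] with x hx
    have : Real.exp (c x) * K x - c x = 1 + Real.log (K x) := by
      simp only [hd, Pi.zero_apply] at hx; linarith
    rw [Afun]
    exact exp_slot_eq (hKpos x) this

/-- the reduced functional. -/
def Phi (ψ : ℝ × ℝ → ℝ) (b : ℝ → ℝ) : ℝ :=
  (∫ x, Real.log (Kf ψ b x) ∂unif01) - ∫ y, b y ∂unif01

lemma Gfun1_Afun_eq_Phi (hψ : Continuous ψ) (hM : ∀ p, |ψ p| ≤ M)
    (hb : Continuous b) (hbB : ∀ y, |b y| ≤ Cb) :
    Gfun1 ψ (Afun ψ b) b = 1 + Phi ψ b := by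
  rw [Phi, Gfun1]
  have e1 : ∀ x, Real.exp (Afun ψ b x) * Kf ψ b x = 1 := Afun_mul hψ hM hb hbB
  rw [integral_congr_ae (Filter.Eventually.of_forall e1)]
  have e2 : ∫ x, Afun ψ b x ∂unif01 = -∫ x, Real.log (Kf ψ b x) ∂unif01 := by
    rw [← integral_neg]; congr 1
  rw [e2]
  simp [measure_univ]
  ring

lemma Kf_congr {b' : ℝ → ℝ} (h : b =ᵐ[unif01] b') : Kf ψ b = Kf ψ b' := by
  funext x
  exact integral_congr_ae (h.mono fun y hy => by
    show Real.exp (ψ (x, y) + b y) = Real.exp (ψ (x, y) + b' y); rw [hy])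

lemma Phi_congr {b' : ℝ → ℝ} (h : b =ᵐ[unif01] b') : Phi ψ b = Phi ψ b' := by
  rw [Phi, Phi, Kf_congr h, integral_congr_ae h]

lemma Phi_translate (hψ : Continuous ψ) (hM : ∀ p, |ψ p| ≤ M)
    (hb : Continuous b) (hbB : ∀ y, |b y| ≤ Cb) (r : ℝ) :
    Phi ψ (fun y => b y - r) = Phi ψ b := by
  have hK : ∀ x, Kf ψ (fun y => b y - r) x = Real.exp (-r) * Kf ψ b x := by
    intro x
    rw [Kf, Kf, ← integral_const_mul]
    congr 1; funext y; rw [← Real.exp_add]; ring_nf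
  rw [Phi, Phi]
  have e1 : ∫ x, Real.log (Kf ψ (fun y => b y - r) x) ∂unif01
      = ∫ x, (-r + Real.log (Kf ψ b x)) ∂unif01 := by
    congr 1; funext x
    rw [hK x, Real.log_mul (Real.exp_pos _).ne' (Kf_pos hψ hM hb hbB x).ne', Real.log_exp]
  rw [e1, integral_add (integrable_const _) (integrable_log_Kf hψ hM hb hbB),
    integral_sub (integrable_of_bounded hb.aestronglyMeasurable hbB) (integrable_const _)]
  simp [measure_univ]
  ring

end SP3

namespace SP4
open SP SP2 SP3 BoundedContinuousFunction

variable {ψ : ℝ × ℝ → ℝ} {M : ℝ} {b b' : ℝ → ℝ} {Cb Cb' r : ℝ}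

lemma log_Kf_lip (hψ : Continuous ψ) (hM : ∀ p, |ψ p| ≤ M)
    (hb : Continuous b) (hbB : ∀ y, |b y| ≤ Cb) (hb' : Continuous b') (hb'B : ∀ y, |b' y| ≤ Cb')
    (hr : ∀ y, |b y - b' y| ≤ r) (x : ℝ) :
    |Real.log (Kf ψ b x) - Real.log (Kf ψ b' x)| ≤ r := by
  have key : ∀ (c c' : ℝ → ℝ), Continuous c → Continuous c' → (∀ y, |c y - c' y| ≤ r) →
      Kf ψ c x ≤ Real.exp r * Kf ψ c' x := by
    intro c c' hc hc' h
    rw [Kf, Kf, ← integral_const_mul]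
    apply integral_mono (Kf_integrand_integrable hψ hc x)
      ((Kf_integrand_integrable hψ hc' x).const_mul _)
    intro y
    show Real.exp (ψ (x, y) + c y) ≤ Real.exp r * Real.exp (ψ (x, y) + c' y)
    rw [← Real.exp_add]
    exact Real.exp_le_exp.2 (by have := abs_le.1 (h y); linarith [this.2])
  have h1 := Real.log_le_log (Kf_pos hψ hM hb hbB x) (key b b' hb hb' hr)
  have h2 := Real.log_le_log (Kf_pos hψ hM hb' hb'B x)
    (key b' b hb' hb (fun y => by rw [abs_sub_comm]; exact hr y))
  rw [Real.log_mul (Real.exp_pos _).ne' (Kf_pos hψ hM hb' hb'B x).ne', Real.log_exp] at h1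
  rw [Real.log_mul (Real.exp_pos _).ne' (Kf_pos hψ hM hb hbB x).ne', Real.log_exp] at h2
  rw [abs_le]; constructor <;> linarith

abbrev X01 := Set.Icc (0:ℝ) 1

noncomputable instance : CompactSpace X01 := isCompact_iff_compactSpace.mp isCompact_Icc

/-- clamped version of a bounded continuous function on `[0,1]`. -/
def bR (β : X01 →ᵇ ℝ) : ℝ → ℝ := fun y => β ⟨clamp y, clamp_mem y⟩

lemma bR_cont (β : X01 →ᵇ ℝ) : Continuous (bR β) :=
  β.continuous.comp (continuous_clamp.subtype_mk _)

lemma bR_bound (β : X01 →ᵇ ℝ) (y : ℝ) : |bR β y| ≤ ‖β‖ := by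
  rw [← Real.norm_eq_abs]; exact norm_coe_le_norm β _

lemma bR_dist (β γ : X01 →ᵇ ℝ) (y : ℝ) : |bR β y - bR γ y| ≤ dist β γ := by
  rw [← Real.dist_eq]; exact dist_coe_le_dist _

theorem exists_potentials (hψ : Continuous ψ) (hM : ∀ p, |ψ p| ≤ M) :
    ∃ a b : ℝ → ℝ, Continuous a ∧ Continuous b ∧
      (∃ Ca, ∀ x, |a x| ≤ Ca) ∧ (∃ Cb, ∀ y, |b y| ≤ Cb) ∧
      (∀ x, ∫ y, Real.exp (ψ (x, y) + a x + b y) ∂unif01 = 1) ∧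
      (∀ᵐ y ∂unif01, ∫ x, Real.exp (ψ (x, y) + a x + b y) ∂unif01 = 1) := by
  have hM0 : 0 ≤ M := le_trans (abs_nonneg _) (hM (0, 0))
  set φs : ℝ × ℝ → ℝ := ψ ∘ Prod.swap with hφs_def
  have hφs : Continuous φs := hψ.comp continuous_swap
  have hMs : ∀ p, |φs p| ≤ M := fun p => hM _
  set y0 : X01 := ⟨0, by norm_num⟩ with hy0
  set Aset : Set (X01 →ᵇ ℝ) :=
    {β | β y0 = 0 ∧ (∀ t, β t ∈ Set.Icc (-(2*M)) (2*M)) ∧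
      ∀ t t' : X01, |β t - β t'| ≤ modSup φs t.1 t'.1} with hAset
  -- closedness
  have hclosed : IsClosed Aset := by
    rw [hAset]
    simp only [Set.setOf_and]
    apply IsClosed.inter (isClosed_eq (continuous_eval_const (x := y0)) continuous_const)
    apply IsClosed.inter
    · rw [Set.setOf_forall]
      exact isClosed_iInter fun t => isClosed_Icc.preimage (continuous_eval_const (x := t))
    · rw [Set.setOf_forall]
      refine isClosed_iInter fun t => ?_
      rw [Set.setOf_forall]
      refine isClosed_iInter fun t' => ?_
      exact isClosed_le (((continuous_eval_const (x := t)).sub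
        (continuous_eval_const (x := t'))).abs) continuous_const
  -- equicontinuity
  have hequi : Equicontinuous ((↑) : Aset → X01 → ℝ) := by
    intro x
    rw [Metric.equicontinuousAt_iff_right]
    intro ε hε
    have hg : Continuous (fun q : X01 × X01 => φs (q.1.1, q.2.1)) :=
      hφs.comp ((continuous_subtype_val.comp continuous_fst).prodMk
        (continuous_subtype_val.comp continuous_snd))
    have hu := CompactSpace.uniformContinuous_of_continuous hg
    rw [Metric.uniformContinuous_iff] at hu
    obtain ⟨δ, hδ, hδ'⟩ := hu (ε/2) (by linarith)
    filter_upwards [Metric.ball_mem_nhds x hδ] with y hy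
    rintro ⟨β, hβ⟩
    have hmod := hβ.2.2 y x
    have hsup : modSup φs y.1 x.1 ≤ ε/2 := by
      apply ciSup_le
      intro s
      have : dist ((y, s) : X01 × X01) (x, s) < δ := by
        rw [Prod.dist_eq]
        simp only [dist_self]
        rw [max_eq_left dist_nonneg]
        exact Metric.mem_ball.1 hy
      have := hδ' this
      rw [Real.dist_eq] at this
      exact this.le
    calc dist (β x) (β y) = |β y - β x| := by rw [dist_comm, Real.dist_eq]
      _ ≤ modSup φs y.1 x.1 := hmod
      _ ≤ ε/2 := hsup
      _ < ε := by linarith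
  -- compactness
  have hcompact : IsCompact Aset := by
    apply arzela_ascoli₂ (Set.Icc (-(2*M)) (2*M)) isCompact_Icc Aset hclosed
      (fun β t hβ => hβ.2.1 t) hequi
  have hne : Aset.Nonempty := by
    refine ⟨0, ?_, fun t => ?_, fun t t' => ?_⟩
    · rfl
    · simp; linarith
    · simpa using modSup_nonneg hMs t.1 t'.1
  -- continuity of the functional
  have hlip : LipschitzWith 2 (fun β => Phi ψ (bR β)) := by
    apply LipschitzWith.of_dist_le_mul
    intro β γ
    rw [Real.dist_eq]
    have hKlip : ∀ x, |Real.log (Kf ψ (bR β) x) - Real.log (Kf ψ (bR γ) x)| ≤ dist β γ :=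
      log_Kf_lip hψ hM (bR_cont β) (bR_bound β) (bR_cont γ) (bR_bound γ) (bR_dist β γ)
    have h1 : |(∫ x, Real.log (Kf ψ (bR β) x) ∂unif01)
        - ∫ x, Real.log (Kf ψ (bR γ) x) ∂unif01| ≤ dist β γ := by
      rw [← integral_sub (integrable_log_Kf hψ hM (bR_cont β) (bR_bound β))
        (integrable_log_Kf hψ hM (bR_cont γ) (bR_bound γ))]
      have := norm_integral_le_of_norm_le_const (μ := unif01)
        (f := fun x => Real.log (Kf ψ (bR β) x) - Real.log (Kf ψ (bR γ) x))
        (C := dist β γ) (Filter.Eventually.of_forall fun x => by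
          rw [Real.norm_eq_abs]; exact hKlip x)
      simpa [measure_univ, Real.norm_eq_abs] using this
    have h2 : |(∫ y, bR β y ∂unif01) - ∫ y, bR γ y ∂unif01| ≤ dist β γ := by
      rw [← integral_sub (integrable_of_bounded (bR_cont β).aestronglyMeasurable (bR_bound β))
        (integrable_of_bounded (bR_cont γ).aestronglyMeasurable (bR_bound γ))]
      have := norm_integral_le_of_norm_le_const (μ := unif01)
        (f := fun y => bR β y - bR γ y)
        (C := dist β γ) (Filter.Eventually.of_forall fun y => by
          rw [Real.norm_eq_abs]; exact bR_dist β γ y)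
      simpa [measure_univ, Real.norm_eq_abs] using this
    rw [Phi, Phi]
    push_cast
    calc |(∫ x, Real.log (Kf ψ (bR β) x) ∂unif01) - (∫ y, bR β y ∂unif01)
        - ((∫ x, Real.log (Kf ψ (bR γ) x) ∂unif01) - ∫ y, bR γ y ∂unif01)|
        ≤ |(∫ x, Real.log (Kf ψ (bR β) x) ∂unif01)
            - ∫ x, Real.log (Kf ψ (bR γ) x) ∂unif01|
          + |(∫ y, bR β y ∂unif01) - ∫ y, bR γ y ∂unif01| := by
          rw [show (∫ x, Real.log (Kf ψ (bR β) x) ∂unif01) - (∫ y, bR β y ∂unif01)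
            - ((∫ x, Real.log (Kf ψ (bR γ) x) ∂unif01) - ∫ y, bR γ y ∂unif01)
            = ((∫ x, Real.log (Kf ψ (bR β) x) ∂unif01)
                - ∫ x, Real.log (Kf ψ (bR γ) x) ∂unif01)
              - ((∫ y, bR β y ∂unif01) - ∫ y, bR γ y ∂unif01) from by ring]
          rw [sub_eq_add_neg, ← abs_neg ((∫ y, bR β y ∂unif01) - ∫ y, bR γ y ∂unif01)]
          exact abs_add_le _ _
      _ ≤ dist β γ + dist β γ := add_le_add h1 h2
      _ = 2 * dist β γ := by ring
  -- minimizer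
  obtain ⟨βm, hβmA, hβmin⟩ := hcompact.exists_isMinOn hne hlip.continuous.continuousOn
  set b0 : ℝ → ℝ := bR βm with hb0_def
  have hb0 : Continuous b0 := bR_cont βm
  have hb0B : ∀ y, |b0 y| ≤ 2*M := by
    intro y
    have h := hβmA.2.1 ⟨clamp y, clamp_mem y⟩
    exact abs_le.2 ⟨h.1, h.2⟩
  set a0 : ℝ → ℝ := Afun ψ b0 with ha0_def
  have ha0 : Continuous a0 := Afun_cont hψ hM hb0 hb0B
  have ha0B : ∀ x, |a0 x| ≤ M + 2*M := Afun_bound hψ hM hb0 hb0B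
  set bt : ℝ → ℝ := Afun φs a0 with hbt_def
  have hbt : Continuous bt := Afun_cont hφs hMs ha0 ha0B
  have hbtB : ∀ y, |bt y| ≤ M + (M + 2*M) := Afun_bound hφs hMs ha0 ha0B
  have hbtmod : ∀ t t' : X01, |bt t.1 - bt t'.1| ≤ modSup φs t.1 t'.1 := fun t t' =>
    Afun_mod hφs hMs ha0 ha0B t.1 t'.1
  set βh : X01 →ᵇ ℝ := mkOfCompact
    ⟨fun t : X01 => bt t.1 - bt 0, (hbt.comp continuous_subtype_val).sub continuous_const⟩
    with hβh_def
  have hβh_apply : ∀ t : X01, βh t = bt t.1 - bt 0 := fun t => rfl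
  have hβhA : βh ∈ Aset := by
    refine ⟨?_, ?_, ?_⟩
    · rw [hβh_apply y0]; exact sub_self _
    · intro t
      rw [hβh_apply t]
      have h := (hbtmod t y0).trans (modSup_le hMs t.1 y0.1)
      exact abs_le.1 h
    · intro t t'
      rw [hβh_apply t, hβh_apply t']
      have : bt t.1 - bt 0 - (bt t'.1 - bt 0) = bt t.1 - bt t'.1 := by ring
      rw [this]
      exact hbtmod t t'
  have hPhiβh : Phi ψ (bR βh) = Phi ψ bt := by
    have he : bR βh =ᵐ[unif01] fun y => bt y - bt 0 := by
      filter_upwards [ae_mem_Icc] with y hy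
      show βh ⟨clamp y, clamp_mem y⟩ = bt y - bt 0
      rw [hβh_apply]
      show bt (clamp y) - bt 0 = bt y - bt 0
      rw [clamp_of_mem hy]
    exact (Phi_congr he).trans (Phi_translate hψ hM hbt hbtB (bt 0))
  have hmin1 : Phi ψ b0 ≤ Phi ψ bt := by
    have h := (isMinOn_iff.mp hβmin) βh hβhA
    rwa [hPhiβh] at h
  have e1 : 1 + Phi ψ bt = Gfun1 ψ (Afun ψ bt) bt :=
    (Gfun1_Afun_eq_Phi hψ hM hbt hbtB).symm
  have i1 : Gfun1 ψ (Afun ψ bt) bt ≤ Gfun1 ψ a0 bt :=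
    (slot1 hψ hM ha0 ha0B hbt hbtB).1
  have e2 : Gfun1 ψ a0 bt = Gfun1 φs bt a0 := by
    rw [Gfun1_eq_Gfun2 hψ hM ha0 ha0B hbt hbtB, Gfun2_eq_Gfun1_swap]
  have i2 : Gfun1 φs bt a0 ≤ Gfun1 φs b0 a0 := by
    rw [hbt_def]
    exact (slot1 hφs hMs hb0 hb0B ha0 ha0B).1
  have e3 : Gfun1 φs b0 a0 = Gfun1 ψ a0 b0 := by
    rw [← Gfun2_eq_Gfun1_swap, ← Gfun1_eq_Gfun2 hψ hM ha0 ha0B hb0 hb0B]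
  have e4 : Gfun1 ψ a0 b0 = 1 + Phi ψ b0 := by
    rw [ha0_def]
    exact Gfun1_Afun_eq_Phi hψ hM hb0 hb0B
  have heqG : Gfun1 φs b0 a0 = Gfun1 φs (Afun φs a0) a0 := by
    have h7 : 1 + Phi ψ bt ≤ Gfun1 φs bt a0 := by rw [e1, ← e2]; exact i1
    have h8 : Gfun1 φs b0 a0 = 1 + Phi ψ b0 := e3.trans e4
    have h9 : Gfun1 φs bt a0 = Gfun1 φs (Afun φs a0) a0 := by rw [hbt_def]
    rw [h9] at i2 h7 ⊢
    linarith
  have hae : b0 =ᵐ[unif01] Afun φs a0 :=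
    (slot1 hφs hMs hb0 hb0B ha0 ha0B).2 heqG
  refine ⟨a0, b0, ha0, hb0, ⟨M + 2*M, ha0B⟩, ⟨2*M, hb0B⟩, ?_, ?_⟩
  · intro x
    have h := Afun_norm hψ hM hb0 hb0B x
    rwa [← ha0_def] at h
  · filter_upwards [hae] with y hy
    have h := Afun_norm hφs hMs ha0 ha0B y
    rw [← hy] at h
    rw [← h]
    congr 1
    funext x
    congr 1
    show ψ (x, y) + a0 x + b0 y = ψ ((y, x).swap) + b0 y + a0 x
    rw [Prod.swap]
    ring

namespace SP5
open SP SP2 SP3 SP4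

/-- the density `e^{ψ(x,y)+a(x)+b(y)}`. -/
def dens (ψ : ℝ × ℝ → ℝ) (a b : ℝ → ℝ) : ℝ × ℝ → ℝ :=
  fun p => Real.exp (ψ p + a p.1 + b p.2)

def densE (ψ : ℝ × ℝ → ℝ) (a b : ℝ → ℝ) : ℝ × ℝ → ℝ≥0∞ :=
  fun p => ENNReal.ofReal (dens ψ a b p)

def muG (ψ : ℝ × ℝ → ℝ) (a b : ℝ → ℝ) : Measure (ℝ × ℝ) :=
  usq.withDensity (densE ψ a b)

variable {ψ : ℝ × ℝ → ℝ} {M : ℝ} {a b : ℝ → ℝ} {Ca Cb : ℝ}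

lemma dens_cont (hψ : Continuous ψ) (ha : Continuous a) (hb : Continuous b) :
    Continuous (dens ψ a b) :=
  ((hψ.add (ha.comp continuous_fst)).add (hb.comp continuous_snd)).rexp

lemma dens_pos (p : ℝ × ℝ) : 0 < dens ψ a b p := Real.exp_pos _

lemma dens_bound (hM : ∀ p, |ψ p| ≤ M) (haB : ∀ x, |a x| ≤ Ca) (hbB : ∀ y, |b y| ≤ Cb)
    (p : ℝ × ℝ) : |dens ψ a b p| ≤ Real.exp (M + Ca + Cb) := by
  rw [abs_of_pos (dens_pos p)]
  apply Real.exp_le_exp.2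
  linarith [(abs_le.1 (hM p)).2, (abs_le.1 (haB p.1)).2, (abs_le.1 (hbB p.2)).2]

lemma dens_ge (hM : ∀ p, |ψ p| ≤ M) (haB : ∀ x, |a x| ≤ Ca) (hbB : ∀ y, |b y| ≤ Cb)
    (p : ℝ × ℝ) : Real.exp (-(M + Ca + Cb)) ≤ dens ψ a b p := by
  apply Real.exp_le_exp.2
  linarith [(abs_le.1 (hM p)).1, (abs_le.1 (haB p.1)).1, (abs_le.1 (hbB p.2)).1]

lemma densE_meas (hψ : Continuous ψ) (ha : Continuous a) (hb : Continuous b) :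
    Measurable (densE ψ a b) :=
  (dens_cont hψ ha hb).measurable.ennreal_ofReal

lemma dens_integrable (hψ : Continuous ψ) (hM : ∀ p, |ψ p| ≤ M) (ha : Continuous a)
    (haB : ∀ x, |a x| ≤ Ca) (hb : Continuous b) (hbB : ∀ y, |b y| ≤ Cb) :
    Integrable (dens ψ a b) usq :=
  integrable_of_bounded (dens_cont hψ ha hb).aestronglyMeasurable (dens_bound hM haB hbB)

lemma dens_slice_integrable (hψ : Continuous ψ) (hM : ∀ p, |ψ p| ≤ M) (ha : Continuous a)
    (haB : ∀ x, |a x| ≤ Ca) (hb : Continuous b) (hbB : ∀ y, |b y| ≤ Cb) (x : ℝ) :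
    Integrable (fun y => dens ψ a b (x, y)) unif01 := by
  refine integrable_of_bounded (C := Real.exp (M + Ca + Cb)) ?_ (fun y => dens_bound hM haB hbB _)
  exact ((dens_cont hψ ha hb).comp (continuous_const.prodMk continuous_id)).aestronglyMeasurable

lemma dens_slice_integrable' (hψ : Continuous ψ) (hM : ∀ p, |ψ p| ≤ M) (ha : Continuous a)
    (haB : ∀ x, |a x| ≤ Ca) (hb : Continuous b) (hbB : ∀ y, |b y| ≤ Cb) (y : ℝ) :
    Integrable (fun x => dens ψ a b (x, y)) unif01 := by
  refine integrable_of_bounded (C := Real.exp (M + Ca + Cb)) ?_ (fun x => dens_bound hM haB hbB _)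
  exact ((dens_cont hψ ha hb).comp (continuous_id.prodMk continuous_const)).aestronglyMeasurable

section marginals

variable (hψ : Continuous ψ) (hM : ∀ p, |ψ p| ≤ M) (ha : Continuous a) (haB : ∀ x, |a x| ≤ Ca)
  (hb : Continuous b) (hbB : ∀ y, |b y| ≤ Cb)
  (hmar1 : ∀ x, ∫ y, Real.exp (ψ (x, y) + a x + b y) ∂unif01 = 1)
  (hmar2 : ∀ᵐ y ∂unif01, ∫ x, Real.exp (ψ (x, y) + a x + b y) ∂unif01 = 1)

include hψ hM ha haB hb hbB hmar1 in
lemma lint_slice1 : ∀ x, ∫⁻ y, densE ψ a b (x, y) ∂unif01 = 1 := by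
  intro x
  show ∫⁻ y, ENNReal.ofReal (dens ψ a b (x, y)) ∂unif01 = 1
  rw [← MeasureTheory.ofReal_integral_eq_lintegral_ofReal
    (dens_slice_integrable hψ hM ha haB hb hbB x)
    (Filter.Eventually.of_forall (fun y => (dens_pos _).le))]
  have h1 : ∫ y, dens ψ a b (x, y) ∂unif01 = 1 := hmar1 x
  rw [h1, ENNReal.ofReal_one]

include hψ hM ha haB hb hbB hmar2 in
lemma lint_slice2 : ∀ᵐ y ∂unif01, ∫⁻ x, densE ψ a b (x, y) ∂unif01 = 1 := by
  filter_upwards [hmar2] with y hy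
  show ∫⁻ x, ENNReal.ofReal (dens ψ a b (x, y)) ∂unif01 = 1
  rw [← MeasureTheory.ofReal_integral_eq_lintegral_ofReal
    (dens_slice_integrable' hψ hM ha haB hb hbB y)
    (Filter.Eventually.of_forall (fun x => (dens_pos _).le))]
  have h1 : ∫ x, dens ψ a b (x, y) ∂unif01 = 1 := hy
  rw [h1, ENNReal.ofReal_one]

include hψ hM ha haB hb hbB hmar1 in
lemma muG_map_fst : (muG ψ a b).map Prod.fst = unif01 := by
  apply Measure.ext
  intro s hs
  rw [Measure.map_apply measurable_fst hs, muG,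
    withDensity_apply _ (measurable_fst hs)]
  have hpre : Prod.fst ⁻¹' s = s ×ˢ (Set.univ : Set ℝ) := by ext p; simp
  rw [hpre]
  rw [show usq.restrict (s ×ˢ (Set.univ : Set ℝ)) = (unif01.restrict s).prod unif01 from by
    rw [show (usq : Measure (ℝ × ℝ)) = unif01.prod unif01 from rfl, ← Measure.prod_restrict,
      Measure.restrict_univ]]
  rw [MeasureTheory.lintegral_prod _ (densE_meas hψ ha hb).aemeasurable]
  rw [lintegral_congr (lint_slice1 hψ hM ha haB hb hbB hmar1), lintegral_one,
    Measure.restrict_apply_univ]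

include hψ hM ha haB hb hbB hmar2 in
lemma muG_map_snd : (muG ψ a b).map Prod.snd = unif01 := by
  apply Measure.ext
  intro t ht
  rw [Measure.map_apply measurable_snd ht, muG,
    withDensity_apply _ (measurable_snd ht)]
  have hpre : Prod.snd ⁻¹' t = (Set.univ : Set ℝ) ×ˢ t := by ext p; simp
  rw [hpre]
  rw [show usq.restrict ((Set.univ : Set ℝ) ×ˢ t) = unif01.prod (unif01.restrict t) from by
    rw [show (usq : Measure (ℝ × ℝ)) = unif01.prod unif01 from rfl, ← Measure.prod_restrict,
      Measure.restrict_univ]]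
  rw [MeasureTheory.lintegral_prod_symm _ (densE_meas hψ ha hb).aemeasurable]
  rw [lintegral_congr_ae (ae_restrict_of_ae (lint_slice2 hψ hM ha haB hb hbB hmar2)),
    lintegral_one, Measure.restrict_apply_univ]

include hψ hM ha haB hb hbB hmar1 in
lemma muG_prob : IsProbabilityMeasure (muG ψ a b) := by
  constructor
  have h := muG_map_fst hψ hM ha haB hb hbB hmar1
  have h2 : ((muG ψ a b).map Prod.fst) Set.univ = unif01 Set.univ := by rw [h]
  rw [Measure.map_apply measurable_fst MeasurableSet.univ, Set.preimage_univ] at h2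
  rw [h2, measure_univ]

end marginals

lemma usq_map_fst : usq.map Prod.fst = unif01 := by
  rw [show (usq : Measure (ℝ × ℝ)) = unif01.prod unif01 from rfl, Measure.map_fst_prod]
  simp

lemma usq_map_snd : usq.map Prod.snd = unif01 := by
  rw [show (usq : Measure (ℝ × ℝ)) = unif01.prod unif01 from rfl, Measure.map_snd_prod]
  simp

lemma null_fst {ν : Measure (ℝ × ℝ)} (hmap : ν.map Prod.fst = unif01) {E : Set ℝ}
    (hE : unif01 E = 0) : ν (Prod.fst ⁻¹' E) = 0 := by
  obtain ⟨E', hEE', hE'm, hE'0⟩ := exists_measurable_superset_of_null hE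
  apply measure_mono_null (Set.preimage_mono hEE')
  have := Measure.map_apply (μ := ν) measurable_fst hE'm
  rw [hmap, hE'0] at this
  exact this.symm

lemma null_snd {ν : Measure (ℝ × ℝ)} (hmap : ν.map Prod.snd = unif01) {E : Set ℝ}
    (hE : unif01 E = 0) : ν (Prod.snd ⁻¹' E) = 0 := by
  obtain ⟨E', hEE', hE'm, hE'0⟩ := exists_measurable_superset_of_null hE
  apply measure_mono_null (Set.preimage_mono hEE')
  have := Measure.map_apply (μ := ν) measurable_snd hE'm
  rw [hmap, hE'0] at this
  exact this.symm

lemma unif01_compl : unif01 (Set.Icc (0:ℝ) 1)ᶜ = 0 := by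
  rw [unif01, Measure.restrict_apply (measurableSet_Icc.compl)]
  simp

/-- any two functions agreeing on the unit square agree a.e. w.r.t. any measure
with uniform marginals. -/
lemma ae_eq_of_eq_on_sq {ν : Measure (ℝ × ℝ)} (hm1 : ν.map Prod.fst = unif01)
    (hm2 : ν.map Prod.snd = unif01) {g g' : ℝ × ℝ → ℝ} (h : ∀ p ∈ unitSq, g p = g' p) :
    g =ᵐ[ν] g' := by
  have hsub : {p : ℝ × ℝ | ¬ g p = g' p}
      ⊆ (Prod.fst ⁻¹' (Set.Icc (0:ℝ) 1)ᶜ) ∪ (Prod.snd ⁻¹' (Set.Icc (0:ℝ) 1)ᶜ) := by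
    intro p hp
    by_contra hc
    simp only [Set.mem_union, Set.mem_preimage, Set.mem_compl_iff] at hc
    push_neg at hc
    exact hp (h p ⟨hc.1, hc.2⟩)
  have h0 : ν ((Prod.fst ⁻¹' (Set.Icc (0:ℝ) 1)ᶜ) ∪ (Prod.snd ⁻¹' (Set.Icc (0:ℝ) 1)ᶜ)) = 0 :=
    measure_union_null (null_fst hm1 unif01_compl) (null_snd hm2 unif01_compl)
  exact measure_mono_null hsub h0

lemma integral_comp_fst {ν : Measure (ℝ × ℝ)} (hmap : ν.map Prod.fst = unif01)
    {c : ℝ → ℝ} (hc : Continuous c) :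
    ∫ p, c p.1 ∂ν = ∫ x, c x ∂unif01 := by
  rw [← hmap, integral_map measurable_fst.aemeasurable hc.aestronglyMeasurable]

lemma integral_comp_snd {ν : Measure (ℝ × ℝ)} (hmap : ν.map Prod.snd = unif01)
    {c : ℝ → ℝ} (hc : Continuous c) :
    ∫ p, c p.2 ∂ν = ∫ y, c y ∂unif01 := by
  rw [← hmap, integral_map measurable_snd.aemeasurable hc.aestronglyMeasurable]

end SP5

namespace SP6
open SP SP2 SP3 SP4 SP5
open scoped NNReal

variable {ψ : ℝ × ℝ → ℝ} {M : ℝ} {a b : ℝ → ℝ} {Ca Cb : ℝ}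

section keysec

variable (hψ : Continuous ψ) (hM : ∀ p, |ψ p| ≤ M) (ha : Continuous a) (haB : ∀ x, |a x| ≤ Ca)
  (hb : Continuous b) (hbB : ∀ y, |b y| ≤ Cb)
  (hmar1 : ∀ x, ∫ y, Real.exp (ψ (x, y) + a x + b y) ∂unif01 = 1)

include hψ hM ha haB hb hbB hmar1 in
lemma dens_total : ∫ p, dens ψ a b p ∂usq = 1 := by
  have h := MeasureTheory.integral_prod _ (dens_integrable hψ hM ha haB hb hbB)
  calc ∫ p, dens ψ a b p ∂usq
      = ∫ x, ∫ y, dens ψ a b (x, y) ∂unif01 ∂unif01 := h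
    _ = ∫ x, (1:ℝ) ∂unif01 := by
        congr 1; funext x; exact hmar1 x
    _ = 1 := by simp

include hψ hM ha haB hb hbB hmar1 in
theorem key (f : ℝ × ℝ → ℝ) (θ : ℝ) (hfψ : ∀ p ∈ unitSq, θ * f p = ψ p)
    {ν : Measure (ℝ × ℝ)} (hν : ν ∈ MM) :
    objE f θ ν ≤ ((-(∫ x, a x ∂unif01 + ∫ y, b y ∂unif01) : ℝ) : EReal) ∧
      (objE f θ ν = ((-(∫ x, a x ∂unif01 + ∫ y, b y ∂unif01) : ℝ) : EReal) →
        ν = muG ψ a b) := by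
  obtain ⟨hprob, hm1, hm2⟩ := hν
  haveI := hprob
  set A := ∫ x, a x ∂unif01 with hA
  set B := ∫ y, b y ∂unif01 with hB
  have hθf : θ * ∫ p, f p ∂ν = ∫ p, ψ p ∂ν := by
    rw [← integral_const_mul]
    exact integral_congr_ae (ae_eq_of_eq_on_sq hm1 hm2 hfψ)
  have hψint : Integrable ψ ν := integrable_of_bounded hψ.aestronglyMeasurable hM
  have haf : Integrable (fun p : ℝ × ℝ => a p.1) ν :=
    integrable_of_bounded ((ha.comp continuous_fst).aestronglyMeasurable) (fun p => haB p.1)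
  have hbf : Integrable (fun p : ℝ × ℝ => b p.2) ν :=
    integrable_of_bounded ((hb.comp continuous_snd).aestronglyMeasurable) (fun p => hbB p.2)
  have hlogdens : (fun p => Real.log (dens ψ a b p)) = fun p => ψ p + a p.1 + b p.2 :=
    funext (fun p => Real.log_exp _)
  have hlogint : Integrable (fun p => Real.log (dens ψ a b p)) ν := by
    rw [hlogdens]; exact (hψint.add haf).add hbf
  have hlogval : ∫ p, Real.log (dens ψ a b p) ∂ν = (∫ p, ψ p ∂ν) + A + B := by
    rw [hlogdens]
    calc ∫ p, (ψ p + a p.1 + b p.2) ∂ν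
        = (∫ p, (ψ p + a p.1) ∂ν) + ∫ p, b p.2 ∂ν := integral_add (hψint.add haf) hbf
      _ = ((∫ p, ψ p ∂ν) + ∫ p, a p.1 ∂ν) + ∫ p, b p.2 ∂ν :=
          congrArg (fun z => z + ∫ p, b p.2 ∂ν) (integral_add hψint haf)
      _ = (∫ p, ψ p ∂ν) + A + B := by
          rw [integral_comp_fst hm1 ha, integral_comp_snd hm2 hb]
  by_cases hKL : ν ≪ usq ∧ Integrable (fun x => Real.log ((ν.rnDeriv usq x).toReal)) ν
  case neg =>
    have hKLtop : KL ν usq = ⊤ := by rw [KL, if_neg hKL]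
    have hbot : objE f θ ν = ⊥ := by
      rw [objE, hKLtop, EReal.coe_ennreal_top, EReal.sub_top]
    constructor
    · rw [hbot]; exact bot_le
    · intro hcontra; rw [hbot] at hcontra; exact absurd hcontra (EReal.bot_ne_coe _)
  case pos =>
    obtain ⟨habs, hint⟩ := hKL
    have hKLeq : KL ν usq = ENNReal.ofReal (∫ p, Real.log ((ν.rnDeriv usq p).toReal) ∂ν) := by
      rw [KL, if_pos ⟨habs, hint⟩]
  -- main notation
    set I₀ := ∫ p, Real.log ((ν.rnDeriv usq p).toReal) ∂ν with hI₀def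
    set hrn := ν.rnDeriv usq with hrndef
    have hhm : Measurable hrn := Measure.measurable_rnDeriv ν usq
    have hνd : usq.withDensity hrn = ν := Measure.withDensity_rnDeriv_eq ν usq habs
    set Tn : ℝ × ℝ → ℝ≥0 := fun p => (hrn p).toNNReal with hTndef
    have hTnm : Measurable Tn := hhm.ennreal_toNNReal
    set Hr : ℝ × ℝ → ℝ := fun p => ((Tn p : ℝ≥0) : ℝ) with hHrdef
    have hHrm : Measurable Hr := hTnm.coe_nnreal_real
    have hHrnn : ∀ p, 0 ≤ Hr p := fun p => NNReal.coe_nonneg _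
    have hν0 : ν {p | hrn p = 0} = 0 := by
      have hms : MeasurableSet {p | hrn p = 0} := hhm (measurableSet_singleton 0)
      rw [← hνd, withDensity_apply _ hms]
      rw [setLIntegral_congr_fun hms
        (fun p (hp : hrn p = 0) => hp)]
      simp
    have hνtop : ν {p | hrn p = ∞} = 0 := by
      have hms : MeasurableSet {p | hrn p = ∞} := hhm (measurableSet_singleton ⊤)
      rw [← hνd, withDensity_apply _ hms]
      apply setLIntegral_measure_zero
      have h2 := ae_iff.mp (Measure.rnDeriv_ne_top ν usq)
      simpa using h2
    have hHrpos : ∀ᵐ p ∂ν, 0 < Hr p := by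
      have h1 : ∀ᵐ p ∂ν, ¬ (hrn p = 0) := ae_iff.2 (by simpa using hν0)
      have h2 : ∀ᵐ p ∂ν, ¬ (hrn p = ∞) := ae_iff.2 (by simpa using hνtop)
      filter_upwards [h1, h2] with p hp1 hp2
      exact NNReal.coe_pos.2 (ENNReal.toNNReal_pos hp1 hp2)
    set G := dens ψ a b with hGdef
    set W : ℝ × ℝ → ℝ := fun p => G p / Hr p with hWdef
    have hGpos : ∀ p, 0 < G p := fun p => dens_pos p
    have hcoe : usq.withDensity hrn
        = usq.withDensity (fun p => ((Tn p : ℝ≥0) : ℝ≥0∞)) := by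
      apply withDensity_congr_ae
      filter_upwards [Measure.rnDeriv_ne_top ν usq] with p hp
      exact (ENNReal.coe_toNNReal hp).symm
    have hWmeas : Measurable W := (dens_cont hψ ha hb).measurable.div hHrm
    have hHrW_le : ∀ p, Hr p * W p ≤ G p := by
      intro p
      rcases eq_or_ne (Hr p) 0 with h0 | h0
      · rw [h0, zero_mul]; exact (hGpos p).le
      · rw [show Hr p * W p = G p from by rw [hWdef]; field_simp]
    have hHrW_nn : ∀ p, 0 ≤ Hr p * W p := by
      intro p
      rcases eq_or_ne (Hr p) 0 with h0 | h0
      · rw [h0, zero_mul]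
      · rw [show Hr p * W p = G p from by rw [hWdef]; field_simp]
        exact (hGpos p).le
    have hHrWint : Integrable (fun p => Hr p * W p) usq := by
      refine integrable_of_bounded (C := Real.exp (M + Ca + Cb))
        ((hHrm.mul hWmeas).aestronglyMeasurable) ?_
      intro p
      rw [abs_of_nonneg (hHrW_nn p)]
      exact (hHrW_le p).trans (le_of_abs_le (dens_bound hM haB hbB p))
    have hWint : Integrable W ν := by
      rw [← hνd, hcoe, integrable_withDensity_iff_integrable_smul hTnm]
      apply hHrWint.congr
      filter_upwards with p
      rw [NNReal.smul_def, smul_eq_mul]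
    have hchange : ∫ p, W p ∂ν = ∫ p, Hr p * W p ∂usq := by
      rw [← hνd, hcoe, integral_withDensity_eq_integral_smul hTnm W]
      congr 1
    have hIW : ∫ p, W p ∂ν ≤ 1 := by
      rw [hchange, ← dens_total hψ hM ha haB hb hbB hmar1]
      exact integral_mono hHrWint (dens_integrable hψ hM ha haB hb hbB) hHrW_le
    have hlogWae : ∀ᵐ p ∂ν, Real.log (W p) = Real.log (G p) - Real.log (Hr p) := by
      filter_upwards [hHrpos] with p hp
      rw [hWdef]
      exact Real.log_div (hGpos p).ne' hp.ne'
    have hintlogHr : Integrable (fun p => Real.log (Hr p)) ν := hint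
    have hintlogW : Integrable (fun p => Real.log (W p)) ν :=
      (hlogint.sub hintlogHr).congr (hlogWae.mono fun p hp => hp.symm)
    have hlogW_le : ∀ᵐ p ∂ν, Real.log (W p) ≤ W p - 1 := by
      filter_upwards [hHrpos] with p hp
      exact Real.log_le_sub_one_of_pos (div_pos (hGpos p) hp)
    have hWsub : Integrable (fun p => W p - 1) ν := hWint.sub (integrable_const 1)
    have hsubW : ∫ p, (W p - 1) ∂ν = (∫ p, W p ∂ν) - 1 := by
      have h := integral_sub hWint (integrable_const (1:ℝ))
      simp only [integral_const, measure_univ, probReal_univ, ENNReal.toReal_one, smul_eq_mul, one_mul, mul_one] at h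
      exact h
    have h1W : ∫ p, Real.log (W p) ∂ν ≤ (∫ p, W p ∂ν) - 1 := by
      have h := integral_mono_ae hintlogW hWsub hlogW_le
      rwa [hsubW] at h
    have hJle : ∫ p, Real.log (W p) ∂ν ≤ 0 := by linarith
    have hJval : ∫ p, Real.log (W p) ∂ν = ((∫ p, ψ p ∂ν) + A + B) - I₀ := by
      calc ∫ p, Real.log (W p) ∂ν
          = ∫ p, (Real.log (G p) - Real.log (Hr p)) ∂ν := integral_congr_ae hlogWae
        _ = (∫ p, Real.log (G p) ∂ν) - ∫ p, Real.log (Hr p) ∂ν :=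
            integral_sub hlogint hintlogHr
        _ = ((∫ p, ψ p ∂ν) + A + B) - I₀ := by rw [hlogval, hI₀def]; rfl
    have hImain : (∫ p, ψ p ∂ν) + A + B ≤ I₀ := by linarith
    constructor
    · rw [objE, hKLeq, hθf, EReal.coe_ennreal_ofReal, ← EReal.coe_sub,
        EReal.coe_le_coe_iff]
      have := le_max_left I₀ 0
      linarith
    · intro heq
      rw [objE, hKLeq, hθf, EReal.coe_ennreal_ofReal, ← EReal.coe_sub,
        EReal.coe_eq_coe_iff] at heq
      have hI0eq : I₀ = (∫ p, ψ p ∂ν) + A + B := by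
        rcases le_or_gt 0 I₀ with hc | hc
        · rw [max_eq_left hc] at heq; linarith
        · rw [max_eq_right hc.le] at heq; linarith
      have hlogW0 : ∫ p, Real.log (W p) ∂ν = 0 := by rw [hJval, hI0eq]; ring
      have hW1 : ∫ p, W p ∂ν = 1 := le_antisymm hIW (by linarith)
      have hz : ∫ p, (W p - 1 - Real.log (W p)) ∂ν = 0 := by
        calc ∫ p, (W p - 1 - Real.log (W p)) ∂ν
            = (∫ p, (W p - 1) ∂ν) - ∫ p, Real.log (W p) ∂ν := integral_sub hWsub hintlogW
          _ = 0 := by rw [hsubW, hW1, hlogW0]; ring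
      have hae0 : (fun p => W p - 1 - Real.log (W p)) =ᵐ[ν] 0 := by
        apply (integral_eq_zero_iff_of_nonneg_ae ?_ ?_).1 hz
        · filter_upwards [hHrpos] with p hp
          have := Real.log_le_sub_one_of_pos (div_pos (hGpos p) hp)
          simp only [Pi.zero_apply]
          linarith
        · exact hWsub.sub hintlogW
      have hHrG : ∀ᵐ p ∂ν, Hr p = G p := by
        filter_upwards [hae0, hHrpos] with p h0 hp
        have hWpos : 0 < W p := div_pos (hGpos p) hp
        have hW1p : W p = 1 := eq_one_of_sub_log hWpos (by simpa using h0)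
        have hdiv : G p / Hr p = 1 := hW1p
        exact ((div_eq_one_iff_eq hp.ne').1 hdiv).symm
      have hGmeas : Measurable G := (dens_cont hψ ha hb).measurable
      set S := {p : ℝ × ℝ | Hr p ≠ 0 ∧ ¬ Hr p = G p} with hSdef
      have hSm : MeasurableSet S :=
        ((hHrm (measurableSet_singleton 0)).compl).inter
          (measurableSet_eq_fun hHrm hGmeas).compl
      have hνS : ν S = 0 := by
        have hzz : ν {p | ¬ Hr p = G p} = 0 := ae_iff.mp hHrG
        exact measure_mono_null (fun p hp => hp.2) hzz
      have husqS : usq S = 0 := by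
        rw [← hνd, withDensity_apply _ hSm] at hνS
        have h0 : hrn =ᵐ[usq.restrict S] 0 := (lintegral_eq_zero_iff hhm).1 hνS
        rw [EventuallyEq, ae_restrict_iff' hSm] at h0
        have hns : ∀ᵐ p ∂usq, p ∉ S := by
          filter_upwards [h0] with p hp
          intro hpS
          have h1 : hrn p = 0 := hp hpS
          apply hpS.1
          rw [hHrdef, hTndef]
          simp [h1]
        have := ae_iff.mp hns
        simpa using this
      have hT0 : usq {p | Hr p = 0} = 0 := by
        have he : ∫ p, (G p - Hr p * W p) ∂usq = 0 := by
          rw [integral_sub (dens_integrable hψ hM ha haB hb hbB) hHrWint,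
            dens_total hψ hM ha haB hb hbB hmar1, ← hchange, hW1]
          ring
        have haeG : (fun p => G p - Hr p * W p) =ᵐ[usq] 0 :=
          (integral_eq_zero_iff_of_nonneg_ae
            (Filter.Eventually.of_forall (fun p => sub_nonneg.2 (hHrW_le p)))
            ((dens_integrable hψ hM ha haB hb hbB).sub hHrWint)).1 he
        have hsub : {p : ℝ × ℝ | Hr p = 0} ⊆ {p | ¬ (G p - Hr p * W p = 0)} := by
          intro p hp
          simp only [Set.mem_setOf_eq] at *
          rw [hp, zero_mul, sub_zero]
          exact (hGpos p).ne'
        exact measure_mono_null hsub (ae_iff.mp haeG)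
      have hfinal : hrn =ᵐ[usq] densE ψ a b := by
        have hnS : ∀ᵐ p ∂usq, p ∉ S := ae_iff.2 (by simpa using husqS)
        have hnT : ∀ᵐ p ∂usq, ¬ Hr p = 0 := ae_iff.2 (by simpa using hT0)
        filter_upwards [Measure.rnDeriv_ne_top ν usq, hnS, hnT] with p htop hpS hpT
        have hHrGp : Hr p = G p := by
          by_contra hc
          exact hpS ⟨hpT, hc⟩
        show hrn p = ENNReal.ofReal (dens ψ a b p)
        calc hrn p = ((Tn p : ℝ≥0) : ℝ≥0∞) := (ENNReal.coe_toNNReal htop).symm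
          _ = ENNReal.ofReal (Hr p) := by rw [hHrdef]; exact ENNReal.ofReal_coe_nnreal.symm
          _ = ENNReal.ofReal (G p) := by rw [hHrGp]
      rw [← hνd, muG]
      exact withDensity_congr_ae hfinal

end keysec

end SP6

namespace SP7
open SP SP2 SP3 SP4 SP5 SP6
open scoped NNReal

variable {ψ : ℝ × ℝ → ℝ} {M : ℝ} {a b : ℝ → ℝ} {Ca Cb : ℝ}

variable (hψ : Continuous ψ) (hM : ∀ p, |ψ p| ≤ M) (ha : Continuous a) (haB : ∀ x, |a x| ≤ Ca)
  (hb : Continuous b) (hbB : ∀ y, |b y| ≤ Cb)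
  (hmar1 : ∀ x, ∫ y, Real.exp (ψ (x, y) + a x + b y) ∂unif01 = 1)
  (hmar2 : ∀ᵐ y ∂unif01, ∫ x, Real.exp (ψ (x, y) + a x + b y) ∂unif01 = 1)

include hψ hM ha haB hb hbB hmar1 hmar2 in
theorem muG_val (f : ℝ × ℝ → ℝ) (θ : ℝ) (hfψ : ∀ p ∈ unitSq, θ * f p = ψ p) :
    objE f θ (muG ψ a b) = ((-(∫ x, a x ∂unif01 + ∫ y, b y ∂unif01) : ℝ) : EReal) := by
  haveI := muG_prob hψ hM ha haB hb hbB hmar1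
  have hm1 := muG_map_fst hψ hM ha haB hb hbB hmar1
  have hm2 := muG_map_snd hψ hM ha haB hb hbB hmar2
  set μ := muG ψ a b with hμdef
  set A := ∫ x, a x ∂unif01 with hA
  set B := ∫ y, b y ∂unif01 with hB
  have hGpos : ∀ p, 0 < dens ψ a b p := fun p => dens_pos p
  have habs : μ ≪ usq := withDensity_absolutelyContinuous usq _
  have hdm : Measurable (densE ψ a b) := densE_meas hψ ha hb
  have hrd : μ.rnDeriv usq =ᵐ[usq] densE ψ a b := Measure.rnDeriv_withDensity usq hdm
  have hlogae : (fun p => Real.log ((μ.rnDeriv usq p).toReal)) =ᵐ[usq]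
      (fun p => Real.log (dens ψ a b p)) := by
    filter_upwards [hrd] with p hp
    rw [hp]
    show Real.log ((ENNReal.ofReal (dens ψ a b p)).toReal) = _
    rw [ENNReal.toReal_ofReal (hGpos p).le]
  have hlogaeμ : (fun p => Real.log ((μ.rnDeriv usq p).toReal)) =ᵐ[μ]
      (fun p => Real.log (dens ψ a b p)) := hlogae.filter_mono habs.ae_le
  have hbdd : Integrable (fun p => Real.log (dens ψ a b p)) μ := by
    refine integrable_of_bounded (C := M + Ca + Cb) ?_ ?_
    · exact ((dens_cont hψ ha hb).log (fun p => (hGpos p).ne')).aestronglyMeasurable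
    · intro p
      rw [show Real.log (dens ψ a b p) = ψ p + a p.1 + b p.2 from Real.log_exp _]
      have h1 := abs_le.1 (hM p); have h2 := abs_le.1 (haB p.1); have h3 := abs_le.1 (hbB p.2)
      rw [abs_le]; constructor <;> linarith [h1.1, h1.2, h2.1, h2.2, h3.1, h3.2]
  have hintμ : Integrable (fun p => Real.log ((μ.rnDeriv usq p).toReal)) μ :=
    hbdd.congr hlogaeμ.symm
  have hKLeq : KL μ usq = ENNReal.ofReal (∫ p, Real.log ((μ.rnDeriv usq p).toReal) ∂μ) := by
    rw [KL, if_pos ⟨habs, hintμ⟩]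
  -- marginal integrals
  have hθfμ : θ * ∫ p, f p ∂μ = ∫ p, ψ p ∂μ := by
    rw [← integral_const_mul]
    exact integral_congr_ae (ae_eq_of_eq_on_sq hm1 hm2 hfψ)
  have hψintμ : Integrable ψ μ := integrable_of_bounded hψ.aestronglyMeasurable hM
  have hafμ : Integrable (fun p : ℝ × ℝ => a p.1) μ :=
    integrable_of_bounded ((ha.comp continuous_fst).aestronglyMeasurable) (fun p => haB p.1)
  have hbfμ : Integrable (fun p : ℝ × ℝ => b p.2) μ :=
    integrable_of_bounded ((hb.comp continuous_snd).aestronglyMeasurable) (fun p => hbB p.2)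
  have hlogdens : (fun p => Real.log (dens ψ a b p)) = fun p => ψ p + a p.1 + b p.2 :=
    funext (fun p => Real.log_exp _)
  have hlogval : ∫ p, Real.log (dens ψ a b p) ∂μ = (∫ p, ψ p ∂μ) + A + B := by
    rw [hlogdens]
    calc ∫ p, (ψ p + a p.1 + b p.2) ∂μ
        = (∫ p, (ψ p + a p.1) ∂μ) + ∫ p, b p.2 ∂μ := integral_add (hψintμ.add hafμ) hbfμ
      _ = ((∫ p, ψ p ∂μ) + ∫ p, a p.1 ∂μ) + ∫ p, b p.2 ∂μ :=
          congrArg (fun z => z + ∫ p, b p.2 ∂μ) (integral_add hψintμ hafμ)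
      _ = (∫ p, ψ p ∂μ) + A + B := by
          rw [integral_comp_fst hm1 ha, integral_comp_snd hm2 hb]
  have hIval : ∫ p, Real.log ((μ.rnDeriv usq p).toReal) ∂μ = (∫ p, ψ p ∂μ) + A + B := by
    rw [integral_congr_ae hlogaeμ, hlogval]
  -- nonnegativity of the KL integral
  have hTm : Measurable (fun p => Real.toNNReal (dens ψ a b p)) :=
    (dens_cont hψ ha hb).measurable.real_toNNReal
  have hcoe2 : μ = usq.withDensity (fun p => ((Real.toNNReal (dens ψ a b p) : ℝ≥0) : ℝ≥0∞)) := by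
    rw [hμdef, muG]
    apply withDensity_congr_ae
    filter_upwards with p
    rfl
  have hinv_int : Integrable (fun p => (dens ψ a b p)⁻¹) μ := by
    refine integrable_of_bounded (C := Real.exp (M + Ca + Cb)) ?_ ?_
    · exact ((dens_cont hψ ha hb).inv₀ (fun p => (hGpos p).ne')).aestronglyMeasurable
    · intro p
      rw [abs_of_pos (inv_pos.2 (hGpos p))]
      have h := dens_ge hM haB hbB p
      have h2 : (dens ψ a b p)⁻¹ ≤ (Real.exp (-(M + Ca + Cb)))⁻¹ :=
        inv_anti₀ (Real.exp_pos _) h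
      rwa [Real.exp_neg, inv_inv] at h2
  have hinvval : ∫ p, (dens ψ a b p)⁻¹ ∂μ = 1 := by
    rw [hcoe2, integral_withDensity_eq_integral_smul hTm _]
    rw [show (fun p => (Real.toNNReal (dens ψ a b p)) • (dens ψ a b p)⁻¹) = fun _ => (1:ℝ) from
      funext fun p => by
        rw [NNReal.smul_def, smul_eq_mul, Real.coe_toNNReal _ (hGpos p).le,
          mul_inv_cancel₀ (hGpos p).ne']]
    simp
  have hinvsub : Integrable (fun p => (dens ψ a b p)⁻¹ - 1) μ := hinv_int.sub (integrable_const 1)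
  have hInn : 0 ≤ ∫ p, Real.log (dens ψ a b p) ∂μ := by
    have hptw : ∀ p, -Real.log (dens ψ a b p) ≤ (dens ψ a b p)⁻¹ - 1 := fun p => by
      have h := Real.log_le_sub_one_of_pos (inv_pos.2 (hGpos p))
      rwa [Real.log_inv] at h
    have h2 : ∫ p, ((dens ψ a b p)⁻¹ - 1) ∂μ = 0 := by
      calc ∫ p, ((dens ψ a b p)⁻¹ - 1) ∂μ
          = (∫ p, (dens ψ a b p)⁻¹ ∂μ) - ∫ _, (1:ℝ) ∂μ :=
            integral_sub hinv_int (integrable_const 1)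
        _ = 0 := by rw [hinvval]; simp
    have hnegint : Integrable (fun p => -Real.log (dens ψ a b p)) μ := hbdd.neg
    have h3 := integral_mono_ae hnegint hinvsub (Filter.Eventually.of_forall hptw)
    rw [h2] at h3
    have h4 : ∫ p, -Real.log (dens ψ a b p) ∂μ = -∫ p, Real.log (dens ψ a b p) ∂μ :=
      integral_neg _
    rw [h4] at h3
    linarith
  have hnn : 0 ≤ (∫ p, ψ p ∂μ) + A + B := by rw [← hlogval]; exact hInn
  rw [objE, hKLeq, hθfμ, hIval, EReal.coe_ennreal_ofReal, max_eq_left hnn, ← EReal.coe_sub,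
    EReal.coe_eq_coe_iff]
  ring

end SP7

namespace SP8
open SP SP2 SP3 SP4 SP5 SP6 SP7

lemma aemeasurable_comp_fst {c : ℝ → ℝ} (hc : AEMeasurable c unif01) :
    AEMeasurable (fun p : ℝ × ℝ => c p.1) usq := by
  refine ⟨fun p => hc.mk c p.1, hc.measurable_mk.comp measurable_fst, ?_⟩
  have hE : unif01 {x | ¬ c x = hc.mk c x} = 0 := ae_iff.mp hc.ae_eq_mk
  have h0 := null_fst usq_map_fst hE
  exact measure_mono_null (fun p hp => hp) h0

lemma aemeasurable_comp_snd {c : ℝ → ℝ} (hc : AEMeasurable c unif01) :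
    AEMeasurable (fun p : ℝ × ℝ => c p.2) usq := by
  refine ⟨fun p => hc.mk c p.2, hc.measurable_mk.comp measurable_snd, ?_⟩
  have hE : unif01 {x | ¬ c x = hc.mk c x} = 0 := ae_iff.mp hc.ae_eq_mk
  have h0 := null_snd usq_map_snd hE
  exact measure_mono_null (fun p hp => hp) h0

end SP8


end SP4


open SP SP2 SP3 SP4 SP4.SP5 SP4.SP6 SP4.SP7 SP4.SP8 in
/-- The unique maximizer `μ_{f,θ}` has a density of the form
`exp(θ f(x,y) + a(x) + b(y))` with respect to Lebesgue measure on the unit square, with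
`a, b ∈ L¹[0,1]`; the density is unique a.e., and the supremum `Z(f,θ)` equals
`−∫₀¹ (a(x)+b(x)) dx`. -/
theorem maximizer_density_form (f : ℝ × ℝ → ℝ) (hf : memC f) (θ : ℝ)
    (μstar : Measure (ℝ × ℝ)) (hμ : μstar ∈ MM)
    (hmax : ∀ ν ∈ MM, objE f θ ν ≤ objE f θ μstar) :
    ∃ a b : ℝ → ℝ,
      IntegrableOn a (Set.Icc 0 1) volume ∧ IntegrableOn b (Set.Icc 0 1) volume ∧
      μstar = usq.withDensity
        (fun p => ENNReal.ofReal (Real.exp (θ * f p + a p.1 + b p.2))) ∧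
      (∀ a' b' : ℝ → ℝ, IntegrableOn a' (Set.Icc 0 1) volume →
        IntegrableOn b' (Set.Icc 0 1) volume →
        μstar = usq.withDensity
          (fun p => ENNReal.ofReal (Real.exp (θ * f p + a' p.1 + b' p.2))) →
        (fun p : ℝ × ℝ => Real.exp (θ * f p + a' p.1 + b' p.2))
          =ᵐ[usq] (fun p : ℝ × ℝ => Real.exp (θ * f p + a p.1 + b p.2))) ∧
      (⨆ μ ∈ MM, objE f θ μ) = ((-∫ x in Set.Icc (0 : ℝ) 1, (a x + b x) : ℝ) : EReal) := by
  -- the clamped continuous version of `f` and the potential kernel `ψ`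
  have hclampmem : ∀ p : ℝ × ℝ, ((clamp p.1, clamp p.2) : ℝ × ℝ) ∈ unitSq :=
    fun p => ⟨clamp_mem _, clamp_mem _⟩
  have hFc : Continuous (fun p : ℝ × ℝ => f (clamp p.1, clamp p.2)) :=
    hf.1.comp_continuous
      ((continuous_clamp.comp continuous_fst).prodMk (continuous_clamp.comp continuous_snd))
      hclampmem
  obtain ⟨Mf, hMf⟩ : ∃ Mf, ∀ p ∈ unitSq, |f p| ≤ Mf := by
    obtain ⟨Mf, hMf⟩ := (isCompact_Icc.prod isCompact_Icc).exists_bound_of_continuousOn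
      (by rw [show (Set.Icc (0:ℝ) 1) ×ˢ (Set.Icc (0:ℝ) 1) = unitSq from rfl]; exact hf.1)
    exact ⟨Mf, fun p hp => by simpa [Real.norm_eq_abs] using hMf p hp⟩
  set ψ : ℝ × ℝ → ℝ := fun p => θ * f (clamp p.1, clamp p.2) with hψdef
  have hψc : Continuous ψ := continuous_const.mul hFc
  have hψM : ∀ p, |ψ p| ≤ |θ| * Mf := by
    intro p
    rw [hψdef]
    show |θ * f (clamp p.1, clamp p.2)| ≤ |θ| * Mf
    rw [abs_mul]
    exact mul_le_mul_of_nonneg_left (hMf _ (hclampmem p)) (abs_nonneg θ)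
  have hfψ : ∀ p ∈ unitSq, θ * f p = ψ p := by
    rintro ⟨x, y⟩ hp
    rw [hψdef]
    show θ * f (x, y) = θ * f (clamp x, clamp y)
    rw [clamp_of_mem hp.1, clamp_of_mem hp.2]
  obtain ⟨a, b, hac, hbc, ⟨Ca, haB⟩, ⟨Cb, hbB⟩, hmar1, hmar2⟩ := exists_potentials hψc hψM
  set A := ∫ x, a x ∂unif01 with hA
  set B := ∫ y, b y ∂unif01 with hB
  have hkey : ∀ {ν : Measure (ℝ × ℝ)}, ν ∈ MM →
      objE f θ ν ≤ ((-(A + B) : ℝ) : EReal) ∧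
        (objE f θ ν = ((-(A + B) : ℝ) : EReal) → ν = muG ψ a b) :=
    fun {ν} hν => key hψc hψM hac haB hbc hbB hmar1 f θ hfψ hν
  have hmemG : muG ψ a b ∈ MM :=
    ⟨muG_prob hψc hψM hac haB hbc hbB hmar1,
      muG_map_fst hψc hψM hac haB hbc hbB hmar1,
      muG_map_snd hψc hψM hac haB hbc hbB hmar2⟩
  have hval : objE f θ (muG ψ a b) = ((-(A + B) : ℝ) : EReal) :=
    muG_val hψc hψM hac haB hbc hbB hmar1 hmar2 f θ hfψ
  have hge : ((-(A + B) : ℝ) : EReal) ≤ objE f θ μstar := hval ▸ hmax _ hmemG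
  have hstar_eq : objE f θ μstar = ((-(A + B) : ℝ) : EReal) :=
    le_antisymm (hkey hμ).1 hge
  have hstar : μstar = muG ψ a b := (hkey hμ).2 hstar_eq
  have hfae : (fun p : ℝ × ℝ => θ * f p) =ᵐ[usq] ψ :=
    ae_eq_of_eq_on_sq usq_map_fst usq_map_snd hfψ
  have hdens_ae : (fun p : ℝ × ℝ => ENNReal.ofReal (Real.exp (θ * f p + a p.1 + b p.2)))
      =ᵐ[usq] densE ψ a b := by
    filter_upwards [hfae] with p hp
    show ENNReal.ofReal (Real.exp (θ * f p + a p.1 + b p.2))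
      = ENNReal.ofReal (Real.exp (ψ p + a p.1 + b p.2))
    rw [hp]
  have hDstar : μstar = usq.withDensity
      (fun p => ENNReal.ofReal (Real.exp (θ * f p + a p.1 + b p.2))) := by
    rw [hstar, muG]
    exact (withDensity_congr_ae hdens_ae).symm
  have hDm : AEMeasurable
      (fun p : ℝ × ℝ => ENNReal.ofReal (Real.exp (θ * f p + a p.1 + b p.2))) usq := by
    have h1 : AEMeasurable (fun p : ℝ × ℝ => θ * f p) usq :=
      hψc.aemeasurable.congr hfae.symm
    have h2 : AEMeasurable (fun p : ℝ × ℝ => θ * f p + a p.1 + b p.2) usq :=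
      (h1.add ((hac.comp continuous_fst).aemeasurable)).add
        ((hbc.comp continuous_snd).aemeasurable)
    exact ENNReal.measurable_ofReal.comp_aemeasurable
      (Real.continuous_exp.measurable.comp_aemeasurable h2)
  refine ⟨a, b, integrable_unif01 hac, integrable_unif01 hbc, hDstar, ?_, ?_⟩
  · -- uniqueness of the density
    intro a' b' ha' hb' heq'
    have hD'm : AEMeasurable
        (fun p : ℝ × ℝ => ENNReal.ofReal (Real.exp (θ * f p + a' p.1 + b' p.2))) usq := by
      have h1 : AEMeasurable (fun p : ℝ × ℝ => θ * f p) usq :=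
        hψc.aemeasurable.congr hfae.symm
      have h2 : AEMeasurable (fun p : ℝ × ℝ => θ * f p + a' p.1 + b' p.2) usq :=
        (h1.add (aemeasurable_comp_fst ha'.aemeasurable)).add
          (aemeasurable_comp_snd hb'.aemeasurable)
      exact ENNReal.measurable_ofReal.comp_aemeasurable
        (Real.continuous_exp.measurable.comp_aemeasurable h2)
    have e1 := Measure.rnDeriv_withDensity₀ usq hD'm
    have e2 := Measure.rnDeriv_withDensity₀ usq hDm
    rw [← heq'] at e1
    rw [← hDstar] at e2
    have hDD : (fun p : ℝ × ℝ => ENNReal.ofReal (Real.exp (θ * f p + a' p.1 + b' p.2)))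
        =ᵐ[usq] (fun p => ENNReal.ofReal (Real.exp (θ * f p + a p.1 + b p.2))) :=
      e1.symm.trans e2
    filter_upwards [hDD] with p hp
    have := congrArg ENNReal.toReal hp
    rwa [ENNReal.toReal_ofReal (Real.exp_pos _).le,
      ENNReal.toReal_ofReal (Real.exp_pos _).le] at this
  · -- the supremum formula
    have hAB : (∫ x in Set.Icc (0:ℝ) 1, (a x + b x)) = A + B := by
      rw [show (∫ x in Set.Icc (0:ℝ) 1, (a x + b x)) = ∫ x, (a x + b x) ∂unif01 from rfl]
      rw [integral_add (integrable_unif01 hac) (integrable_unif01 hbc)]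
    rw [hAB]
    apply le_antisymm
    · exact iSup₂_le fun ν hν => (hkey hν).1
    · calc ((-(A + B) : ℝ) : EReal) = objE f θ (muG ψ a b) := hval.symm
        _ ≤ ⨆ μ ∈ MM, objE f θ μ := le_iSup₂ (f := fun μ _ => objE f θ μ) (muG ψ a b) hmemG
end
end

section
/- Let f : [0,1]² → ℝ be continuous, θ ∈ ℝ and k ∈ ℕ. Then the iterative proportional fitting iterates B_m converge entrywise as m → ∞ to a k×k matrix A_{k,θ} belonging to 𝓜_k. -/
open MeasureTheory Filter Topology
open scoped ENNReal

noncomputable section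

/-- `𝓜_k`: `k×k` matrices with nonnegative entries and all row and column sums `1/k`. -/
def Mk (k : ℕ) : Set (Matrix (Fin k) (Fin k) ℝ) :=
  {A | (∀ r s, 0 ≤ A r s) ∧ (∀ r, ∑ s, A r s = 1 / k) ∧ (∀ s, ∑ r, A r s = 1 / k)}

/-- The iterative proportional fitting iterates `B_m`, starting from
`B_0(r,s) = exp(θ f(r/k, s/k))`: odd steps normalize rows, even steps normalize columns. -/
def ipfp (f : ℝ × ℝ → ℝ) (θ : ℝ) (k : ℕ) : ℕ → Matrix (Fin k) (Fin k) ℝ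
  | 0 => Matrix.of fun r s => Real.exp (θ * f ((r.1 + 1 : ℝ) / k, (s.1 + 1 : ℝ) / k))
  | m + 1 =>
    if Even m then
      Matrix.of fun r s => ipfp f θ k m r s / (k * ∑ l, ipfp f θ k m r l)
    else
      Matrix.of fun r s => ipfp f θ k m r s / (k * ∑ l, ipfp f θ k m l s)

/-- The discrete objective `θ ∑ f(r/k,s/k) A(r,s) − 2 log k − ∑ A(r,s) log A(r,s)`
(with the convention `0 log 0 = 0`, which holds for `Real.log`). -/
def objk (f : ℝ × ℝ → ℝ) (θ : ℝ) (k : ℕ) (A : Matrix (Fin k) (Fin k) ℝ) : ℝ :=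
  θ * ∑ r, ∑ s, f ((r.1 + 1 : ℝ) / k, (s.1 + 1 : ℝ) / k) * A r s
    - 2 * Real.log k - ∑ r, ∑ s, A r s * Real.log (A r s)

/-- `W_k(f,θ)`, the supremum of the discrete objective over `𝓜_k`. -/
def Wk (f : ℝ × ℝ → ℝ) (k : ℕ) (θ : ℝ) : ℝ := sSup (objk f θ k '' Mk k)

namespace IPFPProof

open Finset

/-- The permanent of a square matrix. -/
def per {n : ℕ} (A : Matrix (Fin n) (Fin n) ℝ) : ℝ :=
  ∑ σ : Equiv.Perm (Fin n), ∏ i, A i (σ i)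

variable (f : ℝ × ℝ → ℝ) (θ : ℝ) (k : ℕ)

lemma ipfp_zero_pos (r s : Fin k) : 0 < ipfp f θ k 0 r s := Real.exp_pos _

lemma ipfp_succ_even {m : ℕ} (hm : Even m) (r s : Fin k) :
    ipfp f θ k (m + 1) r s = ipfp f θ k m r s / (k * ∑ l, ipfp f θ k m r l) := by
  simp [ipfp, hm]

lemma ipfp_succ_odd {m : ℕ} (hm : ¬ Even m) (r s : Fin k) :
    ipfp f θ k (m + 1) r s = ipfp f θ k m r s / (k * ∑ l, ipfp f θ k m l s) := by
  simp [ipfp, hm]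

lemma ipfp_pos (hk : 0 < k) : ∀ m (r s : Fin k), 0 < ipfp f θ k m r s := by
  haveI : Nonempty (Fin k) := Fin.pos_iff_nonempty.mp hk
  have hk0 : (0:ℝ) < k := by exact_mod_cast hk
  intro m
  induction m with
  | zero => intro r s; exact ipfp_zero_pos f θ k r s
  | succ m ih =>
    intro r s
    by_cases hm : Even m
    · rw [ipfp_succ_even f θ k hm]
      exact div_pos (ih r s)
        (mul_pos hk0 (Finset.sum_pos (fun l _ => ih r l) Finset.univ_nonempty))
    · rw [ipfp_succ_odd f θ k hm]
      exact div_pos (ih r s)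
        (mul_pos hk0 (Finset.sum_pos (fun l _ => ih l s) Finset.univ_nonempty))

lemma rowSum_succ (hk : 0 < k) {m : ℕ} (hm : Even m) (r : Fin k) :
    ∑ s, ipfp f θ k (m+1) r s = 1/(k:ℝ) := by
  haveI : Nonempty (Fin k) := Fin.pos_iff_nonempty.mp hk
  have hS : 0 < ∑ l, ipfp f θ k m r l :=
    Finset.sum_pos (fun l _ => ipfp_pos f θ k hk m r l) Finset.univ_nonempty
  simp only [ipfp_succ_even f θ k hm]
  rw [← Finset.sum_div, mul_comm, div_mul_eq_div_div, div_self hS.ne']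

lemma colSum_succ (hk : 0 < k) {m : ℕ} (hm : ¬ Even m) (s : Fin k) :
    ∑ r, ipfp f θ k (m+1) r s = 1/(k:ℝ) := by
  haveI : Nonempty (Fin k) := Fin.pos_iff_nonempty.mp hk
  have hS : 0 < ∑ l, ipfp f θ k m l s :=
    Finset.sum_pos (fun l _ => ipfp_pos f θ k hk m l s) Finset.univ_nonempty
  simp only [ipfp_succ_odd f θ k hm]
  rw [← Finset.sum_div, mul_comm, div_mul_eq_div_div, div_self hS.ne']

lemma total_sum (hk : 0 < k) (m : ℕ) :
    ∑ r, ∑ s, ipfp f θ k (m+1) r s = 1 := by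
  have hk0 : (0:ℝ) < k := by exact_mod_cast hk
  by_cases hm : Even m
  · calc ∑ r, ∑ s, ipfp f θ k (m+1) r s = ∑ _r : Fin k, (1/(k:ℝ)) :=
        Finset.sum_congr rfl fun r _ => rowSum_succ f θ k hk hm r
      _ = 1 := by
        rw [Finset.sum_const, Finset.card_univ, Fintype.card_fin, nsmul_eq_mul]
        field_simp
  · rw [show (∑ r, ∑ s, ipfp f θ k (m+1) r s) = ∑ s, ∑ r, ipfp f θ k (m+1) r s from Finset.sum_comm]
    calc ∑ s, ∑ r, ipfp f θ k (m+1) r s = ∑ _s : Fin k, (1/(k:ℝ)) :=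
        Finset.sum_congr rfl fun s _ => colSum_succ f θ k hk hm s
      _ = 1 := by
        rw [Finset.sum_const, Finset.card_univ, Fintype.card_fin, nsmul_eq_mul]
        field_simp

lemma entry_le (hk : 0 < k) (m : ℕ) (r s : Fin k) :
    ipfp f θ k (m+1) r s ≤ 1/(k:ℝ) := by
  by_cases hm : Even m
  · calc ipfp f θ k (m+1) r s ≤ ∑ l, ipfp f θ k (m+1) r l :=
        Finset.single_le_sum (fun l _ => (ipfp_pos f θ k hk _ r l).le) (Finset.mem_univ s)
      _ = 1/(k:ℝ) := rowSum_succ f θ k hk hm r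
  · calc ipfp f θ k (m+1) r s ≤ ∑ l, ipfp f θ k (m+1) l s :=
        Finset.single_le_sum (fun l _ => (ipfp_pos f θ k hk _ l s).le) (Finset.mem_univ r)
      _ = 1/(k:ℝ) := colSum_succ f θ k hk hm s

/-- The cross-ratio identity: preserved by both normalization steps. -/
lemma cross : ∀ (m : ℕ) (r r' s s' : Fin k),
    ipfp f θ k m r s * ipfp f θ k m r' s' * ipfp f θ k 0 r s' * ipfp f θ k 0 r' s
      = ipfp f θ k m r s' * ipfp f θ k m r' s * ipfp f θ k 0 r s * ipfp f θ k 0 r' s' := by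
  intro m
  induction m with
  | zero => intro r r' s s'; ring
  | succ m ih =>
    intro r r' s s'
    by_cases hm : Even m
    · rw [ipfp_succ_even f θ k hm r s, ipfp_succ_even f θ k hm r' s',
        ipfp_succ_even f θ k hm r s', ipfp_succ_even f θ k hm r' s]
      calc ipfp f θ k m r s / (k * ∑ l, ipfp f θ k m r l)
            * (ipfp f θ k m r' s' / (k * ∑ l, ipfp f θ k m r' l))
            * ipfp f θ k 0 r s' * ipfp f θ k 0 r' s
          = (ipfp f θ k m r s * ipfp f θ k m r' s' * ipfp f θ k 0 r s' * ipfp f θ k 0 r' s)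
            / ((k * ∑ l, ipfp f θ k m r l) * (k * ∑ l, ipfp f θ k m r' l)) := by ring
        _ = (ipfp f θ k m r s' * ipfp f θ k m r' s * ipfp f θ k 0 r s * ipfp f θ k 0 r' s')
            / ((k * ∑ l, ipfp f θ k m r l) * (k * ∑ l, ipfp f θ k m r' l)) := by rw [ih]
        _ = ipfp f θ k m r s' / (k * ∑ l, ipfp f θ k m r l)
            * (ipfp f θ k m r' s / (k * ∑ l, ipfp f θ k m r' l))
            * ipfp f θ k 0 r s * ipfp f θ k 0 r' s' := by ring
    · rw [ipfp_succ_odd f θ k hm r s, ipfp_succ_odd f θ k hm r' s',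
        ipfp_succ_odd f θ k hm r s', ipfp_succ_odd f θ k hm r' s]
      calc ipfp f θ k m r s / (k * ∑ l, ipfp f θ k m l s)
            * (ipfp f θ k m r' s' / (k * ∑ l, ipfp f θ k m l s'))
            * ipfp f θ k 0 r s' * ipfp f θ k 0 r' s
          = (ipfp f θ k m r s * ipfp f θ k m r' s' * ipfp f θ k 0 r s' * ipfp f θ k 0 r' s)
            / ((k * ∑ l, ipfp f θ k m l s) * (k * ∑ l, ipfp f θ k m l s')) := by ring
        _ = (ipfp f θ k m r s' * ipfp f θ k m r' s * ipfp f θ k 0 r s * ipfp f θ k 0 r' s')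
            / ((k * ∑ l, ipfp f θ k m l s) * (k * ∑ l, ipfp f θ k m l s')) := by rw [ih]
        _ = ipfp f θ k m r s' / (k * ∑ l, ipfp f θ k m l s')
            * (ipfp f θ k m r' s / (k * ∑ l, ipfp f θ k m l s))
            * ipfp f θ k 0 r s * ipfp f θ k 0 r' s' := by ring

end IPFPProof
namespace IPFPProof

open Finset

variable (f : ℝ × ℝ → ℝ) (θ : ℝ) (k : ℕ)

/-- The normalizing factors used at step `m`. -/
def nrm (f : ℝ × ℝ → ℝ) (θ : ℝ) (k : ℕ) (m : ℕ) (i : Fin k) : ℝ :=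
  if Even m then (k : ℝ) * ∑ l, ipfp f θ k m i l else (k : ℝ) * ∑ l, ipfp f θ k m l i

lemma nrm_pos (hk : 0 < k) (m : ℕ) (i : Fin k) : 0 < nrm f θ k m i := by
  haveI : Nonempty (Fin k) := Fin.pos_iff_nonempty.mp hk
  have hk0 : (0:ℝ) < k := by exact_mod_cast hk
  unfold nrm
  split
  · exact mul_pos hk0 (Finset.sum_pos (fun l _ => ipfp_pos f θ k hk m i l) Finset.univ_nonempty)
  · exact mul_pos hk0 (Finset.sum_pos (fun l _ => ipfp_pos f θ k hk m l i) Finset.univ_nonempty)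

lemma nrm_sum (hk : 0 < k) (m : ℕ) : ∑ i, nrm f θ k (m+1) i = (k:ℝ) := by
  unfold nrm
  by_cases hm : Even (m+1)
  · simp only [if_pos hm]
    rw [← Finset.mul_sum, total_sum f θ k hk m, mul_one]
  · simp only [if_neg hm]
    rw [← Finset.mul_sum, Finset.sum_comm, total_sum f θ k hk m, mul_one]

lemma nrm_le (hk : 0 < k) (m : ℕ) (i : Fin k) : nrm f θ k (m+1) i ≤ (k:ℝ) := by
  have hk0 : (0:ℝ) < k := by exact_mod_cast hk
  have htot := total_sum f θ k hk m
  unfold nrm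
  by_cases hm : Even (m+1)
  · rw [if_pos hm]
    have h1 : ∑ l, ipfp f θ k (m+1) i l ≤ 1 := by
      rw [← htot]
      exact Finset.single_le_sum
        (f := fun r => ∑ l, ipfp f θ k (m+1) r l)
        (fun r _ => Finset.sum_nonneg fun l _ => (ipfp_pos f θ k hk _ r l).le)
        (Finset.mem_univ i)
    nlinarith
  · rw [if_neg hm]
    have h1 : ∑ l, ipfp f θ k (m+1) l i ≤ 1 := by
      rw [← htot, show (∑ r, ∑ s, ipfp f θ k (m+1) r s) = ∑ s, ∑ r, ipfp f θ k (m+1) r s from Finset.sum_comm]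
      exact Finset.single_le_sum
        (f := fun s => ∑ l, ipfp f θ k (m+1) l s)
        (fun s _ => Finset.sum_nonneg fun l _ => (ipfp_pos f θ k hk _ l s).le)
        (Finset.mem_univ i)
    nlinarith

lemma per_pos {n : ℕ} (A : Matrix (Fin n) (Fin n) ℝ) (h : ∀ r s, 0 < A r s) :
    0 < per A := by
  haveI : Nonempty (Equiv.Perm (Fin n)) := ⟨1⟩
  exact Finset.sum_pos (fun σ _ => Finset.prod_pos fun i _ => h i (σ i)) Finset.univ_nonempty

lemma per_le (hk : 0 < k) (m : ℕ) :
    per (ipfp f θ k (m+1)) ≤ (Fintype.card (Equiv.Perm (Fin k)) : ℝ) * (1/(k:ℝ))^k := by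
  unfold per
  have h1 : ∀ σ : Equiv.Perm (Fin k), ∏ i, ipfp f θ k (m+1) i (σ i) ≤ (1/(k:ℝ))^k := by
    intro σ
    calc ∏ i, ipfp f θ k (m+1) i (σ i) ≤ ∏ _i : Fin k, (1/(k:ℝ)) :=
        Finset.prod_le_prod (fun i _ => (ipfp_pos f θ k hk _ _ _).le)
          (fun i _ => entry_le f θ k hk m i (σ i))
      _ = (1/(k:ℝ))^k := by rw [Finset.prod_const, Finset.card_univ, Fintype.card_fin]
  calc ∑ σ : Equiv.Perm (Fin k), ∏ i, ipfp f θ k (m+1) i (σ i)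
      ≤ ∑ _σ : Equiv.Perm (Fin k), (1/(k:ℝ))^k := Finset.sum_le_sum fun σ _ => h1 σ
    _ = _ := by rw [Finset.sum_const, Finset.card_univ, nsmul_eq_mul]

lemma per_rec (m : ℕ) :
    per (ipfp f θ k (m+1)) = per (ipfp f θ k m) / ∏ i, nrm f θ k m i := by
  by_cases hm : Even m
  · simp only [per, ipfp_succ_even f θ k hm, nrm, if_pos hm]
    rw [Finset.sum_div]
    refine Finset.sum_congr rfl fun σ _ => ?_
    rw [Finset.prod_div_distrib]
  · simp only [per, ipfp_succ_odd f θ k hm, nrm, if_neg hm]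
    rw [Finset.sum_div]
    refine Finset.sum_congr rfl fun σ _ => ?_
    rw [Finset.prod_div_distrib,
      Equiv.prod_comp σ (fun j => (k:ℝ) * ∑ l, ipfp f θ k m l j)]

lemma prod_le_one_of_sum {n : ℕ} (a : Fin n → ℝ) (ha : ∀ i, 0 < a i)
    (hs : ∑ i, a i = (n:ℝ)) : ∏ i, a i ≤ 1 := by
  have hp : 0 < ∏ i, a i := Finset.prod_pos fun i _ => ha i
  have h1 : Real.log (∏ i, a i) = ∑ i, Real.log (a i) :=
    Real.log_prod fun i _ => (ha i).ne'
  have h2 : ∑ i, Real.log (a i) ≤ ∑ i, (a i - 1) :=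
    Finset.sum_le_sum fun i _ => Real.log_le_sub_one_of_pos (ha i)
  have h3 : ∑ i, (a i - 1) = 0 := by
    rw [Finset.sum_sub_distrib, hs]; simp
  calc ∏ i, a i = Real.exp (Real.log (∏ i, a i)) := (Real.exp_log hp).symm
    _ ≤ Real.exp 0 := Real.exp_le_exp.2 (by rw [h1]; linarith)
    _ = 1 := Real.exp_zero

lemma eq_one_of_prod {n : ℕ} (a : Fin n → ℝ) (ha : ∀ i, 0 ≤ a i)
    (hs : ∑ i, a i = (n:ℝ)) (hp : ∏ i, a i = 1) : ∀ i, a i = 1 := by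
  have hpos : ∀ i, 0 < a i := by
    intro i
    rcases (ha i).lt_or_eq with h | h
    · exact h
    · exfalso
      have h0 : ∏ j, a j = 0 := Finset.prod_eq_zero (Finset.mem_univ i) h.symm
      rw [hp] at h0; norm_num at h0
  by_contra hcon
  push_neg at hcon
  obtain ⟨j, hj⟩ := hcon
  have h2 : ∑ i, Real.log (a i) < ∑ i, (a i - 1) :=
    Finset.sum_lt_sum (fun i _ => Real.log_le_sub_one_of_pos (hpos i))
      ⟨j, Finset.mem_univ j, Real.log_lt_sub_one_of_pos (hpos j) hj⟩
  have h1 : ∑ i, Real.log (a i) = 0 := by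
    rw [← Real.log_prod fun i _ => (hpos i).ne', hp, Real.log_one]
  have h3 : ∑ i, (a i - 1) = 0 := by
    rw [Finset.sum_sub_distrib, hs]; simp
  linarith

end IPFPProof
namespace IPFPProof

open Finset Filter Topology

lemma tendsto_one_of_prod {k : ℕ} (hk : 0 < k) (a : ℕ → Fin k → ℝ)
    (h0 : ∀ m i, 0 ≤ a m i) (hub : ∀ m i, a m i ≤ (k:ℝ))
    (hsum : ∀ m, ∑ i, a m i = (k:ℝ))
    (hprod : Tendsto (fun m => ∏ i, a m i) atTop (𝓝 1)) :
    Tendsto a atTop (𝓝 (fun _ => 1)) := by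
  haveI : Nonempty (Fin k) := Fin.pos_iff_nonempty.mp hk
  apply tendsto_of_subseq_tendsto
  intro ns hns
  obtain ⟨b, hbmem, ψ, hψ, hlim⟩ :=
    (isCompact_Icc (a := (0 : Fin k → ℝ)) (b := fun _ => (k:ℝ))).tendsto_subseq
      (x := fun m => a (ns m))
      (fun m => Set.mem_Icc.2 ⟨fun i => h0 _ i, fun i => hub _ i⟩)
  refine ⟨ψ, ?_⟩
  have hco : ∀ i, Tendsto (fun n => a (ns (ψ n)) i) atTop (𝓝 (b i)) :=
    fun i => tendsto_pi_nhds.1 hlim i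
  have hsb : ∑ i, b i = (k:ℝ) := by
    have h1 : Tendsto (fun n => ∑ i, a (ns (ψ n)) i) atTop (𝓝 (∑ i, b i)) :=
      tendsto_finset_sum _ (fun i _ => hco i)
    have h2 : Tendsto (fun n => ∑ i, a (ns (ψ n)) i) atTop (𝓝 (k:ℝ)) := by
      simp only [hsum]; exact tendsto_const_nhds
    exact tendsto_nhds_unique h1 h2
  have hpb : ∏ i, b i = 1 := by
    have h1 : Tendsto (fun n => ∏ i, a (ns (ψ n)) i) atTop (𝓝 (∏ i, b i)) :=
      tendsto_finset_prod _ (fun i _ => hco i)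
    have h2 : Tendsto (fun n => ∏ i, a (ns (ψ n)) i) atTop (𝓝 1) :=
      hprod.comp (hns.comp hψ.tendsto_atTop)
    exact tendsto_nhds_unique h1 h2
  have hb0 : ∀ i, 0 ≤ b i := fun i => (Set.mem_Icc.1 hbmem).1 i
  have hb1 : b = fun _ => (1:ℝ) := funext (eq_one_of_prod b hb0 hsb hpb)
  rw [hb1] at hlim
  exact hlim

variable (f : ℝ × ℝ → ℝ) (θ : ℝ) (k : ℕ)

lemma tendsto_nrm_one (hk : 0 < k) (i : Fin k) :
    Tendsto (fun m => nrm f θ k m i) atTop (𝓝 1) := by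
  haveI : Nonempty (Fin k) := Fin.pos_iff_nonempty.mp hk
  set q : ℕ → ℝ := fun m => per (ipfp f θ k (m+1)) with hqdef
  have hqpos : ∀ m, 0 < q m := fun m =>
    per_pos _ (fun r s => ipfp_pos f θ k hk (m+1) r s)
  have hPPos : ∀ m, 0 < ∏ j, nrm f θ k m j :=
    fun m => Finset.prod_pos fun j _ => nrm_pos f θ k hk m j
  have hPLe : ∀ m, ∏ j, nrm f θ k (m+1) j ≤ 1 := fun m =>
    prod_le_one_of_sum _ (fun j => nrm_pos f θ k hk (m+1) j) (nrm_sum f θ k hk m)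
  have hrec : ∀ m, q (m+1) = q m / ∏ j, nrm f θ k (m+1) j := fun m =>
    per_rec f θ k (m+1)
  have hmono : Monotone q := by
    apply monotone_nat_of_le_succ
    intro m
    rw [hrec m, le_div_iff₀ (hPPos (m+1))]
    exact mul_le_of_le_one_right (hqpos m).le (hPLe m)
  have hbdd : BddAbove (Set.range q) := by
    refine ⟨(Fintype.card (Equiv.Perm (Fin k)) : ℝ) * (1/(k:ℝ))^k, ?_⟩
    rintro x ⟨m, rfl⟩
    exact per_le f θ k hk m
  have hqlim : Tendsto q atTop (𝓝 (⨆ m, q m)) := tendsto_atTop_ciSup hmono hbdd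
  have hLpos : 0 < ⨆ m, q m := lt_of_lt_of_le (hqpos 0) (le_ciSup hbdd 0)
  have hPEq : ∀ m, ∏ j, nrm f θ k (m+1) j = q m / q (m+1) := by
    intro m
    have h2 : q (m+1) * ∏ j, nrm f θ k (m+1) j = q m := by
      rw [hrec m]; exact div_mul_cancel₀ _ (hPPos (m+1)).ne'
    rw [eq_div_iff (hqpos (m+1)).ne', mul_comm]
    exact h2
  have hPLim : Tendsto (fun m => ∏ j, nrm f θ k (m+1) j) atTop (𝓝 1) := by
    have h2 : Tendsto (fun m => q (m+1)) atTop (𝓝 (⨆ m, q m)) :=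
      (tendsto_add_atTop_iff_nat 1).2 hqlim
    have h3 := hqlim.div h2 hLpos.ne'
    rw [div_self hLpos.ne'] at h3
    exact h3.congr fun m => (hPEq m).symm
  have key := tendsto_one_of_prod hk (fun m => nrm f θ k (m+1))
    (fun m j => (nrm_pos f θ k hk (m+1) j).le)
    (fun m j => nrm_le f θ k hk m j)
    (fun m => nrm_sum f θ k hk m) hPLim
  have h4 := tendsto_pi_nhds.1 key i
  exact (tendsto_add_atTop_iff_nat 1).1 h4

lemma tendsto_rowSum (hk : 0 < k) (r : Fin k) :
    Tendsto (fun m => ∑ l, ipfp f θ k m r l) atTop (𝓝 (1/(k:ℝ))) := by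
  have hk0 : (0:ℝ) < k := by exact_mod_cast hk
  have h1 : Tendsto (fun m => nrm f θ k (m+1) r) atTop (𝓝 1) :=
    (tendsto_add_atTop_iff_nat 1).2 (tendsto_nrm_one f θ k hk r)
  have hg : Tendsto (fun m => |nrm f θ k (m+1) r - 1| * (1/(k:ℝ))) atTop (𝓝 0) := by
    have h2 := ((h1.sub_const 1).abs).mul_const (1/(k:ℝ))
    simpa using h2
  have key : ∀ m, |(∑ l, ipfp f θ k (m+1) r l) - 1/(k:ℝ)|
      ≤ |nrm f θ k (m+1) r - 1| * (1/(k:ℝ)) := by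
    intro m
    by_cases hm : Even m
    · rw [rowSum_succ f θ k hk hm r]
      simpa using mul_nonneg (abs_nonneg _) (by positivity : (0:ℝ) ≤ 1/(k:ℝ))
    · have he : Even (m+1) := Nat.even_add_one.mpr hm
      have heq : (∑ l, ipfp f θ k (m+1) r l) - 1/(k:ℝ)
          = (nrm f θ k (m+1) r - 1) * (1/(k:ℝ)) := by
        simp only [nrm, if_pos he]
        field_simp
      rw [heq, abs_mul, abs_of_pos (show (0:ℝ) < 1/(k:ℝ) by positivity)]
  have h0 : Tendsto (fun m => (∑ l, ipfp f θ k (m+1) r l) - 1/(k:ℝ)) atTop (𝓝 0) :=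
    squeeze_zero_norm (fun n => le_trans (le_of_eq (Real.norm_eq_abs _)) (key n)) hg
  have h2 := tendsto_sub_nhds_zero_iff.1 h0
  exact (tendsto_add_atTop_iff_nat 1).1 h2

lemma tendsto_colSum (hk : 0 < k) (s : Fin k) :
    Tendsto (fun m => ∑ l, ipfp f θ k m l s) atTop (𝓝 (1/(k:ℝ))) := by
  have hk0 : (0:ℝ) < k := by exact_mod_cast hk
  have h1 : Tendsto (fun m => nrm f θ k (m+1) s) atTop (𝓝 1) :=
    (tendsto_add_atTop_iff_nat 1).2 (tendsto_nrm_one f θ k hk s)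
  have hg : Tendsto (fun m => |nrm f θ k (m+1) s - 1| * (1/(k:ℝ))) atTop (𝓝 0) := by
    have h2 := ((h1.sub_const 1).abs).mul_const (1/(k:ℝ))
    simpa using h2
  have key : ∀ m, |(∑ l, ipfp f θ k (m+1) l s) - 1/(k:ℝ)|
      ≤ |nrm f θ k (m+1) s - 1| * (1/(k:ℝ)) := by
    intro m
    by_cases hm : Even m
    · have he : ¬ Even (m+1) := by simp [Nat.even_add_one, hm]
      have heq : (∑ l, ipfp f θ k (m+1) l s) - 1/(k:ℝ)
          = (nrm f θ k (m+1) s - 1) * (1/(k:ℝ)) := by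
        simp only [nrm, if_neg he]
        field_simp
      rw [heq, abs_mul, abs_of_pos (show (0:ℝ) < 1/(k:ℝ) by positivity)]
    · rw [colSum_succ f θ k hk hm s]
      simpa using mul_nonneg (abs_nonneg _) (by positivity : (0:ℝ) ≤ 1/(k:ℝ))
  have h0 : Tendsto (fun m => (∑ l, ipfp f θ k (m+1) l s) - 1/(k:ℝ)) atTop (𝓝 0) :=
    squeeze_zero_norm (fun n => le_trans (le_of_eq (Real.norm_eq_abs _)) (key n)) hg
  have h2 := tendsto_sub_nhds_zero_iff.1 h0
  exact (tendsto_add_atTop_iff_nat 1).1 h2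

end IPFPProof
namespace IPFPProof

open Finset Filter Topology

variable (f : ℝ × ℝ → ℝ) (θ : ℝ) (k : ℕ)

lemma cross_ineq (hk : 0 < k) {μ M : ℝ} (hμ0 : 0 < μ)
    (hμ : ∀ r s, μ ≤ ipfp f θ k 0 r s) (hM : ∀ r s, ipfp f θ k 0 r s ≤ M)
    (m : ℕ) (r r' s s' : Fin k) :
    ipfp f θ k m r s * ipfp f θ k m r' s' * μ^2
      ≤ ipfp f θ k m r s' * ipfp f θ k m r' s * M^2 := by
  have hpos := ipfp_pos f θ k hk
  calc ipfp f θ k m r s * ipfp f θ k m r' s' * μ^2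
      ≤ ipfp f θ k m r s * ipfp f θ k m r' s' * (ipfp f θ k 0 r s' * ipfp f θ k 0 r' s) := by
        apply mul_le_mul_of_nonneg_left _ (mul_pos (hpos m r s) (hpos m r' s')).le
        rw [pow_two]
        exact mul_le_mul (hμ r s') (hμ r' s) hμ0.le (hpos 0 r s').le
    _ = ipfp f θ k m r s' * ipfp f θ k m r' s * (ipfp f θ k 0 r s * ipfp f θ k 0 r' s') := by
        linear_combination cross f θ k m r r' s s'
    _ ≤ ipfp f θ k m r s' * ipfp f θ k m r' s * M^2 := by
        apply mul_le_mul_of_nonneg_left _ (mul_pos (hpos m r s') (hpos m r' s)).le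
        rw [pow_two]
        exact mul_le_mul (hM r s) (hM r' s') (hpos 0 r' s').le
          ((hpos 0 r s).le.trans (hM r s))

lemma col_ratio (hk : 0 < k) {μ M : ℝ} (hμ0 : 0 < μ)
    (hμ : ∀ r s, μ ≤ ipfp f θ k 0 r s) (hM : ∀ r s, ipfp f θ k 0 r s ≤ M)
    {m : ℕ} (hm : Even m) (r r' s : Fin k) :
    ipfp f θ k (m+1) r s * μ^2 ≤ ipfp f θ k (m+1) r' s * M^2 := by
  have hk' : (0:ℝ) < 1/(k:ℝ) := by
    have : (0:ℝ) < k := by exact_mod_cast hk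
    positivity
  have hsum := Finset.sum_le_sum
    (fun s' _ => cross_ineq f θ k hk hμ0 hμ hM (m+1) r r' s s')
    (s := (Finset.univ : Finset (Fin k)))
  have hL : ∑ s', ipfp f θ k (m+1) r s * ipfp f θ k (m+1) r' s' * μ^2
      = (ipfp f θ k (m+1) r s * μ^2) * ∑ s', ipfp f θ k (m+1) r' s' := by
    rw [Finset.mul_sum]
    exact Finset.sum_congr rfl fun s' _ => by ring
  have hR : ∑ s', ipfp f θ k (m+1) r s' * ipfp f θ k (m+1) r' s * M^2
      = (ipfp f θ k (m+1) r' s * M^2) * ∑ s', ipfp f θ k (m+1) r s' := by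
    rw [Finset.mul_sum]
    exact Finset.sum_congr rfl fun s' _ => by ring
  rw [hL, hR, rowSum_succ f θ k hk hm r, rowSum_succ f θ k hk hm r'] at hsum
  exact le_of_mul_le_mul_right hsum hk'

lemma row_ratio (hk : 0 < k) {μ M : ℝ} (hμ0 : 0 < μ)
    (hμ : ∀ r s, μ ≤ ipfp f θ k 0 r s) (hM : ∀ r s, ipfp f θ k 0 r s ≤ M)
    {m : ℕ} (hm : ¬ Even m) (r s s' : Fin k) :
    ipfp f θ k (m+1) r s * μ^2 ≤ ipfp f θ k (m+1) r s' * M^2 := by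
  have hk' : (0:ℝ) < 1/(k:ℝ) := by
    have : (0:ℝ) < k := by exact_mod_cast hk
    positivity
  have hsum := Finset.sum_le_sum
    (fun r' _ => cross_ineq f θ k hk hμ0 hμ hM (m+1) r r' s s')
    (s := (Finset.univ : Finset (Fin k)))
  have hL : ∑ r', ipfp f θ k (m+1) r s * ipfp f θ k (m+1) r' s' * μ^2
      = (ipfp f θ k (m+1) r s * μ^2) * ∑ r', ipfp f θ k (m+1) r' s' := by
    rw [Finset.mul_sum]
    exact Finset.sum_congr rfl fun r' _ => by ring
  have hR : ∑ r', ipfp f θ k (m+1) r s' * ipfp f θ k (m+1) r' s * M^2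
      = (ipfp f θ k (m+1) r s' * M^2) * ∑ r', ipfp f θ k (m+1) r' s := by
    rw [Finset.mul_sum]
    exact Finset.sum_congr rfl fun r' _ => by ring
  rw [hL, hR, colSum_succ f θ k hk hm s, colSum_succ f θ k hk hm s'] at hsum
  exact le_of_mul_le_mul_right hsum hk'

lemma entry_bounds (hk : 0 < k) {μ M : ℝ} (hμ0 : 0 < μ)
    (hμ : ∀ r s, μ ≤ ipfp f θ k 0 r s) (hM : ∀ r s, ipfp f θ k 0 r s ≤ M)
    (m : ℕ) (r s : Fin k) :
    μ^2/(M^2*(k:ℝ)^2) ≤ ipfp f θ k (m+2) r s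
      ∧ ipfp f θ k (m+2) r s ≤ M^2/(μ^2*(k:ℝ)^2) := by
  haveI : Nonempty (Fin k) := Fin.pos_iff_nonempty.mp hk
  have hpos := ipfp_pos f θ k hk
  have hM0 : 0 < M := lt_of_lt_of_le hμ0
    ((hμ (Classical.arbitrary _) (Classical.arbitrary _)).trans (hM _ _))
  have hk0 : (0:ℝ) < k := by exact_mod_cast hk
  by_cases hm : Even m
  · -- m+1 is odd: step m+1 → m+2 is a column normalization
    have hm1 : ¬ Even (m+1) := by simp [Nat.even_add_one, hm]
    have hstep : ipfp f θ k (m+2) r s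
        = ipfp f θ k (m+1) r s / ((k:ℝ) * ∑ l, ipfp f θ k (m+1) l s) :=
      ipfp_succ_odd f θ k hm1 r s
    set T := ∑ l, ipfp f θ k (m+1) l s with hT
    set e := ipfp f θ k (m+1) r s with he
    have hepos : 0 < e := hpos _ _ _
    have hTpos : 0 < T :=
      Finset.sum_pos (fun l _ => hpos _ _ _) Finset.univ_nonempty
    have hub : (k:ℝ) * (e * μ^2) ≤ T * M^2 := by
      calc (k:ℝ) * (e * μ^2) = ∑ _l : Fin k, e * μ^2 := by
            rw [Finset.sum_const, Finset.card_univ, Fintype.card_fin, nsmul_eq_mul]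
        _ ≤ ∑ l, ipfp f θ k (m+1) l s * M^2 :=
            Finset.sum_le_sum fun l _ => col_ratio f θ k hk hμ0 hμ hM hm r l s
        _ = T * M^2 := by rw [← Finset.sum_mul]
    have hlb : T * μ^2 ≤ (k:ℝ) * (e * M^2) := by
      calc T * μ^2 = ∑ l, ipfp f θ k (m+1) l s * μ^2 := by rw [← Finset.sum_mul]
        _ ≤ ∑ _l : Fin k, e * M^2 :=
            Finset.sum_le_sum fun l _ => col_ratio f θ k hk hμ0 hμ hM hm l r s
        _ = (k:ℝ) * (e * M^2) := by
            rw [Finset.sum_const, Finset.card_univ, Fintype.card_fin, nsmul_eq_mul]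
    rw [hstep]
    constructor
    · rw [div_le_div_iff₀ (by positivity) (by positivity)]
      nlinarith [mul_le_mul_of_nonneg_left hlb hk0.le]
    · rw [div_le_div_iff₀ (by positivity) (by positivity)]
      nlinarith [mul_le_mul_of_nonneg_left hub hk0.le]
  · -- m+1 is even: step m+1 → m+2 is a row normalization
    have hm1 : Even (m+1) := Nat.even_add_one.mpr hm
    have hstep : ipfp f θ k (m+2) r s
        = ipfp f θ k (m+1) r s / ((k:ℝ) * ∑ l, ipfp f θ k (m+1) r l) :=
      ipfp_succ_even f θ k hm1 r s
    set T := ∑ l, ipfp f θ k (m+1) r l with hT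
    set e := ipfp f θ k (m+1) r s with he
    have hepos : 0 < e := hpos _ _ _
    have hTpos : 0 < T :=
      Finset.sum_pos (fun l _ => hpos _ _ _) Finset.univ_nonempty
    have hub : (k:ℝ) * (e * μ^2) ≤ T * M^2 := by
      calc (k:ℝ) * (e * μ^2) = ∑ _l : Fin k, e * μ^2 := by
            rw [Finset.sum_const, Finset.card_univ, Fintype.card_fin, nsmul_eq_mul]
        _ ≤ ∑ l, ipfp f θ k (m+1) r l * M^2 :=
            Finset.sum_le_sum fun l _ => row_ratio f θ k hk hμ0 hμ hM hm r s l
        _ = T * M^2 := by rw [← Finset.sum_mul]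
    have hlb : T * μ^2 ≤ (k:ℝ) * (e * M^2) := by
      calc T * μ^2 = ∑ l, ipfp f θ k (m+1) r l * μ^2 := by rw [← Finset.sum_mul]
        _ ≤ ∑ _l : Fin k, e * M^2 :=
            Finset.sum_le_sum fun l _ => row_ratio f θ k hk hμ0 hμ hM hm r l s
        _ = (k:ℝ) * (e * M^2) := by
            rw [Finset.sum_const, Finset.card_univ, Fintype.card_fin, nsmul_eq_mul]
    rw [hstep]
    constructor
    · rw [div_le_div_iff₀ (by positivity) (by positivity)]
      nlinarith [mul_le_mul_of_nonneg_left hlb hk0.le]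
    · rw [div_le_div_iff₀ (by positivity) (by positivity)]
      nlinarith [mul_le_mul_of_nonneg_left hub hk0.le]

end IPFPProof
namespace IPFPProof

open Finset Filter Topology

variable (f : ℝ × ℝ → ℝ) (θ : ℝ) (k : ℕ)

lemma limit_props (hk : 0 < k) {γ : ℝ}
    (hlb : ∀ m, 2 ≤ m → ∀ r s, γ ≤ ipfp f θ k m r s)
    (n : ℕ → ℕ) (hn : Tendsto n atTop atTop) (h2 : ∀ j, 2 ≤ n j)
    (A : Fin k → Fin k → ℝ)
    (hA : Tendsto (fun j => (fun r s => ipfp f θ k (n j) r s)) atTop (𝓝 A)) :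
    (∀ r s, γ ≤ A r s) ∧ (∀ r, ∑ s, A r s = 1/(k:ℝ)) ∧ (∀ s, ∑ r, A r s = 1/(k:ℝ)) ∧
      (∀ r r' s s', A r s * A r' s' * ipfp f θ k 0 r s' * ipfp f θ k 0 r' s
        = A r s' * A r' s * ipfp f θ k 0 r s * ipfp f θ k 0 r' s') := by
  have hent : ∀ r s, Tendsto (fun j => ipfp f θ k (n j) r s) atTop (𝓝 (A r s)) := by
    intro r s
    exact tendsto_pi_nhds.1 (tendsto_pi_nhds.1 hA r) s
  refine ⟨?_, ?_, ?_, ?_⟩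
  · intro r s
    exact ge_of_tendsto (hent r s) (Eventually.of_forall fun j => hlb (n j) (h2 j) r s)
  · intro r
    have h1 : Tendsto (fun j => ∑ l, ipfp f θ k (n j) r l) atTop (𝓝 (∑ s, A r s)) :=
      tendsto_finset_sum _ (fun l _ => hent r l)
    have h3 : Tendsto (fun j => ∑ l, ipfp f θ k (n j) r l) atTop (𝓝 (1/(k:ℝ))) :=
      (tendsto_rowSum f θ k hk r).comp hn
    exact tendsto_nhds_unique h1 h3
  · intro s
    have h1 : Tendsto (fun j => ∑ l, ipfp f θ k (n j) l s) atTop (𝓝 (∑ r, A r s)) :=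
      tendsto_finset_sum _ (fun l _ => hent l s)
    have h3 : Tendsto (fun j => ∑ l, ipfp f θ k (n j) l s) atTop (𝓝 (1/(k:ℝ))) :=
      (tendsto_colSum f θ k hk s).comp hn
    exact tendsto_nhds_unique h1 h3
  · intro r r' s s'
    have h1 : Tendsto (fun j => ipfp f θ k (n j) r s * ipfp f θ k (n j) r' s'
        * ipfp f θ k 0 r s' * ipfp f θ k 0 r' s) atTop
        (𝓝 (A r s * A r' s' * ipfp f θ k 0 r s' * ipfp f θ k 0 r' s)) :=
      (((hent r s).mul (hent r' s')).mul_const _).mul_const _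
    have h3 : Tendsto (fun j => ipfp f θ k (n j) r s' * ipfp f θ k (n j) r' s
        * ipfp f θ k 0 r s * ipfp f θ k 0 r' s') atTop
        (𝓝 (A r s' * A r' s * ipfp f θ k 0 r s * ipfp f θ k 0 r' s')) :=
      (((hent r s').mul (hent r' s)).mul_const _).mul_const _
    have h4 : Tendsto (fun j => ipfp f θ k (n j) r s' * ipfp f θ k (n j) r' s
        * ipfp f θ k 0 r s * ipfp f θ k 0 r' s') atTop
        (𝓝 (A r s * A r' s' * ipfp f θ k 0 r s' * ipfp f θ k 0 r' s)) :=
      h1.congr fun j => cross f θ k (n j) r r' s s'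
    exact tendsto_nhds_unique h4 h3

lemma eq_of_limits {k : ℕ} (hk : 0 < k) (B0 A A' : Fin k → Fin k → ℝ)
    (hB0 : ∀ r s, 0 < B0 r s)
    (hpos : ∀ r s, 0 < A r s) (hpos' : ∀ r s, 0 < A' r s)
    (hrow : ∀ r, ∑ s, A r s = 1/(k:ℝ)) (hcol : ∀ s, ∑ r, A r s = 1/(k:ℝ))
    (hrow' : ∀ r, ∑ s, A' r s = 1/(k:ℝ)) (hcol' : ∀ s, ∑ r, A' r s = 1/(k:ℝ))
    (hCR : ∀ r r' s s', A r s * A r' s' * B0 r s' * B0 r' s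
      = A r s' * A r' s * B0 r s * B0 r' s')
    (hCR' : ∀ r r' s s', A' r s * A' r' s' * B0 r s' * B0 r' s
      = A' r s' * A' r' s * B0 r s * B0 r' s') :
    A = A' := by
  haveI : Nonempty (Fin k) := Fin.pos_iff_nonempty.mp hk
  have hk0 : (0:ℝ) < 1/(k:ℝ) := by
    have : (0:ℝ) < k := by exact_mod_cast hk
    positivity
  have W : ∀ r r' s s', A r s * A r' s' * (A' r s' * A' r' s)
      = A r s' * A r' s * (A' r s * A' r' s') := by
    intro r r' s s'
    have h1 := hCR r r' s s'
    have h2 := hCR' r r' s s'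
    have hPQ : (B0 r s' * B0 r' s) * (B0 r s * B0 r' s') ≠ 0 := by
      have := hB0 r s'; have := hB0 r' s; have := hB0 r s; have := hB0 r' s'
      positivity
    apply mul_right_cancel₀ hPQ
    linear_combination (A' r s' * A' r' s * (B0 r s * B0 r' s')) * h1
      - (A r s' * A r' s * (B0 r s * B0 r' s')) * h2
  set r0 : Fin k := Classical.arbitrary _ with hr0
  set s0 : Fin k := Classical.arbitrary _ with hs0
  set u : Fin k → ℝ := fun r => A r s0 / A' r s0 with hu
  set v : Fin k → ℝ := fun s => (A r0 s * A' r0 s0) / (A' r0 s * A r0 s0) with hv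
  have hupos : ∀ r, 0 < u r := fun r => div_pos (hpos _ _) (hpos' _ _)
  have hvpos : ∀ s, 0 < v s := fun s =>
    div_pos (mul_pos (hpos _ _) (hpos' _ _)) (mul_pos (hpos' _ _) (hpos _ _))
  have key : ∀ r s, A r s = A' r s * u r * v s := by
    intro r s
    have hW := W r r0 s s0
    simp only [hu, hv]
    have hrw : A' r s * (A r s0 / A' r s0) * ((A r0 s * A' r0 s0) / (A' r0 s * A r0 s0))
        = (A' r s * A r s0 * (A r0 s * A' r0 s0)) / (A' r s0 * (A' r0 s * A r0 s0)) := by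
      ring
    rw [hrw, eq_div_iff (by
      have := hpos' r s0; have := hpos' r0 s; have := hpos r0 s0
      positivity)]
    linear_combination hW
  obtain ⟨rm, -, hrm⟩ := Finset.exists_max_image Finset.univ u Finset.univ_nonempty
  have stepA : ∀ s, 1 ≤ u rm * v s := by
    intro s
    have e1 : ∑ r, A' r s * (u r * v s) = 1/(k:ℝ) := by
      rw [← hcol s]
      exact Finset.sum_congr rfl fun r _ => by rw [key r s]; ring
    have e2 : ∑ r, A' r s * (u r * v s) ≤ ∑ r, A' r s * (u rm * v s) := by
      refine Finset.sum_le_sum fun r _ => ?_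
      apply mul_le_mul_of_nonneg_left _ (hpos' r s).le
      exact mul_le_mul_of_nonneg_right (hrm r (Finset.mem_univ r)) (hvpos s).le
    have e3 : ∑ r, A' r s * (u rm * v s) = (1/(k:ℝ)) * (u rm * v s) := by
      rw [← Finset.sum_mul, hcol' s]
    have e4 : (1/(k:ℝ)) * 1 ≤ (1/(k:ℝ)) * (u rm * v s) := by
      rw [mul_one]; rw [e3] at e2; linarith [e1 ▸ e2]
    exact (mul_le_mul_iff_right₀ hk0).1 e4
  have stepB : ∀ s, u rm * v s = 1 := by
    intro s
    have h1 : ∑ s', A' rm s' * (u rm * v s') = 1/(k:ℝ) := by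
      rw [← hrow rm]
      exact Finset.sum_congr rfl fun s' _ => by rw [key rm s']; ring
    have e1 : ∑ s', A' rm s' * (u rm * v s' - 1) = 0 := by
      have h2 : ∑ s', A' rm s' * (u rm * v s' - 1)
          = (∑ s', A' rm s' * (u rm * v s')) - ∑ s', A' rm s' := by
        rw [← Finset.sum_sub_distrib]
        exact Finset.sum_congr rfl fun s' _ => by ring
      rw [h2, h1, hrow' rm]; ring
    have h3 := (Finset.sum_eq_zero_iff_of_nonneg (fun s' _ =>
      mul_nonneg (hpos' rm s').le (by linarith [stepA s']))).1 e1 s (Finset.mem_univ s)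
    rcases mul_eq_zero.1 h3 with h | h
    · exact absurd h (hpos' rm s).ne'
    · linarith
  have stepC : ∀ r, u r = u rm := by
    intro r
    have h1 : ∑ r', A' r' s0 * (u r' * v s0) = 1/(k:ℝ) := by
      rw [← hcol s0]
      exact Finset.sum_congr rfl fun r' _ => by rw [key r' s0]; ring
    have h2 : ∑ r', A' r' s0 * (u rm * v s0) = 1/(k:ℝ) := by
      have h5 : ∑ r', A' r' s0 * (u rm * v s0) = (1/(k:ℝ)) * (u rm * v s0) := by
        rw [← Finset.sum_mul, hcol' s0]
      rw [h5, stepB s0, mul_one]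
    have e1 : ∑ r', A' r' s0 * v s0 * (u rm - u r') = 0 := by
      have h3 : ∑ r', A' r' s0 * v s0 * (u rm - u r')
          = (∑ r', A' r' s0 * (u rm * v s0)) - ∑ r', A' r' s0 * (u r' * v s0) := by
        rw [← Finset.sum_sub_distrib]
        exact Finset.sum_congr rfl fun r' _ => by ring
      rw [h3, h1, h2]; ring
    have h4 := (Finset.sum_eq_zero_iff_of_nonneg (fun r' _ =>
      mul_nonneg (mul_pos (hpos' r' s0) (hvpos s0)).le
        (by linarith [hrm r' (Finset.mem_univ r')]))).1 e1 r (Finset.mem_univ r)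
    rcases mul_eq_zero.1 h4 with h | h
    · exact absurd h (mul_pos (hpos' r s0) (hvpos s0)).ne'
    · linarith
  funext r s
  rw [key r s, stepC r, mul_assoc, stepB s, mul_one]

end IPFPProof
/-- The IPFP iterates converge entrywise to a matrix in `𝓜_k`. -/
theorem ipfp_converges (f : ℝ × ℝ → ℝ) (hf : ContinuousOn f unitSq) (θ : ℝ)
    (k : ℕ) (hk : 0 < k) :
    ∃ A ∈ Mk k, ∀ r s : Fin k, Tendsto (fun m : ℕ => ipfp f θ k m r s) atTop (𝓝 (A r s)) := by
  classical
  haveI : Nonempty (Fin k) := Fin.pos_iff_nonempty.mp hk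
  have hk0 : (0:ℝ) < k := by exact_mod_cast hk
  obtain ⟨μ, hμ0, hμ⟩ : ∃ μ : ℝ, 0 < μ ∧ ∀ r s, μ ≤ ipfp f θ k 0 r s := by
    refine ⟨Finset.univ.inf' Finset.univ_nonempty
      (fun p : Fin k × Fin k => ipfp f θ k 0 p.1 p.2), ?_, ?_⟩
    · exact (Finset.lt_inf'_iff _).2 fun p _ => IPFPProof.ipfp_zero_pos f θ k p.1 p.2
    · intro r s; exact Finset.inf'_le _ (Finset.mem_univ (r, s))
  obtain ⟨M, hM⟩ : ∃ M : ℝ, ∀ r s, ipfp f θ k 0 r s ≤ M :=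
    ⟨Finset.univ.sup' Finset.univ_nonempty
      (fun p : Fin k × Fin k => ipfp f θ k 0 p.1 p.2),
      fun r s => Finset.le_sup' (fun p : Fin k × Fin k => ipfp f θ k 0 p.1 p.2) (Finset.mem_univ (r, s))⟩
  have hM0 : 0 < M := lt_of_lt_of_le hμ0
    ((hμ (Classical.arbitrary _) (Classical.arbitrary _)).trans (hM _ _))
  set γ := μ^2/(M^2*(k:ℝ)^2) with hγdef
  set Γ := M^2/(μ^2*(k:ℝ)^2) with hΓdef
  have hγ0 : 0 < γ := div_pos (pow_pos hμ0 2) (mul_pos (pow_pos hM0 2) (pow_pos hk0 2))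
  have hent : ∀ m, 2 ≤ m → ∀ r s : Fin k, γ ≤ ipfp f θ k m r s ∧ ipfp f θ k m r s ≤ Γ := by
    intro m hm r s
    obtain ⟨t, rfl⟩ : ∃ t, m = t + 2 := ⟨m - 2, (Nat.sub_add_cancel hm).symm⟩
    exact IPFPProof.entry_bounds f θ k hk hμ0 hμ hM t r s
  have hcpt : IsCompact (Set.Icc (fun _ _ => γ : Fin k → Fin k → ℝ) (fun _ _ => Γ)) :=
    isCompact_Icc
  have hmem : ∀ j : ℕ, (fun r s => ipfp f θ k (j+2) r s)
      ∈ Set.Icc (fun _ _ => γ : Fin k → Fin k → ℝ) (fun _ _ => Γ) := by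
    intro j
    exact Set.mem_Icc.2
      ⟨Pi.le_def.2 fun r => Pi.le_def.2 fun s => (hent _ (by omega) r s).1,
       Pi.le_def.2 fun r => Pi.le_def.2 fun s => (hent _ (by omega) r s).2⟩
  obtain ⟨A, hAmem, φ, hφ, hAlim⟩ :=
    hcpt.tendsto_subseq (x := fun j => fun r s => ipfp f θ k (j+2) r s) hmem
  have hn1 : Tendsto (fun j => φ j + 2) atTop atTop :=
    (tendsto_add_atTop_nat 2).comp hφ.tendsto_atTop
  obtain ⟨hApos, hArow, hAcol, hACR⟩ :=
    IPFPProof.limit_props f θ k hk (fun m hm r s => (hent m hm r s).1)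
      (fun j => φ j + 2) hn1 (fun j => Nat.le_add_left 2 (φ j)) A hAlim
  have hmat : Tendsto (fun m => (fun r s => ipfp f θ k m r s)) atTop (𝓝 A) := by
    apply tendsto_of_subseq_tendsto
    intro ns hns
    have hev := hns.eventually (eventually_ge_atTop 2)
    rw [eventually_atTop] at hev
    obtain ⟨N, hN⟩ := hev
    obtain ⟨A', hA'mem, ψ, hψ, hA'lim⟩ := hcpt.tendsto_subseq
      (x := fun i => fun r s => ipfp f θ k (ns (i + N)) r s)
      (fun i => by
        have h2 := hN (i + N) (Nat.le_add_left N i)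
        exact Set.mem_Icc.2
          ⟨Pi.le_def.2 fun r => Pi.le_def.2 fun s => (hent _ h2 r s).1,
           Pi.le_def.2 fun r => Pi.le_def.2 fun s => (hent _ h2 r s).2⟩)
    have hn2 : Tendsto (fun i => ns (ψ i + N)) atTop atTop :=
      hns.comp ((tendsto_add_atTop_nat N).comp hψ.tendsto_atTop)
    have h2' : ∀ i, 2 ≤ ns (ψ i + N) := fun i => hN _ (Nat.le_add_left N (ψ i))
    obtain ⟨hA'pos, hA'row, hA'col, hA'CR⟩ :=
      IPFPProof.limit_props f θ k hk (fun m hm r s => (hent m hm r s).1)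
        (fun i => ns (ψ i + N)) hn2 h2' A' hA'lim
    have hAA : A' = A :=
      IPFPProof.eq_of_limits hk (fun r s => ipfp f θ k 0 r s) A' A
        (fun r s => IPFPProof.ipfp_zero_pos f θ k r s)
        (fun r s => lt_of_lt_of_le hγ0 (hA'pos r s))
        (fun r s => lt_of_lt_of_le hγ0 (hApos r s))
        hA'row hA'col hArow hAcol hA'CR hACR
    refine ⟨fun i => ψ i + N, ?_⟩
    rw [← hAA]
    exact hA'lim
  refine ⟨Matrix.of A, ⟨?_, ?_, ?_⟩, ?_⟩
  · intro r s; exact le_trans hγ0.le (hApos r s)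
  · intro r; exact hArow r
  · intro s; exact hAcol s
  · intro r s
    exact tendsto_pi_nhds.1 (tendsto_pi_nhds.1 hmat r) s
end
end

section
/- Let f : [0,1]² → ℝ be continuous, θ ∈ ℝ and k ∈ ℕ. The function A ↦ θ ∑_{r,s=1}^k f(r/k, s/k) A(r,s) − 2 log k − ∑_{r,s=1}^k A(r,s) log A(r,s) (with 0 log 0 = 0) attains its supremum over 𝓜_k at a unique matrix, and this unique maximizer equals the entrywise limit A_{k,θ} of the iterative proportional fitting iterates B_m. -/
open MeasureTheory Filter Topology
open scoped ENNReal

noncomputable section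

/-! ### Auxiliary development for Statement 8 -/

namespace IPFPAux

open Finset

/-- Pointwise Gibbs inequality. -/
lemma key_ineq {p q : ℝ} (hp : 0 ≤ p) (hq : 0 < q) :
    p * (Real.log q - Real.log p) ≤ q - p := by
  rcases eq_or_lt_of_le hp with h | h
  · rw [← h]; simpa using hq.le
  · have hlog : Real.log q - Real.log p = Real.log (q / p) :=
      (Real.log_div hq.ne' h.ne').symm
    have h2 := Real.log_le_sub_one_of_pos (div_pos hq h)
    rw [hlog]
    calc p * Real.log (q / p) ≤ p * (q / p - 1) :=
          mul_le_mul_of_nonneg_left h2 h.le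
      _ = q - p := by field_simp

lemma key_strict {p q : ℝ} (hp : 0 ≤ p) (hq : 0 < q) (hne : p ≠ q) :
    p * (Real.log q - Real.log p) < q - p := by
  rcases eq_or_lt_of_le hp with h | h
  · rw [← h]; simpa using hq
  · have hlog : Real.log q - Real.log p = Real.log (q / p) :=
      (Real.log_div hq.ne' h.ne').symm
    have hne' : q / p ≠ 1 := by
      intro hq1
      rw [div_eq_one_iff_eq h.ne'] at hq1
      exact hne hq1.symm
    have h2 := Real.log_lt_sub_one_of_pos (div_pos hq h) hne'
    rw [hlog]
    calc p * Real.log (q / p) < p * (q / p - 1) := (mul_lt_mul_iff_right₀ h).mpr h2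
      _ = q - p := by field_simp

lemma gibbs_le {ι : Type*} [Fintype ι] (p q : ι → ℝ) (hp : ∀ i, 0 ≤ p i)
    (hq : ∀ i, 0 < q i) (hsum : ∑ i, p i = ∑ i, q i) :
    ∑ i, p i * (Real.log (q i) - Real.log (p i)) ≤ 0 := by
  calc ∑ i, p i * (Real.log (q i) - Real.log (p i)) ≤ ∑ i, (q i - p i) :=
        Finset.sum_le_sum fun i _ => key_ineq (hp i) (hq i)
    _ = 0 := by rw [Finset.sum_sub_distrib, hsum, sub_self]

lemma gibbs_eq {ι : Type*} [Fintype ι] (p q : ι → ℝ) (hp : ∀ i, 0 ≤ p i)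
    (hq : ∀ i, 0 < q i) (hsum : ∑ i, p i = ∑ i, q i)
    (h0 : ∑ i, p i * (Real.log (q i) - Real.log (p i)) = 0) : p = q := by
  by_contra hne
  have hex : ∃ i, p i ≠ q i := by
    by_contra hc; push_neg at hc; exact hne (funext hc)
  obtain ⟨i0, hi0⟩ := hex
  have hlt : ∑ i, p i * (Real.log (q i) - Real.log (p i)) < ∑ i, (q i - p i) :=
    Finset.sum_lt_sum (fun i _ => key_ineq (hp i) (hq i))
      ⟨i0, Finset.mem_univ _, key_strict (hp i0) (hq i0) hi0⟩
  rw [Finset.sum_sub_distrib, hsum, sub_self] at hlt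
  exact absurd h0 (by linarith)

/-- Gluing even and odd subsequences. -/
lemma tendsto_even_odd {X : Type*} [TopologicalSpace X] {u : ℕ → X} {a : X}
    (he : Tendsto (fun n => u (2*n)) atTop (𝓝 a))
    (ho : Tendsto (fun n => u (2*n+1)) atTop (𝓝 a)) :
    Tendsto u atTop (𝓝 a) := by
  rw [Filter.tendsto_def] at he ho ⊢
  intro s hs
  obtain ⟨N1, h1⟩ := Filter.mem_atTop_sets.mp (he s hs)
  obtain ⟨N2, h2⟩ := Filter.mem_atTop_sets.mp (ho s hs)
  apply Filter.mem_atTop_sets.mpr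
  refine ⟨2*N1 + 2*N2 + 1, fun n hn => ?_⟩
  rcases Nat.even_or_odd n with ⟨j, hj⟩ | ⟨j, hj⟩
  · have hjn : n = 2*j := by omega
    have : u (2*j) ∈ s := h1 j (by omega)
    simpa [Set.mem_preimage, hjn] using this
  · have hjn : n = 2*j+1 := by omega
    have : u (2*j+1) ∈ s := h2 j (by omega)
    simpa [Set.mem_preimage, hjn] using this

section Main

variable (f : ℝ × ℝ → ℝ) (θ : ℝ) (k : ℕ)

/-- The exponent matrix. -/
def Gm (r s : Fin k) : ℝ := θ * f ((r.1 + 1 : ℝ) / k, (s.1 + 1 : ℝ) / k)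

lemma ipfp_zero_apply (r s : Fin k) :
    ipfp f θ k 0 r s = Real.exp (Gm f θ k r s) := rfl

lemma ipfp_succ_even {m : ℕ} (hm : Even m) (r s : Fin k) :
    ipfp f θ k (m+1) r s = ipfp f θ k m r s / (k * ∑ l, ipfp f θ k m r l) := by
  simp [ipfp, hm]

lemma ipfp_succ_odd {m : ℕ} (hm : ¬ Even m) (r s : Fin k) :
    ipfp f θ k (m+1) r s = ipfp f θ k m r s / (k * ∑ l, ipfp f θ k m l s) := by
  simp [ipfp, hm]

lemma ipfp_pos (hk : 0 < k) : ∀ (m : ℕ) (r s : Fin k), 0 < ipfp f θ k m r s := by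
  have hk' : (0:ℝ) < k := Nat.cast_pos.mpr hk
  haveI : Nonempty (Fin k) := Fin.pos_iff_nonempty.mp hk
  intro m
  induction m with
  | zero => intro r s; exact Real.exp_pos _
  | succ m ih =>
    intro r s
    by_cases hm : Even m
    · rw [ipfp_succ_even f θ k hm]
      exact div_pos (ih r s)
        (mul_pos hk' (Finset.sum_pos (fun l _ => ih r l) Finset.univ_nonempty))
    · rw [ipfp_succ_odd f θ k hm]
      exact div_pos (ih r s)
        (mul_pos hk' (Finset.sum_pos (fun l _ => ih l s) Finset.univ_nonempty))

lemma ipfp_row_sum (hk : 0 < k) {m : ℕ} (hm : Even m) (r : Fin k) :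
    ∑ s, ipfp f θ k (m+1) r s = 1/(k:ℝ) := by
  have hk' : (0:ℝ) < k := Nat.cast_pos.mpr hk
  haveI : Nonempty (Fin k) := Fin.pos_iff_nonempty.mp hk
  have hS : 0 < ∑ l, ipfp f θ k m r l :=
    Finset.sum_pos (fun l _ => ipfp_pos f θ k hk m r l) Finset.univ_nonempty
  rw [Finset.sum_congr rfl fun s (_ : s ∈ Finset.univ) => ipfp_succ_even f θ k hm r s,
    ← Finset.sum_div, div_eq_div_iff (mul_pos hk' hS).ne' hk'.ne']
  ring

lemma ipfp_col_sum (hk : 0 < k) {m : ℕ} (hm : ¬ Even m) (s : Fin k) :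
    ∑ r, ipfp f θ k (m+1) r s = 1/(k:ℝ) := by
  have hk' : (0:ℝ) < k := Nat.cast_pos.mpr hk
  haveI : Nonempty (Fin k) := Fin.pos_iff_nonempty.mp hk
  have hS : 0 < ∑ l, ipfp f θ k m l s :=
    Finset.sum_pos (fun l _ => ipfp_pos f θ k hk m l s) Finset.univ_nonempty
  rw [Finset.sum_congr rfl fun r (_ : r ∈ Finset.univ) => ipfp_succ_odd f θ k hm r s,
    ← Finset.sum_div, div_eq_div_iff (mul_pos hk' hS).ne' hk'.ne']
  ring

lemma ipfp_total (hk : 0 < k) (m : ℕ) :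
    ∑ r, ∑ s, ipfp f θ k (m+1) r s = 1 := by
  have hk' : (0:ℝ) < k := Nat.cast_pos.mpr hk
  by_cases hm : Even m
  · calc ∑ r, ∑ s, ipfp f θ k (m+1) r s = ∑ _r : Fin k, (1/(k:ℝ)) :=
          Finset.sum_congr rfl fun r _ => ipfp_row_sum f θ k hk hm r
      _ = 1 := by
          rw [Finset.sum_const, Finset.card_univ, Fintype.card_fin, nsmul_eq_mul,
            mul_one_div, div_self hk'.ne']
  · calc ∑ r, ∑ s, ipfp f θ k (m+1) r s = ∑ s, ∑ r, ipfp f θ k (m+1) r s :=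
          Finset.sum_comm
      _ = ∑ _s : Fin k, (1/(k:ℝ)) :=
          Finset.sum_congr rfl fun s _ => ipfp_col_sum f θ k hk hm s
      _ = 1 := by
          rw [Finset.sum_const, Finset.card_univ, Fintype.card_fin, nsmul_eq_mul,
            mul_one_div, div_self hk'.ne']

lemma ipfp_le (hk : 0 < k) (m : ℕ) (r s : Fin k) :
    ipfp f θ k (m+1) r s ≤ 1/(k:ℝ) := by
  by_cases hm : Even m
  · rw [← ipfp_row_sum f θ k hk hm r]
    exact Finset.single_le_sum
      (fun l (_ : l ∈ Finset.univ) => (ipfp_pos f θ k hk (m+1) r l).le) (Finset.mem_univ s)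
  · rw [← ipfp_col_sum f θ k hk hm s]
    exact Finset.single_le_sum
      (fun l (_ : l ∈ Finset.univ) => (ipfp_pos f θ k hk (m+1) l s).le) (Finset.mem_univ r)

lemma ipfp_scaled (hk : 0 < k) (m : ℕ) :
    ∃ x y : Fin k → ℝ, (∀ r, 0 < x r) ∧ (∀ s, 0 < y s) ∧
      ∀ r s, ipfp f θ k m r s = Real.exp (Gm f θ k r s) * x r * y s := by
  have hk' : (0:ℝ) < k := Nat.cast_pos.mpr hk
  haveI : Nonempty (Fin k) := Fin.pos_iff_nonempty.mp hk
  induction m with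
  | zero =>
    exact ⟨fun _ => 1, fun _ => 1, fun _ => one_pos, fun _ => one_pos,
      fun r s => by rw [ipfp_zero_apply]; ring⟩
  | succ m ih =>
    obtain ⟨x, y, hx, hy, hrep⟩ := ih
    by_cases hm : Even m
    · have hS : ∀ r, 0 < (k:ℝ) * ∑ l, ipfp f θ k m r l := fun r =>
        mul_pos hk' (Finset.sum_pos (fun l _ => ipfp_pos f θ k hk m r l) Finset.univ_nonempty)
      refine ⟨fun r => x r / ((k:ℝ) * ∑ l, ipfp f θ k m r l), y,
        fun r => div_pos (hx r) (hS r), hy, fun r s => ?_⟩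
      rw [ipfp_succ_even f θ k hm, hrep]
      ring
    · have hS : ∀ s, 0 < (k:ℝ) * ∑ l, ipfp f θ k m l s := fun s =>
        mul_pos hk' (Finset.sum_pos (fun l _ => ipfp_pos f θ k hk m l s) Finset.univ_nonempty)
      refine ⟨x, fun s => y s / ((k:ℝ) * ∑ l, ipfp f θ k m l s),
        hx, fun s => div_pos (hy s) (hS s), fun r s => ?_⟩
      rw [ipfp_succ_odd f θ k hm, hrep]
      ring

lemma ipfp_cross (hk : 0 < k) (m : ℕ) (r s r' s' : Fin k) :
    ipfp f θ k m r s * ipfp f θ k m r' s' * Real.exp (Gm f θ k r s') * Real.exp (Gm f θ k r' s)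
    = ipfp f θ k m r s' * ipfp f θ k m r' s * Real.exp (Gm f θ k r s) * Real.exp (Gm f θ k r' s') := by
  obtain ⟨x, y, hx, hy, hrep⟩ := ipfp_scaled f θ k hk m
  simp only [hrep]
  ring

lemma ipfp_odd_rep (hk : 0 < k) {lo hi : ℝ} (hlo : 0 < lo)
    (hb : ∀ r s, lo ≤ Real.exp (Gm f θ k r s) ∧ Real.exp (Gm f θ k r s) ≤ hi)
    {m : ℕ} (hm : Even m) :
    ∃ x y : Fin k → ℝ, (∀ r, 0 < x r) ∧ (∀ s, 0 < y s) ∧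
      (∀ r s, ipfp f θ k (m+1) r s = Real.exp (Gm f θ k r s) * x r * y s) ∧
      (∀ r r', lo * x r' ≤ hi * x r) := by
  have hk' : (0:ℝ) < k := Nat.cast_pos.mpr hk
  haveI : Nonempty (Fin k) := Fin.pos_iff_nonempty.mp hk
  have hhi : (0:ℝ) < hi := by
    obtain ⟨r⟩ := (inferInstance : Nonempty (Fin k))
    exact lt_of_lt_of_le hlo ((hb r r).1.trans (hb r r).2)
  obtain ⟨x, y, hx, hy, hrep⟩ := ipfp_scaled f θ k hk m
  have hT : ∀ r, 0 < ∑ l, Real.exp (Gm f θ k r l) * y l := fun r =>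
    Finset.sum_pos (fun l _ => mul_pos (Real.exp_pos _) (hy l)) Finset.univ_nonempty
  have hsum : ∀ r, ∑ l, ipfp f θ k m r l = x r * ∑ l, Real.exp (Gm f θ k r l) * y l := by
    intro r
    rw [Finset.mul_sum]
    exact Finset.sum_congr rfl fun l _ => by rw [hrep]; ring
  have hypos : 0 < ∑ l, y l := Finset.sum_pos (fun l _ => hy l) Finset.univ_nonempty
  have hTub : ∀ r, ∑ l, Real.exp (Gm f θ k r l) * y l ≤ hi * ∑ l, y l := by
    intro r
    rw [Finset.mul_sum]
    exact Finset.sum_le_sum fun l _ => mul_le_mul_of_nonneg_right (hb r l).2 (hy l).le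
  have hTlb : ∀ r, lo * ∑ l, y l ≤ ∑ l, Real.exp (Gm f θ k r l) * y l := by
    intro r
    rw [Finset.mul_sum]
    exact Finset.sum_le_sum fun l _ => mul_le_mul_of_nonneg_right (hb r l).1 (hy l).le
  refine ⟨fun r => ((k:ℝ) * ∑ l, Real.exp (Gm f θ k r l) * y l)⁻¹, y,
    fun r => inv_pos.mpr (mul_pos hk' (hT r)), hy, ?_, ?_⟩
  · intro r s
    rw [ipfp_succ_even f θ k hm r s, hrep, hsum]
    field_simp [(hx r).ne', (hT r).ne']
  · intro r r'
    rw [← div_eq_mul_inv, ← div_eq_mul_inv,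
      div_le_div_iff₀ (mul_pos hk' (hT r')) (mul_pos hk' (hT r))]
    calc lo * ((k:ℝ) * ∑ l, Real.exp (Gm f θ k r l) * y l)
        = (k:ℝ) * (lo * ∑ l, Real.exp (Gm f θ k r l) * y l) := by ring
      _ ≤ (k:ℝ) * (lo * (hi * ∑ l, y l)) :=
          mul_le_mul_of_nonneg_left (mul_le_mul_of_nonneg_left (hTub r) hlo.le) hk'.le
      _ = (k:ℝ) * (hi * (lo * ∑ l, y l)) := by ring
      _ ≤ (k:ℝ) * (hi * ∑ l, Real.exp (Gm f θ k r' l) * y l) :=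
          mul_le_mul_of_nonneg_left (mul_le_mul_of_nonneg_left (hTlb r') hhi.le) hk'.le
      _ = hi * ((k:ℝ) * ∑ l, Real.exp (Gm f θ k r' l) * y l) := by ring

lemma ipfp_even_lower (hk : 0 < k) {lo hi : ℝ} (hlo : 0 < lo)
    (hb : ∀ r s, lo ≤ Real.exp (Gm f θ k r s) ∧ Real.exp (Gm f θ k r s) ≤ hi)
    {m : ℕ} (hm : Even m) (r s : Fin k) :
    lo^2/(hi^2*(k:ℝ)^2) ≤ ipfp f θ k (m+1+1) r s := by
  have hk' : (0:ℝ) < k := Nat.cast_pos.mpr hk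
  haveI : Nonempty (Fin k) := Fin.pos_iff_nonempty.mp hk
  have hhi : (0:ℝ) < hi := by
    obtain ⟨r0⟩ := (inferInstance : Nonempty (Fin k))
    exact lt_of_lt_of_le hlo ((hb r0 r0).1.trans (hb r0 r0).2)
  obtain ⟨x, y, hx, hy, hrep, hratio⟩ := ipfp_odd_rep f θ k hk hlo hb hm
  have hm1 : ¬ Even (m+1) := by simp [Nat.even_add_one, hm]
  rw [ipfp_succ_odd f θ k hm1]
  have hxy : 0 < x r * y s := mul_pos (hx r) (hy s)
  have hnum : lo * (x r * y s) ≤ ipfp f θ k (m+1) r s := by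
    rw [hrep]
    calc lo * (x r * y s) ≤ Real.exp (Gm f θ k r s) * (x r * y s) :=
          mul_le_mul_of_nonneg_right (hb r s).1 hxy.le
      _ = Real.exp (Gm f θ k r s) * x r * y s := by ring
  have hden_pos : 0 < (k:ℝ) * ∑ l, ipfp f θ k (m+1) l s :=
    mul_pos hk' (Finset.sum_pos (fun l _ => ipfp_pos f θ k hk (m+1) l s) Finset.univ_nonempty)
  have hterm : ∀ l, ipfp f θ k (m+1) l s ≤ hi * (hi/lo * x r) * y s := by
    intro l
    rw [hrep]
    have h2 : x l ≤ hi/lo * x r := by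
      rw [div_mul_eq_mul_div, le_div_iff₀ hlo]
      have := hratio r l
      linarith
    have h1 : Real.exp (Gm f θ k l s) * x l * y s ≤ hi * x l * y s :=
      mul_le_mul_of_nonneg_right (mul_le_mul_of_nonneg_right (hb l s).2 (hx l).le) (hy s).le
    have h3 : hi * x l * y s ≤ hi * (hi/lo * x r) * y s :=
      mul_le_mul_of_nonneg_right (mul_le_mul_of_nonneg_left h2 hhi.le) (hy s).le
    linarith
  have hden : (k:ℝ) * ∑ l, ipfp f θ k (m+1) l s ≤ (k:ℝ)^2 * hi^2 / lo * (x r * y s) := by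
    calc (k:ℝ) * ∑ l, ipfp f θ k (m+1) l s
        ≤ (k:ℝ) * ∑ _l : Fin k, (hi * (hi/lo * x r) * y s) :=
          mul_le_mul_of_nonneg_left (Finset.sum_le_sum fun l _ => hterm l) hk'.le
      _ = (k:ℝ) * ((k:ℝ) * (hi * (hi/lo * x r) * y s)) := by
          rw [Finset.sum_const, Finset.card_univ, Fintype.card_fin, nsmul_eq_mul]
      _ = (k:ℝ)^2 * hi^2 / lo * (x r * y s) := by
          field_simp
  calc lo^2/(hi^2*(k:ℝ)^2)
      = (lo * (x r * y s)) / ((k:ℝ)^2 * hi^2 / lo * (x r * y s)) := by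
        rw [div_eq_div_iff (by positivity) (by positivity)]
        field_simp
    _ ≤ ipfp f θ k (m+1) r s / ((k:ℝ) * ∑ l, ipfp f θ k (m+1) l s) :=
        div_le_div₀ (ipfp_pos f θ k hk (m+1) r s).le hnum hden_pos hden

/-- The (shifted, scaled) relative-entropy-type Lyapunov function. -/
def Df (m : ℕ) : ℝ := -∑ r, ∑ s, Real.log (ipfp f θ k m r s)

lemma Df_succ_even (hk : 0 < k) {m : ℕ} (hm : Even m) :
    Df f θ k (m+1) = Df f θ k m + k * ∑ r, Real.log ((k:ℝ) * ∑ l, ipfp f θ k m r l) := by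
  have hk' : (0:ℝ) < k := Nat.cast_pos.mpr hk
  haveI : Nonempty (Fin k) := Fin.pos_iff_nonempty.mp hk
  have hlog : ∀ r s, Real.log (ipfp f θ k (m+1) r s)
      = Real.log (ipfp f θ k m r s) - Real.log ((k:ℝ) * ∑ l, ipfp f θ k m r l) := by
    intro r s
    rw [ipfp_succ_even f θ k hm, Real.log_div (ipfp_pos f θ k hk m r s).ne'
      (mul_pos hk' (Finset.sum_pos (fun l _ => ipfp_pos f θ k hk m r l)
        Finset.univ_nonempty)).ne']
  unfold Df
  rw [Finset.sum_congr rfl fun r (_ : r ∈ Finset.univ) =>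
    Finset.sum_congr rfl fun s (_ : s ∈ Finset.univ) => hlog r s]
  simp only [Finset.sum_sub_distrib, Finset.sum_const, Finset.card_univ, Fintype.card_fin,
    nsmul_eq_mul]
  rw [← Finset.mul_sum]
  ring

lemma Df_succ_odd (hk : 0 < k) {m : ℕ} (hm : ¬ Even m) :
    Df f θ k (m+1) = Df f θ k m + k * ∑ s, Real.log ((k:ℝ) * ∑ l, ipfp f θ k m l s) := by
  have hk' : (0:ℝ) < k := Nat.cast_pos.mpr hk
  haveI : Nonempty (Fin k) := Fin.pos_iff_nonempty.mp hk
  have hlog : ∀ r s, Real.log (ipfp f θ k (m+1) r s)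
      = Real.log (ipfp f θ k m r s) - Real.log ((k:ℝ) * ∑ l, ipfp f θ k m l s) := by
    intro r s
    rw [ipfp_succ_odd f θ k hm, Real.log_div (ipfp_pos f θ k hk m r s).ne'
      (mul_pos hk' (Finset.sum_pos (fun l _ => ipfp_pos f θ k hk m l s)
        Finset.univ_nonempty)).ne']
  unfold Df
  rw [Finset.sum_congr rfl fun r (_ : r ∈ Finset.univ) =>
    Finset.sum_congr rfl fun s (_ : s ∈ Finset.univ) => hlog r s]
  rw [Finset.sum_comm (f := fun r s => Real.log (ipfp f θ k m r s)
    - Real.log ((k:ℝ) * ∑ l, ipfp f θ k m l s))]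
  simp only [Finset.sum_sub_distrib, Finset.sum_const, Finset.card_univ, Fintype.card_fin,
    nsmul_eq_mul]
  rw [← Finset.mul_sum, Finset.sum_comm (f := fun s r => Real.log (ipfp f θ k m r s))]
  ring

lemma Df_antitone_step (hk : 0 < k) (m : ℕ) : Df f θ k (m+1+1) ≤ Df f θ k (m+1) := by
  have hk' : (0:ℝ) < k := Nat.cast_pos.mpr hk
  haveI : Nonempty (Fin k) := Fin.pos_iff_nonempty.mp hk
  by_cases hm : Even (m+1)
  · rw [Df_succ_even f θ k hk hm]
    have h0 : ∑ r, Real.log ((k:ℝ) * ∑ l, ipfp f θ k (m+1) r l) ≤ 0 := by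
      have hσ : ∀ r, 0 < ∑ l, ipfp f θ k (m+1) r l := fun r =>
        Finset.sum_pos (fun l _ => ipfp_pos f θ k hk (m+1) r l) Finset.univ_nonempty
      have hsum1 : ∑ r, ∑ l, ipfp f θ k (m+1) r l = 1 := ipfp_total f θ k hk m
      calc ∑ r, Real.log ((k:ℝ) * ∑ l, ipfp f θ k (m+1) r l)
          ≤ ∑ r, ((k:ℝ) * ∑ l, ipfp f θ k (m+1) r l - 1) :=
            Finset.sum_le_sum fun r _ =>
              Real.log_le_sub_one_of_pos (mul_pos hk' (hσ r))
        _ = (k:ℝ) * ∑ r, ∑ l, ipfp f θ k (m+1) r l - k := by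
            rw [Finset.sum_sub_distrib, ← Finset.mul_sum, Finset.sum_const, Finset.card_univ,
              Fintype.card_fin, nsmul_eq_mul, mul_one]
        _ = 0 := by rw [hsum1]; ring
    have : (k:ℝ) * ∑ r, Real.log ((k:ℝ) * ∑ l, ipfp f θ k (m+1) r l) ≤ 0 :=
      mul_nonpos_iff.mpr (Or.inl ⟨hk'.le, h0⟩)
    linarith
  · rw [Df_succ_odd f θ k hk hm]
    have h0 : ∑ s, Real.log ((k:ℝ) * ∑ l, ipfp f θ k (m+1) l s) ≤ 0 := by
      have hσ : ∀ s, 0 < ∑ l, ipfp f θ k (m+1) l s := fun s =>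
        Finset.sum_pos (fun l _ => ipfp_pos f θ k hk (m+1) l s) Finset.univ_nonempty
      have hsum1 : ∑ s, ∑ l, ipfp f θ k (m+1) l s = 1 := by
        rw [Finset.sum_comm]
        exact ipfp_total f θ k hk m
      calc ∑ s, Real.log ((k:ℝ) * ∑ l, ipfp f θ k (m+1) l s)
          ≤ ∑ s, ((k:ℝ) * ∑ l, ipfp f θ k (m+1) l s - 1) :=
            Finset.sum_le_sum fun s _ =>
              Real.log_le_sub_one_of_pos (mul_pos hk' (hσ s))
        _ = (k:ℝ) * ∑ s, ∑ l, ipfp f θ k (m+1) l s - k := by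
            rw [Finset.sum_sub_distrib, ← Finset.mul_sum, Finset.sum_const, Finset.card_univ,
              Fintype.card_fin, nsmul_eq_mul, mul_one]
        _ = 0 := by rw [hsum1]; ring
    have : (k:ℝ) * ∑ s, Real.log ((k:ℝ) * ∑ l, ipfp f θ k (m+1) l s) ≤ 0 :=
      mul_nonpos_iff.mpr (Or.inl ⟨hk'.le, h0⟩)
    linarith

lemma Df_lower (hk : 0 < k) (m : ℕ) : (k:ℝ)^2 * Real.log k ≤ Df f θ k (m+1) := by
  have hk' : (0:ℝ) < k := Nat.cast_pos.mpr hk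
  have h : ∀ r s : Fin k, Real.log (ipfp f θ k (m+1) r s) ≤ -Real.log k := by
    intro r s
    have h1 := Real.log_le_log (ipfp_pos f θ k hk (m+1) r s) (ipfp_le f θ k hk m r s)
    rwa [one_div, Real.log_inv] at h1
  have h2 : ∑ r, ∑ s, Real.log (ipfp f θ k (m+1) r s)
      ≤ ∑ _r : Fin k, ∑ _s : Fin k, (-Real.log (k:ℝ)) :=
    Finset.sum_le_sum fun r _ => Finset.sum_le_sum fun s _ => h r s
  have h3 : ∑ _r : Fin k, ∑ _s : Fin k, (-Real.log (k:ℝ)) = -((k:ℝ)^2 * Real.log k) := by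
    simp only [Finset.sum_const, Finset.card_univ, Fintype.card_fin, nsmul_eq_mul]
    ring
  unfold Df
  rw [h3] at h2
  linarith

lemma Mk_total (hk : 0 < k) {X : Matrix (Fin k) (Fin k) ℝ} (hX : X ∈ Mk k) :
    ∑ r, ∑ s, X r s = 1 := by
  have hk' : (0:ℝ) < k := Nat.cast_pos.mpr hk
  rw [Finset.sum_congr rfl fun r (_ : r ∈ Finset.univ) => hX.2.1 r]
  rw [Finset.sum_const, Finset.card_univ, Fintype.card_fin, nsmul_eq_mul,
    mul_one_div, div_self hk'.ne']

/-- A positive matrix in `Mk k` of scaled form is the strict maximizer of the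
discrete objective. -/
lemma scaled_is_max (hk : 0 < k) (A : Matrix (Fin k) (Fin k) ℝ) (hA : A ∈ Mk k)
    (a b : Fin k → ℝ) (ha : ∀ r, 0 < a r) (hb : ∀ s, 0 < b s)
    (hrep : ∀ r s, A r s = Real.exp (Gm f θ k r s) * a r * b s) :
    ∀ B ∈ Mk k, objk f θ k B ≤ objk f θ k A ∧ (objk f θ k B = objk f θ k A → B = A) := by
  have hk' : (0:ℝ) < k := Nat.cast_pos.mpr hk
  have hApos : ∀ r s, 0 < A r s := fun r s => by
    rw [hrep]
    exact mul_pos (mul_pos (Real.exp_pos _) (ha r)) (hb s)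
  have hlogA : ∀ r s : Fin k, θ * f ((r.1 + 1 : ℝ) / k, (s.1 + 1 : ℝ) / k)
      = Real.log (A r s) - Real.log (a r) - Real.log (b s) := by
    intro r s
    rw [hrep, Real.log_mul (mul_pos (Real.exp_pos _) (ha r)).ne' (hb s).ne',
      Real.log_mul (Real.exp_ne_zero _) (ha r).ne', Real.log_exp]
    simp only [Gm]
    ring
  have lin : ∀ X : Matrix (Fin k) (Fin k) ℝ, X ∈ Mk k →
      θ * ∑ r, ∑ s, f ((r.1 + 1 : ℝ) / k, (s.1 + 1 : ℝ) / k) * X r s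
      = (∑ r, ∑ s, X r s * Real.log (A r s))
        - (∑ r, Real.log (a r))/k - (∑ s, Real.log (b s))/k := by
    intro X hX
    have hB1 : ∑ r, ∑ s, Real.log (a r) * X r s = (∑ r, Real.log (a r))/k := by
      rw [Finset.sum_congr rfl fun r (_ : r ∈ Finset.univ) => by
        rw [← Finset.mul_sum, hX.2.1 r]]
      rw [← Finset.sum_mul, mul_one_div]
    have hB2 : ∑ r, ∑ s, Real.log (b s) * X r s = (∑ s, Real.log (b s))/k := by
      rw [Finset.sum_comm]
      rw [Finset.sum_congr rfl fun s (_ : s ∈ Finset.univ) => by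
        rw [← Finset.mul_sum, hX.2.2 s]]
      rw [← Finset.sum_mul, mul_one_div]
    calc θ * ∑ r, ∑ s, f ((r.1 + 1 : ℝ) / k, (s.1 + 1 : ℝ) / k) * X r s
        = ∑ r, ∑ s, (X r s * Real.log (A r s) - Real.log (a r) * X r s
            - Real.log (b s) * X r s) := by
          rw [Finset.mul_sum]
          refine Finset.sum_congr rfl fun r _ => ?_
          rw [Finset.mul_sum]
          refine Finset.sum_congr rfl fun s _ => ?_
          have h := hlogA r s
          linear_combination (X r s) * h
      _ = (∑ r, ∑ s, X r s * Real.log (A r s)) - (∑ r, ∑ s, Real.log (a r) * X r s)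
          - (∑ r, ∑ s, Real.log (b s) * X r s) := by
          simp only [Finset.sum_sub_distrib]
      _ = (∑ r, ∑ s, X r s * Real.log (A r s))
          - (∑ r, Real.log (a r))/k - (∑ s, Real.log (b s))/k := by
          rw [hB1, hB2]
  have hdiff : ∀ B : Matrix (Fin k) (Fin k) ℝ, B ∈ Mk k →
      objk f θ k A - objk f θ k B
      = -∑ i : Fin k × Fin k, B i.1 i.2 * (Real.log (A i.1 i.2) - Real.log (B i.1 i.2)) := by
    intro B hB
    have e3 : ∑ i : Fin k × Fin k, B i.1 i.2 * (Real.log (A i.1 i.2) - Real.log (B i.1 i.2))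
        = (∑ r, ∑ s, B r s * Real.log (A r s)) - (∑ r, ∑ s, B r s * Real.log (B r s)) := by
      rw [Fintype.sum_prod_type]
      simp only [mul_sub, Finset.sum_sub_distrib]
    have lA := lin A hA
    have lB := lin B hB
    unfold objk
    rw [lA, lB, e3]
    ring
  intro B hB
  have hsum : ∑ i : Fin k × Fin k, B i.1 i.2 = ∑ i : Fin k × Fin k, A i.1 i.2 := by
    rw [Fintype.sum_prod_type, Fintype.sum_prod_type]
    exact (Mk_total k hk hB).trans (Mk_total k hk hA).symm
  have hgle : ∑ i : Fin k × Fin k, B i.1 i.2 * (Real.log (A i.1 i.2) - Real.log (B i.1 i.2)) ≤ 0 :=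
    gibbs_le _ _ (fun i => hB.1 i.1 i.2) (fun i => hApos i.1 i.2) hsum
  constructor
  · have := hdiff B hB
    linarith
  · intro heq
    have h0 : ∑ i : Fin k × Fin k, B i.1 i.2 * (Real.log (A i.1 i.2) - Real.log (B i.1 i.2)) = 0 := by
      have := hdiff B hB
      rw [heq] at this
      linarith
    have hpq := gibbs_eq (fun i : Fin k × Fin k => B i.1 i.2) (fun i => A i.1 i.2)
      (fun i => hB.1 i.1 i.2) (fun i => hApos i.1 i.2) hsum h0
    exact Matrix.ext fun r s => congrFun hpq (r, s)

/-- Characterization of subsequential limits of the even IPFP iterates. -/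
lemma limit_point (hk : 0 < k) {lo hi : ℝ} (hlo : 0 < lo)
    (hb : ∀ r s, lo ≤ Real.exp (Gm f θ k r s) ∧ Real.exp (Gm f θ k r s) ≤ hi)
    (g : ℕ → ℕ) (hg : Tendsto g atTop atTop) (L : Matrix (Fin k) (Fin k) ℝ)
    (hL : ∀ r s, Tendsto (fun j => ipfp f θ k (2 * g j + 1 + 1) r s) atTop (𝓝 (L r s))) :
    L ∈ Mk k ∧ ∃ a b : Fin k → ℝ, (∀ r, 0 < a r) ∧ (∀ s, 0 < b s) ∧
      ∀ r s, L r s = Real.exp (Gm f θ k r s) * a r * b s := by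
  haveI : Nonempty (Fin k) := Fin.pos_iff_nonempty.mp hk
  have hk' : (0:ℝ) < k := Nat.cast_pos.mpr hk
  have hhi : (0:ℝ) < hi := by
    obtain ⟨r0⟩ := (inferInstance : Nonempty (Fin k))
    exact lt_of_lt_of_le hlo ((hb r0 r0).1.trans (hb r0 r0).2)
  have hcpos : 0 < lo^2/(hi^2*(k:ℝ)^2) :=
    div_pos (pow_pos hlo 2) (mul_pos (pow_pos hhi 2) (pow_pos hk' 2))
  have hLlb : ∀ r s, lo^2/(hi^2*(k:ℝ)^2) ≤ L r s := fun r s =>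
    ge_of_tendsto (hL r s) (Filter.Eventually.of_forall fun j =>
      ipfp_even_lower f θ k hk hlo hb (even_two_mul (g j)) r s)
  have hLpos : ∀ r s, 0 < L r s := fun r s => lt_of_lt_of_le hcpos (hLlb r s)
  have hoddj : ∀ j : ℕ, ¬ Even (2 * g j + 1) := by
    intro j
    simp only [Nat.even_add_one, not_not]
    exact even_two_mul _
  have hcol : ∀ s, ∑ r, L r s = 1/(k:ℝ) := by
    intro s
    have h1 : Tendsto (fun j => ∑ r, ipfp f θ k (2 * g j + 1 + 1) r s) atTop
        (𝓝 (∑ r, L r s)) := tendsto_finset_sum _ fun r _ => hL r s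
    have h2 : (fun j => ∑ r, ipfp f θ k (2 * g j + 1 + 1) r s) = fun _ => 1/(k:ℝ) :=
      funext fun j => ipfp_col_sum f θ k hk (hoddj j) s
    rw [h2] at h1
    exact tendsto_nhds_unique h1 tendsto_const_nhds
  -- Lyapunov function machinery
  have hant : Antitone (fun m => Df f θ k (m+1)) :=
    antitone_nat_of_succ_le fun n => Df_antitone_step f θ k hk n
  have hbdd : BddBelow (Set.range fun m => Df f θ k (m+1)) := by
    refine ⟨(k:ℝ)^2 * Real.log k, ?_⟩
    rintro x ⟨m, rfl⟩
    exact Df_lower f θ k hk m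
  have hconv := tendsto_atTop_ciInf hant hbdd
  have hconv2 : Tendsto (fun m => Df f θ k (m+1+1)) atTop (𝓝 (⨅ m, Df f θ k (m+1))) :=
    (tendsto_add_atTop_iff_nat 1).mpr hconv
  have hδ : Tendsto (fun m => Df f θ k (m+1) - Df f θ k (m+1+1)) atTop (𝓝 0) := by
    have := hconv.sub hconv2
    simpa using this
  have hcomp : Tendsto (fun j => 2 * g j + 1) atTop atTop :=
    tendsto_atTop_mono (fun j => by omega) hg
  have hδg : Tendsto (fun j => Df f θ k (2 * g j + 1 + 1) - Df f θ k (2 * g j + 1 + 1 + 1))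
      atTop (𝓝 0) := hδ.comp hcomp
  have heven2 : ∀ j : ℕ, Even (2 * g j + 1 + 1) := fun j => ⟨g j + 1, by ring⟩
  have hdiff_eq : ∀ j, Df f θ k (2 * g j + 1 + 1) - Df f θ k (2 * g j + 1 + 1 + 1)
      = -((k:ℝ) * ∑ r, Real.log ((k:ℝ) * ∑ l, ipfp f θ k (2 * g j + 1 + 1) r l)) := by
    intro j
    rw [Df_succ_even f θ k hk (heven2 j)]
    ring
  have hR : ∀ r, Tendsto (fun j => ∑ l, ipfp f θ k (2 * g j + 1 + 1) r l) atTop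
      (𝓝 (∑ l, L r l)) := fun r => tendsto_finset_sum _ fun l _ => hL r l
  have hRpos : ∀ r, 0 < ∑ l, L r l := fun r =>
    Finset.sum_pos (fun l _ => hLpos r l) Finset.univ_nonempty
  have hlim2 : Tendsto
      (fun j => -((k:ℝ) * ∑ r, Real.log ((k:ℝ) * ∑ l, ipfp f θ k (2 * g j + 1 + 1) r l)))
      atTop (𝓝 (-((k:ℝ) * ∑ r, Real.log ((k:ℝ) * ∑ l, L r l)))) := by
    apply Tendsto.neg
    apply Tendsto.const_mul
    apply tendsto_finset_sum
    intro r _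
    exact (Filter.Tendsto.const_mul _ (hR r)).log (mul_pos hk' (hRpos r)).ne'
  have hzero : ∑ r, Real.log ((k:ℝ) * ∑ l, L r l) = 0 := by
    have h1 : Tendsto (fun j => Df f θ k (2 * g j + 1 + 1) - Df f θ k (2 * g j + 1 + 1 + 1))
        atTop (𝓝 (-((k:ℝ) * ∑ r, Real.log ((k:ℝ) * ∑ l, L r l)))) := by
      rw [funext hdiff_eq]
      exact hlim2
    have h2 := tendsto_nhds_unique hδg h1
    have h3 : (k:ℝ) * ∑ r, Real.log ((k:ℝ) * ∑ l, L r l) = 0 := by linarith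
    rcases mul_eq_zero.mp h3 with h | h
    · exact absurd h hk'.ne'
    · exact h
  have hrowsum1 : ∑ r, ∑ l, L r l = 1 := by
    calc ∑ r, ∑ l, L r l = ∑ l, ∑ r, L r l := Finset.sum_comm
      _ = ∑ _l : Fin k, (1/(k:ℝ)) := Finset.sum_congr rfl fun l _ => hcol l
      _ = 1 := by
          rw [Finset.sum_const, Finset.card_univ, Fintype.card_fin, nsmul_eq_mul,
            mul_one_div, div_self hk'.ne']
  have hrow : ∀ r, ∑ l, L r l = 1/(k:ℝ) := by
    have hsum0 : ∑ r, ((k:ℝ) * ∑ l, L r l - 1 - Real.log ((k:ℝ) * ∑ l, L r l)) = 0 := by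
      simp only [Finset.sum_sub_distrib]
      rw [← Finset.mul_sum, hrowsum1, hzero, Finset.sum_const, Finset.card_univ,
        Fintype.card_fin, nsmul_eq_mul, mul_one]
      ring
    have key := (Finset.sum_eq_zero_iff_of_nonneg (fun r (_ : r ∈ Finset.univ) => by
      have := Real.log_le_sub_one_of_pos (mul_pos hk' (hRpos r))
      linarith)).mp hsum0
    intro r
    have h2 := key r (Finset.mem_univ r)
    by_contra hne
    have hne1 : (k:ℝ) * ∑ l, L r l ≠ 1 := by
      intro h1
      apply hne
      rw [eq_div_iff hk'.ne']
      linarith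
    have := Real.log_lt_sub_one_of_pos (mul_pos hk' (hRpos r)) hne1
    linarith
  have hcross : ∀ r s r' s' : Fin k,
      L r s * L r' s' * Real.exp (Gm f θ k r s') * Real.exp (Gm f θ k r' s)
      = L r s' * L r' s * Real.exp (Gm f θ k r s) * Real.exp (Gm f θ k r' s') := by
    intro r s r' s'
    have t1 : Tendsto (fun j => ipfp f θ k (2 * g j + 1 + 1) r s
        * ipfp f θ k (2 * g j + 1 + 1) r' s'
        * Real.exp (Gm f θ k r s') * Real.exp (Gm f θ k r' s)) atTop
        (𝓝 (L r s * L r' s' * Real.exp (Gm f θ k r s') * Real.exp (Gm f θ k r' s))) :=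
      (((hL r s).mul (hL r' s')).mul_const _).mul_const _
    have t2 : Tendsto (fun j => ipfp f θ k (2 * g j + 1 + 1) r s'
        * ipfp f θ k (2 * g j + 1 + 1) r' s
        * Real.exp (Gm f θ k r s) * Real.exp (Gm f θ k r' s')) atTop
        (𝓝 (L r s' * L r' s * Real.exp (Gm f θ k r s) * Real.exp (Gm f θ k r' s'))) :=
      (((hL r s').mul (hL r' s)).mul_const _).mul_const _
    have heqf : (fun j => ipfp f θ k (2 * g j + 1 + 1) r s
        * ipfp f θ k (2 * g j + 1 + 1) r' s'
        * Real.exp (Gm f θ k r s') * Real.exp (Gm f θ k r' s))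
        = (fun j => ipfp f θ k (2 * g j + 1 + 1) r s'
        * ipfp f θ k (2 * g j + 1 + 1) r' s
        * Real.exp (Gm f θ k r s) * Real.exp (Gm f θ k r' s')) :=
      funext fun j => ipfp_cross f θ k hk _ r s r' s'
    rw [heqf] at t1
    exact tendsto_nhds_unique t1 t2
  have i0 : Fin k := Classical.arbitrary (Fin k)
  refine ⟨⟨fun r s => (hLpos r s).le, hrow, hcol⟩,
    fun r => L r i0 / Real.exp (Gm f θ k r i0),
    fun s => L i0 s * Real.exp (Gm f θ k i0 i0) / (Real.exp (Gm f θ k i0 s) * L i0 i0),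
    fun r => div_pos (hLpos r i0) (Real.exp_pos _),
    fun s => div_pos (mul_pos (hLpos i0 s) (Real.exp_pos _))
      (mul_pos (Real.exp_pos _) (hLpos i0 i0)), ?_⟩
  intro r s
  have h := hcross r s i0 i0
  have e1 : Real.exp (Gm f θ k r i0) ≠ 0 := Real.exp_ne_zero _
  have e2 : Real.exp (Gm f θ k i0 s) ≠ 0 := Real.exp_ne_zero _
  have e3 : L i0 i0 ≠ 0 := (hLpos i0 i0).ne'
  field_simp
  linear_combination h

end Main

end IPFPAux

/-- The discrete objective attains its supremum over `𝓜_k` at a unique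
matrix, which is the entrywise limit of the IPFP iterates. -/
theorem ipfp_limit_is_unique_maximizer (f : ℝ × ℝ → ℝ) (hf : ContinuousOn f unitSq)
    (θ : ℝ) (k : ℕ) (hk : 0 < k) :
    ∃ A ∈ Mk k,
      (∀ r s : Fin k, Tendsto (fun m : ℕ => ipfp f θ k m r s) atTop (𝓝 (A r s))) ∧
      (∀ B ∈ Mk k, objk f θ k B ≤ objk f θ k A) ∧
      (∀ B ∈ Mk k, (∀ C ∈ Mk k, objk f θ k C ≤ objk f θ k B) → B = A) := by
  classical
  open IPFPAux in
  haveI : Nonempty (Fin k) := Fin.pos_iff_nonempty.mp hk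
  have hk' : (0:ℝ) < k := Nat.cast_pos.mpr hk
  -- uniform bounds on the base matrix
  obtain ⟨pmin, hpmin⟩ := Finite.exists_min
    (fun p : Fin k × Fin k => Real.exp (Gm f θ k p.1 p.2))
  obtain ⟨pmax, hpmax⟩ := Finite.exists_max
    (fun p : Fin k × Fin k => Real.exp (Gm f θ k p.1 p.2))
  set lo := Real.exp (Gm f θ k pmin.1 pmin.2) with hlodef
  set hi := Real.exp (Gm f θ k pmax.1 pmax.2) with hhidef
  have hlo : 0 < lo := Real.exp_pos _
  have hb : ∀ r s, lo ≤ Real.exp (Gm f θ k r s) ∧ Real.exp (Gm f θ k r s) ≤ hi :=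
    fun r s => ⟨hpmin (r, s), hpmax (r, s)⟩
  have hhi : 0 < hi := Real.exp_pos _
  set c := lo^2/(hi^2*(k:ℝ)^2) with hcdef
  -- the compact set of candidate matrices
  let S : Set (Fin k → Fin k → ℝ) :=
    Set.univ.pi fun _ => Set.univ.pi fun _ => Set.Icc c (1/(k:ℝ))
  have hScomp : IsCompact S :=
    isCompact_univ_pi fun _ => isCompact_univ_pi fun _ => isCompact_Icc
  let u : ℕ → (Fin k → Fin k → ℝ) := fun j => ipfp f θ k (2*j+1+1)
  have huS : ∀ j, u j ∈ S := by
    intro j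
    refine Set.mem_univ_pi.mpr fun r => Set.mem_univ_pi.mpr fun s =>
      ⟨ipfp_even_lower f θ k hk hlo hb (even_two_mul j) r s,
       ipfp_le f θ k hk (2*j+1) r s⟩
  obtain ⟨L, hLS, φ, hφ, hφL⟩ := hScomp.tendsto_subseq huS
  have hφL' : ∀ r s, Tendsto (fun j => ipfp f θ k (2 * φ j + 1 + 1) r s) atTop (𝓝 (L r s)) := by
    intro r s
    exact tendsto_pi_nhds.mp (tendsto_pi_nhds.mp hφL r) s
  obtain ⟨hLMk, aL, bL, haL, hbL, hLrep⟩ :=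
    limit_point f θ k hk hlo hb φ hφ.tendsto_atTop L hφL'
  have hmaxL := scaled_is_max f θ k hk L hLMk aL bL haL hbL hLrep
  -- convergence of the even subsequence
  have huconv : Tendsto u atTop (𝓝 L) := by
    apply tendsto_of_subseq_tendsto
    intro ns hns
    obtain ⟨L', hL'S, ψ, hψ, hψL'⟩ := hScomp.tendsto_subseq (fun n => huS (ns n))
    refine ⟨ψ, ?_⟩
    have hg' : Tendsto (fun n => ns (ψ n)) atTop atTop := hns.comp hψ.tendsto_atTop
    have hent : ∀ r s, Tendsto (fun j => ipfp f θ k (2 * ns (ψ j) + 1 + 1) r s) atTop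
        (𝓝 (L' r s)) := by
      intro r s
      exact tendsto_pi_nhds.mp (tendsto_pi_nhds.mp hψL' r) s
    obtain ⟨hL'Mk, a', b', ha', hb', hL'rep⟩ :=
      limit_point f θ k hk hlo hb (fun n => ns (ψ n)) hg' L' hent
    have hmaxL' := scaled_is_max f θ k hk L' hL'Mk a' b' ha' hb' hL'rep
    have hLL : L' = L := by
      have h1 := (hmaxL L' hL'Mk).1
      have h2 := (hmaxL' L hLMk).1
      exact (hmaxL L' hL'Mk).2 (le_antisymm h1 h2)
    rw [hLL] at hψL'
    exact hψL'
  have huev : ∀ r s, Tendsto (fun j => ipfp f θ k (2*j+1+1) r s) atTop (𝓝 (L r s)) := by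
    intro r s
    exact tendsto_pi_nhds.mp (tendsto_pi_nhds.mp huconv r) s
  -- the odd iterates converge to the same limit
  have hodd : ∀ r s, Tendsto (fun j => ipfp f θ k (2*j+1+1+1) r s) atTop (𝓝 (L r s)) := by
    intro r s
    have hLrow : ∑ l, L r l = 1/(k:ℝ) := hLMk.2.1 r
    have hrowlim : Tendsto (fun j => (k:ℝ) * ∑ l, ipfp f θ k (2*j+1+1) r l) atTop
        (𝓝 ((k:ℝ) * (1/(k:ℝ)))) := by
      have := (tendsto_finset_sum Finset.univ
        (fun l (_ : l ∈ Finset.univ) => huev r l)).const_mul (k:ℝ)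
      rwa [hLrow] at this
    have hne : (k:ℝ) * (1/(k:ℝ)) ≠ 0 := by
      rw [mul_one_div, div_self hk'.ne']
      exact one_ne_zero
    have h1 : Tendsto (fun j => ipfp f θ k (2*j+1+1) r s
        / ((k:ℝ) * ∑ l, ipfp f θ k (2*j+1+1) r l)) atTop
        (𝓝 (L r s / ((k:ℝ) * (1/(k:ℝ))))) := (huev r s).div hrowlim hne
    have heqf : (fun j => ipfp f θ k (2*j+1+1+1) r s)
        = fun j => ipfp f θ k (2*j+1+1) r s / ((k:ℝ) * ∑ l, ipfp f θ k (2*j+1+1) r l) :=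
      funext fun j => ipfp_succ_even f θ k ⟨j+1, by ring⟩ r s
    rw [heqf]
    have hval : L r s / ((k:ℝ) * (1/(k:ℝ))) = L r s := by
      rw [mul_one_div, div_self hk'.ne', div_one]
    rwa [hval] at h1
  refine ⟨L, hLMk, ?_, fun B hB => (hmaxL B hB).1, ?_⟩
  · intro r s
    have hv : Tendsto (fun m => ipfp f θ k (m+1+1) r s) atTop (𝓝 (L r s)) :=
      tendsto_even_odd (huev r s) (hodd r s)
    exact (tendsto_add_atTop_iff_nat 2).mp hv
  · intro B hB hBmax
    have h1 := (hmaxL B hB).1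
    have h2 := hBmax L hLMk
    exact (hmaxL B hB).2 (le_antisymm h1 h2)
end
end

section
/- Let f : [0,1]² → ℝ be continuous and k ∈ ℕ. Then the function θ ↦ W_k(f,θ) is convex and differentiable on ℝ, with derivative W_k'(f,θ) = ∑_{r,s=1}^k A_{k,θ}(r,s) f(r/k, s/k), where A_{k,θ} ∈ 𝓜_k is the unique maximizer in the definition of W_k(f,θ). -/
open MeasureTheory Filter Topology
open scoped ENNReal

noncomputable section

private lemma psi_convex (c : ℝ) (hc : 0 < c) :
    ConvexOn ℝ (Set.Icc 0 c) (fun x : ℝ => x * Real.log x - (1/(2*c)) * x^2) := by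
  have hD : Convex ℝ (Set.Icc (0:ℝ) c) := convex_Icc 0 c
  have hint : interior (Set.Icc (0:ℝ) c) = Set.Ioo 0 c := interior_Icc
  refine convexOn_of_hasDerivWithinAt2_nonneg hD
    (f' := fun x => Real.log x + 1 - (1/c) * x) (f'' := fun x => 1/x - 1/c)
    ?_ ?_ ?_ ?_
  · exact (Real.continuous_mul_log.sub (continuous_const.mul (continuous_pow 2))).continuousOn
  · intro x hx
    rw [hint] at hx
    have h1 : HasDerivAt (fun x : ℝ => x * Real.log x) (Real.log x + 1) x :=
      Real.hasDerivAt_mul_log (ne_of_gt hx.1)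
    have h2 : HasDerivAt (fun x : ℝ => (1/(2*c)) * x^2) ((1/(2*c)) * (2*x)) x := by
      simpa using ((hasDerivAt_pow 2 x).const_mul (1/(2*c)))
    have := (h1.fun_sub h2).hasDerivWithinAt (s := interior (Set.Icc (0:ℝ) c))
    refine this.congr_deriv ?_
    ring
  · intro x hx
    rw [hint] at hx
    have h1 : HasDerivAt Real.log (1/x) x := by
      simpa [one_div] using Real.hasDerivAt_log (ne_of_gt hx.1)
    have h2 : HasDerivAt (fun x : ℝ => Real.log x + 1 - (1/c) * x) (1/x - (1/c)) x := by
      simpa using ((h1.add_const 1).fun_sub ((hasDerivAt_id x).const_mul (1/c)))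
    exact h2.hasDerivWithinAt
  · intro x hx
    rw [hint] at hx
    have : 1/c ≤ 1/x := one_div_le_one_div_of_le hx.1 hx.2.le
    linarith

private lemma mul_log_strong {c : ℝ} (hc : 0 < c) {a b t : ℝ}
    (ha : a ∈ Set.Icc 0 c) (hb : b ∈ Set.Icc 0 c) (ht0 : 0 ≤ t) (ht1 : t ≤ 1) :
    (t*a+(1-t)*b) * Real.log (t*a+(1-t)*b) ≤
      t*(a*Real.log a) + (1-t)*(b*Real.log b) - (1/(2*c))*(t*(1-t))*(a-b)^2 := by
  have h := (psi_convex c hc).2 ha hb (show (0:ℝ) ≤ t by linarith)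
    (show (0:ℝ) ≤ 1 - t by linarith) (by ring)
  simp only [smul_eq_mul] at h
  have hid : (t*a+(1-t)*b)^2 = t*a^2 + (1-t)*b^2 - t*(1-t)*(a-b)^2 := by ring
  nlinarith [h]

private def Lfn (f : ℝ × ℝ → ℝ) (k : ℕ) (B : Matrix (Fin k) (Fin k) ℝ) : ℝ :=
  ∑ r, ∑ s, f ((r.1 + 1 : ℝ) / k, (s.1 + 1 : ℝ) / k) * B r s

private lemma objk_eq (f : ℝ × ℝ → ℝ) (θ : ℝ) (k : ℕ) (B : Matrix (Fin k) (Fin k) ℝ) :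
    objk f θ k B = θ * Lfn f k B - 2 * Real.log k
      - ∑ r, ∑ s, B r s * Real.log (B r s) := rfl

private lemma objk_affine (f : ℝ × ℝ → ℝ) (θ θ' : ℝ) (k : ℕ) (B : Matrix (Fin k) (Fin k) ℝ) :
    objk f θ' k B = objk f θ k B + (θ' - θ) * Lfn f k B := by
  simp only [objk, Lfn]; ring

private lemma Mk_entry_mem {k : ℕ} {B : Matrix (Fin k) (Fin k) ℝ} (hB : B ∈ Mk k)
    (r s : Fin k) : B r s ∈ Set.Icc (0:ℝ) (1/k) := by
  refine ⟨hB.1 r s, ?_⟩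
  calc B r s ≤ ∑ s', B r s' :=
        Finset.single_le_sum (fun i _ => hB.1 r i) (Finset.mem_univ s)
    _ = 1/k := hB.2.1 r

private lemma Mk_convex_comb {k : ℕ} {B C : Matrix (Fin k) (Fin k) ℝ} (hB : B ∈ Mk k)
    (hC : C ∈ Mk k) {t : ℝ} (ht0 : 0 ≤ t) (ht1 : t ≤ 1) :
    (t • B + (1-t) • C) ∈ Mk k := by
  refine ⟨fun r s => ?_, fun r => ?_, fun s => ?_⟩
  · simp only [Matrix.add_apply, Matrix.smul_apply, smul_eq_mul]
    have := hB.1 r s; have := hC.1 r s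
    nlinarith
  · simp only [Matrix.add_apply, Matrix.smul_apply, smul_eq_mul,
      Finset.sum_add_distrib, ← Finset.mul_sum, hB.2.1 r, hC.2.1 r]
    ring
  · simp only [Matrix.add_apply, Matrix.smul_apply, smul_eq_mul,
      Finset.sum_add_distrib, ← Finset.mul_sum, hB.2.2 s, hC.2.2 s]
    ring

/-- Strong concavity of the discrete objective around its maximizer. -/
private lemma objk_strong {f : ℝ × ℝ → ℝ} {k : ℕ} (hk : 0 < k) (θ : ℝ)
    {Amax C : Matrix (Fin k) (Fin k) ℝ} (hAm : Amax ∈ Mk k)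
    (hmax : ∀ B ∈ Mk k, objk f θ k B ≤ objk f θ k Amax) (hC : C ∈ Mk k) :
    objk f θ k C + ((k:ℝ)/2) * (∑ r, ∑ s, (C r s - Amax r s)^2) ≤ objk f θ k Amax := by
  have hkR : (0:ℝ) < k := by exact_mod_cast hk
  set D := ∑ r, ∑ s, (C r s - Amax r s)^2 with hD
  have step : ∀ t : ℝ, 0 < t → t < 1 →
      objk f θ k C + ((k:ℝ)/2) * ((1-t) * D) ≤ objk f θ k Amax := by
    intro t ht0 ht1
    set Mt := t • C + (1-t) • Amax with hMtdef
    have hMtm : Mt ∈ Mk k := Mk_convex_comb hC hAm ht0.le ht1.le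
    have hEntry : ∀ r s, Mt r s = t * C r s + (1-t) * Amax r s := by
      intro r s
      simp [hMtdef, Matrix.add_apply, Matrix.smul_apply, smul_eq_mul]
    have hco : (1:ℝ)/(2*(1/(k:ℝ))) = (k:ℝ)/2 := by field_simp
    have hH : ∑ r, ∑ s, Mt r s * Real.log (Mt r s) ≤
        t * (∑ r, ∑ s, C r s * Real.log (C r s))
          + (1-t) * (∑ r, ∑ s, Amax r s * Real.log (Amax r s))
          - ((k:ℝ)/2) * (t*(1-t)) * D := by
      have hle : ∀ r s, Mt r s * Real.log (Mt r s) ≤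
          t * (C r s * Real.log (C r s)) + (1-t) * (Amax r s * Real.log (Amax r s))
            - ((k:ℝ)/2) * (t*(1-t)) * (C r s - Amax r s)^2 := by
        intro r s
        have h := mul_log_strong (c := 1/(k:ℝ)) (by positivity)
          (Mk_entry_mem hC r s) (Mk_entry_mem hAm r s) ht0.le ht1.le
        rw [hco] at h
        rw [hEntry r s]; exact h
      calc ∑ r, ∑ s, Mt r s * Real.log (Mt r s)
          ≤ ∑ r, ∑ s, (t * (C r s * Real.log (C r s))
              + (1-t) * (Amax r s * Real.log (Amax r s))
              - ((k:ℝ)/2) * (t*(1-t)) * (C r s - Amax r s)^2) :=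
            Finset.sum_le_sum fun r _ => Finset.sum_le_sum fun s _ => hle r s
        _ = _ := by
            simp only [Finset.sum_sub_distrib, Finset.sum_add_distrib, ← Finset.mul_sum, hD]
    have hL : Lfn f k Mt = t * Lfn f k C + (1-t) * Lfn f k Amax := by
      simp only [Lfn]
      calc ∑ r, ∑ s, f ((r.1 + 1 : ℝ) / k, (s.1 + 1 : ℝ) / k) * Mt r s
          = ∑ r, ∑ s, (t * (f ((r.1 + 1 : ℝ) / k, (s.1 + 1 : ℝ) / k) * C r s)
              + (1-t) * (f ((r.1 + 1 : ℝ) / k, (s.1 + 1 : ℝ) / k) * Amax r s)) :=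
            Finset.sum_congr rfl fun r _ => Finset.sum_congr rfl fun s _ => by
              rw [hEntry r s]; ring
        _ = _ := by simp only [Finset.sum_add_distrib, ← Finset.mul_sum]
    have h1 : objk f θ k Mt ≤ objk f θ k Amax := hmax Mt hMtm
    have hobj : t * objk f θ k C + (1-t) * objk f θ k Amax
        + ((k:ℝ)/2) * (t*(1-t)) * D ≤ objk f θ k Mt := by
      rw [objk_eq f θ k Mt, objk_eq f θ k C, objk_eq f θ k Amax, hL]
      nlinarith [hH]
    have h2 : t * (objk f θ k C + ((k:ℝ)/2) * ((1-t)*D)) ≤ t * objk f θ k Amax := by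
      nlinarith [hobj, h1]
    exact le_of_mul_le_mul_left h2 ht0
  have htend : Tendsto (fun t : ℝ => objk f θ k C + ((k:ℝ)/2) * ((1-t) * D))
      (𝓝[>] (0:ℝ)) (𝓝 (objk f θ k C + ((k:ℝ)/2) * ((1-(0:ℝ)) * D))) := by
    apply Tendsto.mono_left ?_ nhdsWithin_le_nhds
    exact (Continuous.tendsto (by continuity) 0)
  have hev : ∀ᶠ t in 𝓝[>] (0:ℝ),
      objk f θ k C + ((k:ℝ)/2) * ((1-t) * D) ≤ objk f θ k Amax := by
    filter_upwards [Ioo_mem_nhdsGT_of_mem (show (0:ℝ) ∈ Set.Ico (0:ℝ) 1 from ⟨le_refl 0, one_pos⟩)]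
      with t ht
    exact step t ht.1 ht.2
  have := le_of_tendsto htend hev
  linarith [this]

/-- `θ ↦ W_k(f,θ)` is convex and differentiable, with derivative
`W_k'(f,θ) = ∑_{r,s} A_{k,θ}(r,s) f(r/k, s/k)` where `A_{k,θ}` is the unique maximizer. -/
theorem Wk_convex_differentiable (f : ℝ × ℝ → ℝ) (hf : ContinuousOn f unitSq)
    (k : ℕ) (hk : 0 < k) (A : ℝ → Matrix (Fin k) (Fin k) ℝ)
    (hA : ∀ θ : ℝ, A θ ∈ Mk k ∧ (∀ B ∈ Mk k, objk f θ k B ≤ objk f θ k (A θ)) ∧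
      (∀ B ∈ Mk k, (∀ C ∈ Mk k, objk f θ k C ≤ objk f θ k B) → B = A θ)) :
    ConvexOn ℝ Set.univ (Wk f k) ∧
    ∀ θ : ℝ, HasDerivAt (Wk f k)
      (∑ r, ∑ s, A θ r s * f ((r.1 + 1 : ℝ) / k, (s.1 + 1 : ℝ) / k)) θ := by
  have hkR : (0:ℝ) < k := by exact_mod_cast hk
  have hWk : ∀ θ : ℝ, Wk f k θ = objk f θ k (A θ) := by
    intro θ
    apply IsGreatest.csSup_eq
    refine ⟨⟨A θ, (hA θ).1, rfl⟩, ?_⟩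
    rintro y ⟨B, hB, rfl⟩
    exact (hA θ).2.1 B hB
  constructor
  · refine ⟨convex_univ, ?_⟩
    intro x _ y _ a b ha hb hab
    have hb' : b = 1 - a := by linarith
    subst hb'
    simp only [smul_eq_mul]
    rw [hWk]
    calc objk f (a*x + (1-a)*y) k (A (a*x+(1-a)*y))
        = a * objk f x k (A (a*x+(1-a)*y)) + (1-a) * objk f y k (A (a*x+(1-a)*y)) := by
          simp only [objk]; ring
      _ ≤ a * Wk f k x + (1-a) * Wk f k y := by
          have h1 := (hA x).2.1 _ (hA (a*x+(1-a)*y)).1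
          have h2 := (hA y).2.1 _ (hA (a*x+(1-a)*y)).1
          have h3 := mul_le_mul_of_nonneg_left h1 ha
          have h4 := mul_le_mul_of_nonneg_left h2 hb
          rw [hWk x, hWk y]
          linarith
  · intro θ
    have hcc : (∑ r, ∑ s, A θ r s * f ((r.1 + 1 : ℝ) / k, (s.1 + 1 : ℝ) / k))
        = Lfn f k (A θ) := by
      simp only [Lfn]
      exact Finset.sum_congr rfl fun r _ => Finset.sum_congr rfl fun s _ => mul_comm _ _
    rw [hcc]
    set c := Lfn f k (A θ) with hc
    set M := ∑ r : Fin k, ∑ s : Fin k, |f ((r.1 + 1 : ℝ) / k, (s.1 + 1 : ℝ) / k)| with hM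
    have hM0 : 0 ≤ M := Finset.sum_nonneg fun r _ => Finset.sum_nonneg fun s _ => abs_nonneg _
    set K := 2 * M^2 / k with hK
    have hK0 : 0 ≤ K := by positivity
    have hDL : ∀ θ' : ℝ, |Lfn f k (A θ') - c| ≤ K * |θ' - θ| := by
      intro θ'
      set D := ∑ r, ∑ s, (A θ' r s - A θ r s)^2 with hD
      have hD0 : 0 ≤ D := Finset.sum_nonneg fun r _ => Finset.sum_nonneg fun s _ => sq_nonneg _
      set d := Real.sqrt D with hd
      have hd0 : 0 ≤ d := Real.sqrt_nonneg _
      have hdD : d^2 = D := Real.sq_sqrt hD0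
      have hstrong := objk_strong hk θ (hA θ).1 (hA θ).2.1 (hA θ').1
      have h2 : objk f θ k (A θ) - objk f θ k (A θ') ≤ (θ' - θ) * (Lfn f k (A θ') - c) := by
        have h := (hA θ').2.1 (A θ) (hA θ).1
        rw [objk_affine f θ θ' k (A θ), objk_affine f θ θ' k (A θ')] at h
        have : (θ' - θ) * (Lfn f k (A θ') - c) =
            (θ' - θ) * Lfn f k (A θ') - (θ' - θ) * Lfn f k (A θ) := by rw [hc]; ring
        linarith
      have hentry : ∀ r s : Fin k, |A θ' r s - A θ r s| ≤ d := by
        intro r s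
        have e1 : (A θ' r s - A θ r s)^2 ≤ ∑ s', (A θ' r s' - A θ r s')^2 :=
          Finset.single_le_sum (f := fun s' => (A θ' r s' - A θ r s')^2)
            (fun i _ => sq_nonneg _) (Finset.mem_univ s)
        have e2 : (∑ s', (A θ' r s' - A θ r s')^2) ≤ D := by
          rw [hD]
          exact Finset.single_le_sum (f := fun r' => ∑ s', (A θ' r' s' - A θ r' s')^2)
            (fun i _ => Finset.sum_nonneg fun _ _ => sq_nonneg _) (Finset.mem_univ r)
        calc |A θ' r s - A θ r s| = Real.sqrt ((A θ' r s - A θ r s)^2) :=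
              (Real.sqrt_sq_eq_abs _).symm
          _ ≤ Real.sqrt D := Real.sqrt_le_sqrt (by linarith)
          _ = d := rfl
      have hLd : |Lfn f k (A θ') - c| ≤ M * d := by
        have heq : Lfn f k (A θ') - c
            = ∑ r, ∑ s, f ((r.1 + 1 : ℝ) / k, (s.1 + 1 : ℝ) / k) * (A θ' r s - A θ r s) := by
          rw [hc]
          simp only [Lfn, mul_sub, Finset.sum_sub_distrib]
        rw [heq]
        calc |∑ r, ∑ s, f ((r.1 + 1 : ℝ) / k, (s.1 + 1 : ℝ) / k) * (A θ' r s - A θ r s)|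
            ≤ ∑ r, |∑ s, f ((r.1 + 1 : ℝ) / k, (s.1 + 1 : ℝ) / k) * (A θ' r s - A θ r s)| :=
              Finset.abs_sum_le_sum_abs _ _
          _ ≤ ∑ r, ∑ s, |f ((r.1 + 1 : ℝ) / k, (s.1 + 1 : ℝ) / k) * (A θ' r s - A θ r s)| :=
              Finset.sum_le_sum fun r _ => Finset.abs_sum_le_sum_abs _ _
          _ ≤ ∑ r, ∑ s, |f ((r.1 + 1 : ℝ) / k, (s.1 + 1 : ℝ) / k)| * d :=
              Finset.sum_le_sum fun r _ => Finset.sum_le_sum fun s _ => by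
                rw [abs_mul]
                exact mul_le_mul_of_nonneg_left (hentry r s) (abs_nonneg _)
          _ = M * d := by rw [hM]; simp only [← Finset.sum_mul]
      have hkd : ((k:ℝ)/2) * d^2 ≤ |θ' - θ| * (M * d) := by
        have g1 : (θ' - θ) * (Lfn f k (A θ') - c) ≤ |θ' - θ| * |Lfn f k (A θ') - c| := by
          calc (θ' - θ) * (Lfn f k (A θ') - c) ≤ |(θ' - θ) * (Lfn f k (A θ') - c)| :=
                le_abs_self _
            _ = |θ' - θ| * |Lfn f k (A θ') - c| := abs_mul _ _
        have g2 : |θ' - θ| * |Lfn f k (A θ') - c| ≤ |θ' - θ| * (M * d) :=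
          mul_le_mul_of_nonneg_left hLd (abs_nonneg _)
        rw [hdD]
        linarith
      rcases eq_or_lt_of_le hd0 with h0 | hdpos
      · have : M * d = 0 := by rw [← h0, mul_zero]
        have : |Lfn f k (A θ') - c| ≤ 0 := by linarith [hLd]
        have hrhs : 0 ≤ K * |θ' - θ| := mul_nonneg hK0 (abs_nonneg _)
        linarith
      · have h3 : (k:ℝ) * d ≤ 2 * |θ' - θ| * M := by nlinarith [hkd, hdpos]
        have h4 : M * d ≤ 2 * M^2 * |θ' - θ| / k := by
          rw [le_div_iff₀ hkR]
          nlinarith [mul_le_mul_of_nonneg_left h3 hM0]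
        calc |Lfn f k (A θ') - c| ≤ M * d := hLd
          _ ≤ 2 * M^2 * |θ' - θ| / k := h4
          _ = K * |θ' - θ| := by rw [hK]; ring
    have hsand : ∀ θ' : ℝ, |Wk f k θ' - Wk f k θ - (θ'-θ)*c| ≤ K * (θ'-θ)^2 := by
      intro θ'
      have hlow : Wk f k θ + (θ'-θ)*c ≤ Wk f k θ' := by
        rw [hWk θ', hWk θ]
        have h := (hA θ').2.1 (A θ) (hA θ).1
        rw [objk_affine f θ θ' k (A θ)] at h
        rw [hc]
        linarith
      have hup : Wk f k θ' ≤ Wk f k θ + (θ'-θ) * Lfn f k (A θ') := by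
        rw [hWk θ', hWk θ]
        have h1 := (hA θ).2.1 (A θ') (hA θ').1
        have h2 := objk_affine f θ θ' k (A θ')
        linarith
      have e1 : 0 ≤ Wk f k θ' - Wk f k θ - (θ'-θ)*c := by linarith
      have e2 : Wk f k θ' - Wk f k θ - (θ'-θ)*c ≤ (θ'-θ) * (Lfn f k (A θ') - c) := by
        have : (θ'-θ) * (Lfn f k (A θ') - c) = (θ'-θ) * Lfn f k (A θ') - (θ'-θ)*c := by ring
        linarith
      calc |Wk f k θ' - Wk f k θ - (θ'-θ)*c| = Wk f k θ' - Wk f k θ - (θ'-θ)*c :=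
            abs_of_nonneg e1
        _ ≤ (θ'-θ) * (Lfn f k (A θ') - c) := e2
        _ ≤ |(θ'-θ) * (Lfn f k (A θ') - c)| := le_abs_self _
        _ = |θ'-θ| * |Lfn f k (A θ') - c| := abs_mul _ _
        _ ≤ |θ'-θ| * (K * |θ'-θ|) := mul_le_mul_of_nonneg_left (hDL θ') (abs_nonneg _)
        _ = K * (|θ'-θ|^2) := by ring
        _ = K * (θ'-θ)^2 := by rw [sq_abs]
    rw [hasDerivAt_iff_tendsto_slope]
    have hb : ∀ᶠ θ' in 𝓝[≠] θ, ‖slope (Wk f k) θ θ' - c‖ ≤ K * |θ' - θ| := by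
      filter_upwards [self_mem_nhdsWithin] with θ' hθ'
      have hθ'' : θ' ≠ θ := hθ'
      have hne : θ' - θ ≠ 0 := sub_ne_zero.mpr hθ''
      have hslope : slope (Wk f k) θ θ' - c
          = (Wk f k θ' - Wk f k θ - (θ'-θ)*c) / (θ'-θ) := by
        rw [slope_def_field]
        field_simp
      rw [Real.norm_eq_abs, hslope, abs_div]
      rw [div_le_iff₀ (abs_pos.mpr hne)]
      calc |Wk f k θ' - Wk f k θ - (θ'-θ)*c| ≤ K * (θ'-θ)^2 := hsand θ'
        _ = K * |θ'-θ| * |θ'-θ| := by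
            rw [sq, ← abs_mul_abs_self]; ring
    have hg : Tendsto (fun θ' : ℝ => K * |θ' - θ|) (𝓝[≠] θ) (𝓝 0) := by
      apply Tendsto.mono_left ?_ nhdsWithin_le_nhds
      have hcont : Continuous fun θ' : ℝ => K * |θ' - θ| :=
        continuous_const.mul ((continuous_id.sub continuous_const).abs)
      simpa using hcont.tendsto θ
    have h0 : Tendsto (fun θ' => slope (Wk f k) θ θ' - c) (𝓝[≠] θ) (𝓝 0) :=
      squeeze_zero_norm' hb hg
    have := h0.add_const c
    simpa using this
end
end
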